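/- arXiv:1304.7186 — 6 statements merged into one kernel-verified Lean document; each statement's English description precedes it below -/
import Mathlib

section
/- Let V be a vector configuration in a finite-dimensional real vector space E with dim E ≥ 1 and codeg*(V) ≥ 1. Then there exists a subfamily W of V that is totally cyclic — that is, every linear functional on E that is nonnegative on all vectors of W vanishes on all vectors of W — and satisfies codeg*(W) = codeg*(V), the dual codegree of W being computed in E. -/
open scoped Classical

noncomputable section

variable {E : Type*} [AddCommGroup E] [Module ℝ E] {ι : Type*} [Fintype ι]

/-- Number of indices where the functional is positive. -/
def posCount (φ : E →ₗ[ℝ] ℝ) (V : ι → E) : ℕ :=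
  (Finset.univ.filter fun i => 0 < φ (V i)).card

/-- Number of indices where the functional is negative. -/
def negCount (φ : E →ₗ[ℝ] ℝ) (V : ι → E) : ℕ :=
  (Finset.univ.filter fun i => φ (V i) < 0).card

/-- Number of indices where the functional is nonpositive. -/
def nonposCount (φ : E →ₗ[ℝ] ℝ) (V : ι → E) : ℕ :=
  (Finset.univ.filter fun i => φ (V i) ≤ 0).card

/-- Dual codegree: minimum over nonzero functionals of `nonposCount`; by convention the
number of elements when the ambient space is zero-dimensional (trivial). -/
def codegStar (V : ι → E) : ℕ :=
  if Nontrivial E then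
    sInf {k | ∃ φ : E →ₗ[ℝ] ℝ, φ ≠ 0 ∧ nonposCount φ V = k}
  else Fintype.card ι

/-- Rank of a configuration: dimension of the linear span. -/
def confRank (V : ι → E) : ℕ :=
  Module.finrank ℝ (Submodule.span ℝ (Set.range V))

/-- Dual degree: maximum over nonzero functionals of `posCount`, minus the rank. -/
def degStar (V : ι → E) : ℤ :=
  (sSup {k | ∃ φ : E →ₗ[ℝ] ℝ, φ ≠ 0 ∧ posCount φ V = k} : ℕ) - (confRank V : ℤ)

/-- Covector discrepancy: maximum over all functionals of `|φ⁺(V) − φ⁻(V)|`. -/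
def disc (V : ι → E) : ℕ :=
  sSup {k | ∃ φ : E →ₗ[ℝ] ℝ, k = ((posCount φ V : ℤ) - (negCount φ V : ℤ)).natAbs}

/-- The subfamily of `V` indexed by `S`. -/
def subfam (V : ι → E) (S : Finset ι) : {i // i ∈ S} → E := fun i => V i.1

/-- The contraction `V/W`, where `W = V|S`: images of the remaining vectors in the
quotient by the span of `W`. -/
def contract (V : ι → E) (S : Finset ι) :
    {i // i ∉ S} → E ⧸ Submodule.span ℝ (V '' (S : Set ι)) :=
  fun i => Submodule.Quotient.mk (V i.1)

/-- `V|S` is linearly closed in `V`. -/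
def LinClosed (V : ι → E) (S : Finset ι) : Prop :=
  ∀ i, V i ∈ Submodule.span ℝ (V '' (S : Set ι)) → i ∈ S

/-- A codegree* decomposition of `V` of length `m`: a partition of the index set into
parts `S 0, S 1, …, S m` with `codegStar (V|S i) ≥ 1` for `i ≠ 0` and
`codegStar V = ∑_{i=1}^m codegStar (V|S i)`. -/
def IsCodegDecomp (V : ι → E) (m : ℕ) (S : Fin (m + 1) → Finset ι) : Prop :=
  (∀ i j, i ≠ j → Disjoint (S i) (S j)) ∧
  (∀ x, ∃ i, x ∈ S i) ∧
  (∀ i, i ≠ 0 → 1 ≤ codegStar (subfam V (S i))) ∧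
  codegStar V = ∑ i ∈ Finset.univ.erase (0 : Fin (m + 1)), codegStar (subfam V (S i))



lemma nonposCount_subfam_eq (φ : E →ₗ[ℝ] ℝ) (V : ι → E) (S : Finset ι) :
    nonposCount φ (subfam V S) = (S.filter fun i => φ (V i) ≤ 0).card := by
  rw [nonposCount]
  refine Finset.card_bij (fun i _ => i.1) ?_ ?_ ?_
  · intro a ha
    simp only [Finset.mem_filter, Finset.mem_univ, true_and, subfam] at ha
    exact Finset.mem_filter.mpr ⟨a.2, (Finset.mem_filter.mp ha).2⟩
  · intro a _ b _ h; exact Subtype.ext h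
  · intro b hb
    simp only [Finset.mem_filter] at hb
    exact ⟨⟨b, hb.1⟩, Finset.mem_filter.mpr ⟨Finset.mem_univ _, hb.2⟩, rfl⟩

/-- any configuration of positive dual codegree has a totally cyclic
subfamily with the same dual codegree (computed in the ambient space). -/
theorem exists_totally_cyclic_subfam {E : Type*} [AddCommGroup E] [Module ℝ E]
    [FiniteDimensional ℝ E] (hE : 1 ≤ Module.finrank ℝ E)
    {ι : Type*} [Fintype ι] (V : ι → E) (hV : 1 ≤ codegStar V) :
    ∃ S : Finset ι,
      (∀ φ : E →ₗ[ℝ] ℝ, (∀ i ∈ S, 0 ≤ φ (V i)) → ∀ i ∈ S, φ (V i) = 0) ∧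
      codegStar (subfam V S) = codegStar V := by
  classical
  have hnt : Nontrivial E := Module.nontrivial_of_finrank_pos (R := ℝ) (by omega)
  -- a nonzero functional exists
  obtain ⟨φ₀, hφ₀⟩ : ∃ φ : E →ₗ[ℝ] ℝ, φ ≠ 0 := by
    let b := Module.finBasis ℝ E
    refine ⟨b.coord ⟨0, by omega⟩, fun h => ?_⟩
    have := congrArg (fun f => f (b ⟨0, by omega⟩)) h
    simp at this
  set A := {k | ∃ φ : E →ₗ[ℝ] ℝ, φ ≠ 0 ∧ nonposCount φ V = k} with hA
  have hAne : A.Nonempty := ⟨_, φ₀, hφ₀, rfl⟩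
  have hcV : codegStar V = sInf A := by rw [codegStar, if_pos hnt]
  -- the candidate set
  set N : Finset ι :=
    Finset.univ.filter (fun i => ∀ φ : E →ₗ[ℝ] ℝ, (∀ j, 0 ≤ φ (V j)) → φ (V i) = 0) with hN
  have hmemN : ∀ i, i ∈ N ↔ ∀ φ : E →ₗ[ℝ] ℝ, (∀ j, 0 ≤ φ (V j)) → φ (V i) = 0 := by
    intro i; simp [hN]
  -- choose witnessing functionals
  have hg : ∀ i : ι, ∃ φ : E →ₗ[ℝ] ℝ, (∀ j, 0 ≤ φ (V j)) ∧ (i ∉ N → 0 < φ (V i)) := by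
    intro i
    by_cases hi : i ∈ N
    · exact ⟨0, by simp, fun h => absurd hi h⟩
    · rw [hmemN i] at hi
      push_neg at hi
      obtain ⟨φ, h1, h2⟩ := hi
      exact ⟨φ, h1, fun _ => lt_of_le_of_ne (h1 i) (Ne.symm h2)⟩
  choose g hg1 hg2 using hg
  set θ : E →ₗ[ℝ] ℝ := ∑ i, g i with hθ
  have hθ_app : ∀ v : E, θ v = ∑ i, g i v := by
    intro v; simp [hθ]
  have hθ_nonneg : ∀ j, 0 ≤ θ (V j) := by
    intro j; rw [hθ_app]
    exact Finset.sum_nonneg fun i _ => hg1 i j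
  have hθ_pos : ∀ i, i ∉ N → 0 < θ (V i) := by
    intro i hi; rw [hθ_app]
    exact Finset.sum_pos' (fun k _ => hg1 k i) ⟨i, Finset.mem_univ i, hg2 i hi⟩
  have hθ_zero : ∀ i, i ∈ N → θ (V i) = 0 := by
    intro i hi
    exact (hmemN i).1 hi θ hθ_nonneg
  -- a uniform bound for shifting
  have hbound : ∀ φ : E →ₗ[ℝ] ℝ, ∃ lam : ℝ,
      (∀ i, i ∉ N → 0 < φ (V i) + lam * θ (V i)) ∧ φ + lam • θ ≠ 0 ∨
      N = Finset.univ := by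
    intro φ
    by_cases hNu : N = Finset.univ
    · exact ⟨0, Or.inr hNu⟩
    · obtain ⟨i₀, hi₀⟩ : ∃ i, i ∉ N := by
        by_contra h
        push_neg at h
        exact hNu (Finset.eq_univ_iff_forall.mpr h)
      have hθne : θ ≠ 0 := fun h => absurd (congrArg (fun f => f (V i₀)) h)
        (by simpa using (hθ_pos i₀ hi₀).ne')
      obtain ⟨lam₀, hlam₀⟩ := Finite.exists_le
        (fun i : ι => if θ (V i) = 0 then (0:ℝ) else -(φ (V i)) / θ (V i))
      have key : ∀ lam : ℝ, lam₀ ≤ lam → ∀ i, i ∉ N → 0 < φ (V i) + (lam + 1) * θ (V i) := by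
        intro lam hlam i hi
        have hpos := hθ_pos i hi
        have h1 : -(φ (V i)) / θ (V i) ≤ lam := le_trans (by simpa [hpos.ne'] using hlam₀ i) hlam
        have h2 : -(φ (V i)) ≤ lam * θ (V i) := by
          rw [div_le_iff₀ hpos] at h1; linarith
        nlinarith
      by_cases hz : φ + (lam₀ + 1) • θ = 0
      · refine ⟨lam₀ + 1 + 1, Or.inl ⟨?_, ?_⟩⟩
        · intro i hi
          have := key (lam₀ + 1) (by linarith) i hi
          linarith
        · intro hz2
          apply hθne
          have := sub_eq_zero.mpr (hz.trans hz2.symm)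
          have h3 : ((lam₀ + 1) - (lam₀ + 1 + 1)) • θ = 0 := by
            rw [show ((lam₀ + 1) - (lam₀ + 1 + 1) : ℝ) • θ = (lam₀ + 1) • θ - (lam₀ + 1 + 1) • θ by ext v; simp; ring]; rw [show φ + (lam₀+1) • θ - (φ + (lam₀+1+1) • θ)
              = (lam₀+1) • θ - (lam₀+1+1) • θ by abel] at this
            exact this
          have h4 : ((lam₀ + 1) - (lam₀ + 1 + 1) : ℝ) ≠ 0 := by norm_num
          exact (smul_eq_zero.mp h3).resolve_left h4
      · exact ⟨lam₀ + 1, Or.inl ⟨key lam₀ le_rfl, hz⟩⟩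
  refine ⟨N, ?_, ?_⟩
  · -- totally cyclic
    intro φ hφ i hi
    -- build a globally nonnegative functional φ + lam • θ
    obtain ⟨lam₀, hlam₀⟩ := Finite.exists_le
      (fun i : ι => if θ (V i) = 0 then (0:ℝ) else -(φ (V i)) / θ (V i))
    have hψnn : ∀ j, 0 ≤ (φ + lam₀ • θ) (V j) := by
      intro j
      by_cases hj : j ∈ N
      · have := hθ_zero j hj
        simp only [LinearMap.add_apply, LinearMap.smul_apply, smul_eq_mul, this, mul_zero,
          add_zero]
        exact hφ j hj
      · have hpos := hθ_pos j hj
        have h1 : -(φ (V j)) / θ (V j) ≤ lam₀ := by simpa [hpos.ne'] using hlam₀ j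
        have h2 : -(φ (V j)) ≤ lam₀ * θ (V j) := by
          rw [div_le_iff₀ hpos] at h1; linarith
        simp only [LinearMap.add_apply, LinearMap.smul_apply, smul_eq_mul]
        linarith
    have := (hmemN i).1 hi (φ + lam₀ • θ) hψnn
    simp only [LinearMap.add_apply, LinearMap.smul_apply, smul_eq_mul, hθ_zero i hi,
      mul_zero, add_zero] at this
    exact this
  · -- equal codegrees
    set B := {k | ∃ φ : E →ₗ[ℝ] ℝ, φ ≠ 0 ∧ nonposCount φ (subfam V N) = k} with hB
    have hBne : B.Nonempty := ⟨_, φ₀, hφ₀, rfl⟩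
    have hcW : codegStar (subfam V N) = sInf B := by rw [codegStar, if_pos hnt]
    rw [hcW, hcV]
    apply le_antisymm
    · -- sInf B ≤ sInf A
      obtain ⟨φm, hφm, hφmv⟩ := Nat.sInf_mem hAne
      have h1 : nonposCount φm (subfam V N) ≤ nonposCount φm V := by
        rw [nonposCount_subfam_eq, nonposCount]
        exact Finset.card_le_card (Finset.monotone_filter_left _ (Finset.subset_univ N))
      calc sInf B ≤ nonposCount φm (subfam V N) := Nat.sInf_le ⟨φm, hφm, rfl⟩
        _ ≤ nonposCount φm V := h1
        _ = sInf A := hφmv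
    · -- sInf A ≤ sInf B
      refine le_csInf hBne ?_
      rintro k ⟨φ, hφne, rfl⟩
      rcases hbound φ with ⟨lam, hlam | hNu⟩
      · obtain ⟨hpos, hne⟩ := hlam
        have hfilter : (Finset.univ.filter fun i => (φ + lam • θ) (V i) ≤ 0)
            = N.filter fun i => φ (V i) ≤ 0 := by
          ext i
          simp only [Finset.mem_filter, Finset.mem_univ, true_and,
            LinearMap.add_apply, LinearMap.smul_apply, smul_eq_mul]
          constructor
          · intro h
            by_cases hi : i ∈ N
            · refine ⟨hi, ?_⟩
              have := hθ_zero i hi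
              rw [this, mul_zero, add_zero] at h
              exact h
            · exact absurd h (not_le.mpr (hpos i hi))
          · rintro ⟨hi, h⟩
            rw [hθ_zero i hi, mul_zero, add_zero]
            exact h
        have : nonposCount (φ + lam • θ) V = nonposCount φ (subfam V N) := by
          rw [nonposCount, hfilter, nonposCount_subfam_eq]
        calc sInf A ≤ nonposCount (φ + lam • θ) V := Nat.sInf_le ⟨_, hne, rfl⟩
          _ = nonposCount φ (subfam V N) := this
      · -- N is everything
        have : nonposCount φ (subfam V N) = nonposCount φ V := by
          rw [nonposCount_subfam_eq, hNu, nonposCount]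
        rw [this]
        exact Nat.sInf_le ⟨φ, hφne, rfl⟩

end
end

section
/- A vector configuration V in a finite-dimensional real vector space E satisfies disc(V) = 0 if and only if V is centrally symmetric up to rescaling. -/
open scoped Classical

noncomputable section

variable {E : Type*} [AddCommGroup E] [Module ℝ E] {ι : Type*} [Fintype ι]

set_option linter.unusedSectionVars false

namespace DiscAux

variable {E : Type*} [AddCommGroup E] [Module ℝ E] {ι : Type*} [Fintype ι]

def P (V : ι → E) (s : Finset ι) (φ : E →ₗ[ℝ] ℝ) : ℕ :=
  (s.filter fun i => 0 < φ (V i)).card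

def N (V : ι → E) (s : Finset ι) (φ : E →ₗ[ℝ] ℝ) : ℕ :=
  (s.filter fun i => φ (V i) < 0).card

lemma sign_pos {a b ε : ℝ} (hε : 0 < ε) (h : a ≠ 0 → ε * |b| < |a|) :
    0 < a + ε * b ↔ (0 < a ∨ (a = 0 ∧ 0 < b)) := by
  rcases lt_trichotomy a 0 with h0 | h0 | h0
  · have hk := h h0.ne; rw [abs_of_neg h0] at hk
    have hb := le_abs_self b
    constructor
    · intro hc; exfalso; nlinarith
    · rintro (hc | ⟨hc, _⟩) <;> linarith
  · subst h0
    simp only [zero_add]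
    constructor
    · intro hc; exact Or.inr ⟨by simp, by nlinarith⟩
    · rintro (hc | ⟨_, hc⟩)
      · linarith
      · exact mul_pos hε hc
  · have hk := h h0.ne'; rw [abs_of_pos h0] at hk
    have hb := neg_abs_le b
    constructor
    · intro _; exact Or.inl h0
    · intro _; nlinarith

lemma sign_neg {a b ε : ℝ} (hε : 0 < ε) (h : a ≠ 0 → ε * |b| < |a|) :
    a + ε * b < 0 ↔ (a < 0 ∨ (a = 0 ∧ b < 0)) := by
  have h' : -a ≠ 0 → ε * |(-b)| < |(-a)| := by
    intro hne
    rw [abs_neg, abs_neg]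
    exact h (by simpa using hne)
  have := sign_pos hε h'
  constructor
  · intro hc
    have : 0 < -a + ε * -b := by linarith
    rcases (sign_pos hε h').1 this with hc2 | ⟨hc2, hc3⟩
    · exact Or.inl (by linarith)
    · exact Or.inr ⟨by linarith, by linarith⟩
  · intro hc
    have : 0 < -a + ε * -b := by
      rcases hc with hc | ⟨hc1, hc2⟩
      · exact (sign_pos hε h').2 (Or.inl (by linarith))
      · exact (sign_pos hε h').2 (Or.inr ⟨by linarith, by linarith⟩)
    linarith

lemma exists_eps (V : ι → E) (s : Finset ι) (φ ψ : E →ₗ[ℝ] ℝ) :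
    ∃ ε : ℝ, 0 < ε ∧ ∀ i ∈ s, φ (V i) ≠ 0 → ε * |ψ (V i)| < |φ (V i)| := by
  classical
  set t := s.filter fun i => φ (V i) ≠ 0 with ht
  rcases t.eq_empty_or_nonempty with h | h
  · refine ⟨1, one_pos, fun i hi hne => ?_⟩
    have hit : i ∈ t := Finset.mem_filter.2 ⟨hi, hne⟩
    rw [h] at hit
    exact absurd hit (Finset.notMem_empty i)
  · refine ⟨t.inf' h fun i => |φ (V i)| / (|ψ (V i)| + 1), ?_, ?_⟩
    · apply (Finset.lt_inf'_iff h).2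
      intro i hi
      have : φ (V i) ≠ 0 := (Finset.mem_filter.1 hi).2
      positivity
    · intro i hi hne
      have hit : i ∈ t := Finset.mem_filter.2 ⟨hi, hne⟩
      have h1 : t.inf' h (fun i => |φ (V i)| / (|ψ (V i)| + 1)) ≤ |φ (V i)| / (|ψ (V i)| + 1) :=
        Finset.inf'_le _ hit
      have hpos : (0:ℝ) < t.inf' h fun i => |φ (V i)| / (|ψ (V i)| + 1) := by
        apply (Finset.lt_inf'_iff h).2
        intro j hj
        have : φ (V j) ≠ 0 := (Finset.mem_filter.1 hj).2
        positivity
      have h2 : |ψ (V i)| < |ψ (V i)| + 1 := by linarith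
      calc (t.inf' h fun i => |φ (V i)| / (|ψ (V i)| + 1)) * |ψ (V i)|
          < (|φ (V i)| / (|ψ (V i)| + 1)) * (|ψ (V i)| + 1) := by
            apply mul_lt_mul' h1 h2 (abs_nonneg _)
            positivity
        _ = |φ (V i)| := by field_simp

lemma perturb (V : ι → E) (s : Finset ι) (φ ψ : E →ₗ[ℝ] ℝ) :
    ∃ ε : ℝ, 0 < ε ∧
      P V s (φ + ε • ψ) = P V s φ + P V (s.filter fun i => φ (V i) = 0) ψ ∧
      N V s (φ + ε • ψ) = N V s φ + N V (s.filter fun i => φ (V i) = 0) ψ := by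
  classical
  obtain ⟨ε, hε, hkey⟩ := exists_eps V s φ ψ
  refine ⟨ε, hε, ?_, ?_⟩
  · have h1 : ∀ i ∈ s, (0 < (φ + ε • ψ) (V i)) ↔
        (0 < φ (V i) ∨ (φ (V i) = 0 ∧ 0 < ψ (V i))) := by
      intro i hi
      simpa only [LinearMap.add_apply, LinearMap.smul_apply, smul_eq_mul] using
        sign_pos hε (hkey i hi)
    have hdis : Disjoint (s.filter fun i => 0 < φ (V i))
        (s.filter fun i => φ (V i) = 0 ∧ 0 < ψ (V i)) := by
      rw [Finset.disjoint_filter]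
      intro i _ hp hq
      exact absurd hq.1 (ne_of_gt hp)
    unfold P
    rw [Finset.filter_congr h1, Finset.filter_or, Finset.card_union_of_disjoint hdis]
    congr 1
    rw [Finset.filter_filter]
  · have h1 : ∀ i ∈ s, ((φ + ε • ψ) (V i) < 0) ↔
        (φ (V i) < 0 ∨ (φ (V i) = 0 ∧ ψ (V i) < 0)) := by
      intro i hi
      simpa only [LinearMap.add_apply, LinearMap.smul_apply, smul_eq_mul] using
        sign_neg hε (hkey i hi)
    have hdis : Disjoint (s.filter fun i => φ (V i) < 0)
        (s.filter fun i => φ (V i) = 0 ∧ ψ (V i) < 0) := by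
      rw [Finset.disjoint_filter]
      intro i _ hp hq
      exact absurd hq.1 (ne_of_lt hp)
    unfold N
    rw [Finset.filter_congr h1, Finset.filter_or, Finset.card_union_of_disjoint hdis]
    congr 1
    rw [Finset.filter_filter]

def Z (V : ι → E) (L : List (E →ₗ[ℝ] ℝ)) : Finset ι :=
  Finset.univ.filter fun i => ∀ φ ∈ L, φ (V i) = 0

lemma main_ind (V : ι → E) (H : ∀ φ, P V Finset.univ φ = N V Finset.univ φ) :
    ∀ (L : List (E →ₗ[ℝ] ℝ)) (ψ : E →ₗ[ℝ] ℝ), P V (Z V L) ψ = N V (Z V L) ψ := by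
  intro L
  induction L with
  | nil => intro ψ; simpa [Z] using H ψ
  | cons φ L ih =>
    intro ψ
    have hz : Z V (φ :: L) = (Z V L).filter fun i => φ (V i) = 0 := by
      ext i
      simp only [Z, Finset.mem_filter, Finset.mem_univ, true_and, List.mem_cons]
      constructor
      · intro h; exact ⟨fun g hg => h g (Or.inr hg), h φ (Or.inl rfl)⟩
      · rintro ⟨h1, h2⟩ g hg
        rcases hg with rfl | hg
        · exact h2
        · exact h1 g hg
    obtain ⟨ε, hε, hP, hN⟩ := perturb V (Z V L) φ ψ
    have h1 := ih (φ + ε • ψ)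
    have h2 := ih φ
    rw [hP, hN, h2, ← hz] at h1
    omega




def cntP (V : ι → E) (s : Finset ι) (u : E) : ℕ :=
  (s.filter fun i => ∃ a : ℝ, 0 < a ∧ V i = a • u).card

def cntN (V : ι → E) (s : Finset ι) (u : E) : ℕ :=
  (s.filter fun i => ∃ a : ℝ, a < 0 ∧ V i = a • u).card

lemma smul_inj {u : E} (hu : u ≠ 0) {a b : ℝ} (h : a • u = b • u) : a = b := by
  by_contra hne
  have h2 : (a - b) • u = 0 := by rw [sub_smul, h, sub_self]
  rcases smul_eq_zero.1 h2 with h3 | h3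
  · exact hne (sub_eq_zero.1 h3)
  · exact hu h3

lemma card_ee_left {t : Finset ι} {i j : ι} (hi : i ∈ t) (hj : j ∉ t) :
    ((t.erase i).erase j).card = t.card - 1 := by
  rw [Finset.erase_eq_of_notMem (fun h => hj (Finset.mem_of_mem_erase h)),
    Finset.card_erase_of_mem hi]

lemma card_ee_right {t : Finset ι} {i j : ι} (hi : i ∉ t) (hj : j ∈ t) :
    ((t.erase i).erase j).card = t.card - 1 := by
  rw [Finset.erase_eq_of_notMem hi, Finset.card_erase_of_mem hj]

lemma matching (V : ι → E) :
    ∀ (n : ℕ) (s : Finset ι), s.card ≤ n → (∀ i ∈ s, V i ≠ 0) →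
      (∀ u : E, u ≠ 0 → cntP V s u = cntN V s u) →
      ∃ (σ : Equiv.Perm ι) (lam : ι → ℝ), (∀ i, 0 < lam i) ∧
        (∀ i ∈ s, σ i ∈ s ∧ σ (σ i) = i ∧ V (σ i) = -lam i • V i) ∧
        (∀ i ∉ s, σ i = i) := by
  intro n
  induction n with
  | zero =>
    intro s hcard _ _
    have hs : s = ∅ := Finset.card_eq_zero.1 (le_antisymm hcard (Nat.zero_le _))
    refine ⟨1, fun _ => 1, fun _ => one_pos, ?_, fun _ _ => rfl⟩
    intro i hi
    rw [hs] at hi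
    exact absurd hi (Finset.notMem_empty i)
  | succ n ih =>
    intro s hcard hnz hcnt
    rcases s.eq_empty_or_nonempty with rfl | ⟨i, hi⟩
    · refine ⟨1, fun _ => 1, fun _ => one_pos, ?_, fun _ _ => rfl⟩
      intro i hi
      exact absurd hi (Finset.notMem_empty i)
    · have hVi : V i ≠ 0 := hnz i hi
      have hipos : i ∈ s.filter fun k => ∃ a : ℝ, 0 < a ∧ V k = a • V i :=
        Finset.mem_filter.2 ⟨hi, 1, one_pos, (one_smul ℝ _).symm⟩
      have hpos : 0 < cntP V s (V i) := Finset.card_pos.2 ⟨i, hipos⟩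
      have hneg : 0 < cntN V s (V i) := hcnt (V i) hVi ▸ hpos
      obtain ⟨j, hj⟩ := Finset.card_pos.1 hneg
      obtain ⟨hjs, c, hc, hVj⟩ := Finset.mem_filter.1 hj
      have hij : j ≠ i := by
        intro h
        rw [h] at hVj
        have : (1:ℝ) = c := smul_inj hVi (by rw [one_smul]; exact hVj)
        linarith
      set s' := (s.erase i).erase j with hs'
      have hjni : j ∉ s' := Finset.notMem_erase _ _
      have hini : i ∉ s' := fun h =>
        (Finset.mem_erase.1 (Finset.mem_of_mem_erase h)).1 rfl
      have hsub : s' ⊆ s := fun k hk =>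
        Finset.mem_of_mem_erase (Finset.mem_of_mem_erase hk)
      have hcard' : s'.card ≤ n := by
        have e1 : (s.erase i).card = s.card - 1 := Finset.card_erase_of_mem hi
        have e2 : s'.card ≤ (s.erase i).card := Finset.card_le_card (Finset.erase_subset _ _)
        omega
      have hnz' : ∀ k ∈ s', V k ≠ 0 := fun k hk => hnz k (hsub hk)
      -- the invariant
      have hcnt' : ∀ u : E, u ≠ 0 → cntP V s' u = cntN V s' u := by
        intro u hu
        have fP : cntP V s' u
            = (((s.filter fun k => ∃ a : ℝ, 0 < a ∧ V k = a • u).erase i).erase j).card := by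
          rw [cntP, hs', Finset.filter_erase, Finset.filter_erase]
        have fN : cntN V s' u
            = (((s.filter fun k => ∃ a : ℝ, a < 0 ∧ V k = a • u).erase i).erase j).card := by
          rw [cntN, hs', Finset.filter_erase, Finset.filter_erase]
        have huniq : ∀ (k : ι) (b b' : ℝ), V k = b • u → V k = b' • u → b = b' := by
          intro k b b' h1 h2
          exact smul_inj hu (h1 ▸ h2 ▸ rfl)
        by_cases hA : ∃ a : ℝ, V i = a • u
        · obtain ⟨a, hVia⟩ := hA
          have ha0 : a ≠ 0 := fun h => hVi (by rw [hVia, h, zero_smul])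
          have hVja : V j = (c * a) • u := by rw [hVj, hVia, smul_smul]
          rcases lt_or_gt_of_ne ha0 with ha | ha
          · -- a < 0 : i is negative, j is positive
            have hnui : i ∈ s.filter fun k => ∃ b : ℝ, b < 0 ∧ V k = b • u :=
              Finset.mem_filter.2 ⟨hi, a, ha, hVia⟩
            have hpuj : j ∈ s.filter fun k => ∃ b : ℝ, 0 < b ∧ V k = b • u :=
              Finset.mem_filter.2 ⟨hjs, c * a, mul_pos_of_neg_of_neg hc ha, hVja⟩
            have hpui : i ∉ s.filter fun k => ∃ b : ℝ, 0 < b ∧ V k = b • u := by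
              intro h
              obtain ⟨_, b, hb, hb2⟩ := Finset.mem_filter.1 h
              have := huniq i a b hVia hb2; linarith
            have hnuj : j ∉ s.filter fun k => ∃ b : ℝ, b < 0 ∧ V k = b • u := by
              intro h
              obtain ⟨_, b, hb, hb2⟩ := Finset.mem_filter.1 h
              have := huniq j (c * a) b hVja hb2
              nlinarith [mul_pos_of_neg_of_neg hc ha]
            have eP : cntP V s' u = cntP V s u - 1 := by
              rw [fP]; exact card_ee_right hpui hpuj
            have eN : cntN V s' u = cntN V s u - 1 := by
              rw [fN]; exact card_ee_left hnui hnuj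
            have h2 : 0 < cntN V s u := Finset.card_pos.2 ⟨i, hnui⟩
            have h3 : 0 < cntP V s u := Finset.card_pos.2 ⟨j, hpuj⟩
            have h4 := hcnt u hu
            omega
          · -- a > 0 : i is positive, j is negative
            have hpui : i ∈ s.filter fun k => ∃ b : ℝ, 0 < b ∧ V k = b • u :=
              Finset.mem_filter.2 ⟨hi, a, ha, hVia⟩
            have hnuj : j ∈ s.filter fun k => ∃ b : ℝ, b < 0 ∧ V k = b • u :=
              Finset.mem_filter.2 ⟨hjs, c * a, mul_neg_of_neg_of_pos hc ha, hVja⟩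
            have hnui : i ∉ s.filter fun k => ∃ b : ℝ, b < 0 ∧ V k = b • u := by
              intro h
              obtain ⟨_, b, hb, hb2⟩ := Finset.mem_filter.1 h
              have := huniq i a b hVia hb2; linarith
            have hpuj : j ∉ s.filter fun k => ∃ b : ℝ, 0 < b ∧ V k = b • u := by
              intro h
              obtain ⟨_, b, hb, hb2⟩ := Finset.mem_filter.1 h
              have := huniq j (c * a) b hVja hb2
              nlinarith [mul_neg_of_neg_of_pos hc ha]
            have eP : cntP V s' u = cntP V s u - 1 := by
              rw [fP]; exact card_ee_left hpui hpuj
            have eN : cntN V s' u = cntN V s u - 1 := by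
              rw [fN]; exact card_ee_right hnui hnuj
            have h2 : 0 < cntN V s u := Finset.card_pos.2 ⟨j, hnuj⟩
            have h3 : 0 < cntP V s u := Finset.card_pos.2 ⟨i, hpui⟩
            have h4 := hcnt u hu
            omega
        · -- neither i nor j lies on the line of u
          have hBj : ¬∃ b : ℝ, V j = b • u := by
            rintro ⟨b, hb⟩
            apply hA
            refine ⟨c⁻¹ * b, ?_⟩
            rw [← smul_smul, ← hb, hVj, smul_smul, inv_mul_cancel₀ hc.ne, one_smul]
          have e1 : ∀ (p : ℝ → Prop),
              ((s.filter fun k => ∃ b : ℝ, p b ∧ V k = b • u).erase i).erase j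
              = s.filter fun k => ∃ b : ℝ, p b ∧ V k = b • u := by
            intro p
            rw [Finset.erase_eq_of_notMem, Finset.erase_eq_of_notMem]
            · rintro h; obtain ⟨_, b, _, hb⟩ := Finset.mem_filter.1 h; exact hA ⟨b, hb⟩
            · rintro h
              obtain ⟨_, b, _, hb⟩ := Finset.mem_filter.1 (Finset.mem_of_mem_erase h)
              exact hBj ⟨b, hb⟩
          rw [fP, fN, e1, e1]
          exact hcnt u hu
      -- apply induction hypothesis and build the permutation
      obtain ⟨σ', lam', hpos', hprop', hfix'⟩ := ih s' hcard' hnz' hcnt'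
      have hfixi : σ' i = i := hfix' i hini
      have hfixj : σ' j = j := hfix' j hjni
      set σ := (Equiv.swap i j).trans σ' with hσ
      set lam := (fun k => if k = i then -c else if k = j then -c⁻¹ else lam' k) with hlam
      have l1 : lam i = -c := by rw [hlam]; simp
      have l2 : lam j = -c⁻¹ := by rw [hlam]; simp [hij]
      have l3 : ∀ k, k ≠ i → k ≠ j → lam k = lam' k := by
        intro k h1 h2; rw [hlam]; simp [h1, h2]
      have hσi : σ i = j := by
        rw [hσ]; simp [Equiv.trans_apply, Equiv.swap_apply_left, hfixj]
      have hσj : σ j = i := by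
        rw [hσ]; simp [Equiv.trans_apply, Equiv.swap_apply_right, hfixi]
      have hσk : ∀ k, k ≠ i → k ≠ j → σ k = σ' k := by
        intro k h1 h2
        rw [hσ]; simp [Equiv.trans_apply, Equiv.swap_apply_of_ne_of_ne h1 h2]
      refine ⟨σ, lam, ?_, ?_, ?_⟩
      · intro k
        by_cases h1 : k = i
        · rw [h1, l1]; linarith
        · by_cases h2 : k = j
          · rw [h2, l2]
            have : c⁻¹ < 0 := inv_neg''.2 hc
            linarith
          · rw [l3 k h1 h2]; exact hpos' k
      · intro k hk
        by_cases h1 : k = i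
        · subst h1
          refine ⟨by rw [hσi]; exact hjs, by rw [hσi, hσj], ?_⟩
          rw [hσi, hVj, l1, neg_neg]
        · by_cases h2 : k = j
          · subst h2
            refine ⟨by rw [hσj]; exact hi, by rw [hσj, hσi], ?_⟩
            rw [hσj, l2, neg_neg, hVj, smul_smul, inv_mul_cancel₀ hc.ne, one_smul]
          · have hk' : k ∈ s' := by
              rw [hs']
              exact Finset.mem_erase.2 ⟨h2, Finset.mem_erase.2 ⟨h1, hk⟩⟩
            obtain ⟨hm1, hm2, hm3⟩ := hprop' k hk'
            have hm1i : σ' k ≠ i := fun h => hini (h ▸ hm1)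
            have hm1j : σ' k ≠ j := fun h => hjni (h ▸ hm1)
            refine ⟨by rw [hσk k h1 h2]; exact hsub hm1, ?_, ?_⟩
            · rw [hσk k h1 h2, hσk _ hm1i hm1j, hm2]
            · rw [hσk k h1 h2, l3 k h1 h2]; exact hm3
      · intro k hk
        have h1 : k ≠ i := fun h => hk (h ▸ hi)
        have h2 : k ≠ j := fun h => hk (h ▸ hjs)
        have hk' : k ∉ s' := fun h => hk (hsub h)
        rw [hσk k h1 h2]
        exact hfix' k hk'










lemma rays [FiniteDimensional ℝ E] (V : ι → E)
    (H : ∀ φ, P V Finset.univ φ = N V Finset.univ φ) (u : E) (hu : u ≠ 0) :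
    cntP V Finset.univ u = cntN V Finset.univ u := by
  classical
  set W : Submodule ℝ E := Submodule.span ℝ {u} with hW
  set b := Module.finBasis ℝ (E ⧸ W) with hb
  set L : List (E →ₗ[ℝ] ℝ) :=
    (List.finRange (Module.finrank ℝ (E ⧸ W))).map fun k => (b.coord k).comp W.mkQ with hL
  have hZ : Z V L = Finset.univ.filter fun i => V i ∈ W := by
    ext i
    simp only [Z, Finset.mem_filter, Finset.mem_univ, true_and, hL, List.mem_map,
      List.mem_finRange]
    constructor
    · intro h
      have h2 : ∀ k, b.coord k (W.mkQ (V i)) = 0 := by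
        intro k
        exact h _ ⟨k, rfl⟩
      have h3 : W.mkQ (V i) = 0 := b.forall_coord_eq_zero_iff.1 h2
      rwa [Submodule.mkQ_apply, Submodule.Quotient.mk_eq_zero] at h3
    · intro h φ hφ
      obtain ⟨k, rfl⟩ := hφ
      have : W.mkQ (V i) = 0 := by
        rw [Submodule.mkQ_apply, Submodule.Quotient.mk_eq_zero]; exact h
      simp [LinearMap.comp_apply, this]
  obtain ⟨φ0, hφ0⟩ : ∃ φ0 : E →ₗ[ℝ] ℝ, φ0 u ≠ 0 := by
    by_contra h
    push_neg at h
    exact hu ((Module.forall_dual_apply_eq_zero_iff ℝ u).1 h)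
  set ψ : E →ₗ[ℝ] ℝ := (φ0 u)⁻¹ • φ0 with hψ
  have hψu : ψ u = 1 := by
    rw [hψ]; simp [inv_mul_cancel₀ hφ0]
  have key : ∀ i, (V i ∈ W ∧ 0 < ψ (V i)) ↔ ∃ a : ℝ, 0 < a ∧ V i = a • u := by
    intro i
    constructor
    · rintro ⟨h1, h2⟩
      obtain ⟨a, ha⟩ := Submodule.mem_span_singleton.1 h1
      refine ⟨a, ?_, ha.symm⟩
      have : ψ (V i) = a := by rw [← ha, map_smul, hψu, smul_eq_mul, mul_one]
      linarith [this ▸ h2]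
    · rintro ⟨a, ha, hv⟩
      constructor
      · rw [hv]; exact Submodule.smul_mem _ _ (Submodule.mem_span_singleton_self u)
      · rw [hv, map_smul, hψu, smul_eq_mul, mul_one]; exact ha
  have keyN : ∀ i, (V i ∈ W ∧ ψ (V i) < 0) ↔ ∃ a : ℝ, a < 0 ∧ V i = a • u := by
    intro i
    constructor
    · rintro ⟨h1, h2⟩
      obtain ⟨a, ha⟩ := Submodule.mem_span_singleton.1 h1
      refine ⟨a, ?_, ha.symm⟩
      have : ψ (V i) = a := by rw [← ha, map_smul, hψu, smul_eq_mul, mul_one]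
      linarith [this ▸ h2]
    · rintro ⟨a, ha, hv⟩
      constructor
      · rw [hv]; exact Submodule.smul_mem _ _ (Submodule.mem_span_singleton_self u)
      · rw [hv, map_smul, hψu, smul_eq_mul, mul_one]; exact ha
  have e1 : P V (Z V L) ψ = cntP V Finset.univ u := by
    rw [P, hZ, Finset.filter_filter, cntP]
    congr 1
    apply Finset.filter_congr
    intro i _
    exact key i
  have e2 : N V (Z V L) ψ = cntN V Finset.univ u := by
    rw [N, hZ, Finset.filter_filter, cntN]
    congr 1
    apply Finset.filter_congr
    intro i _
    exact keyN i
  rw [← e1, ← e2]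
  exact main_ind V H L ψ

end DiscAux

/-- `disc V = 0` iff `V` is centrally symmetric up to rescaling. -/
theorem disc_eq_zero_iff_centrally_symmetric {E : Type*} [AddCommGroup E] [Module ℝ E]
    [FiniteDimensional ℝ E] {ι : Type*} [Fintype ι] (V : ι → E) :
    disc V = 0 ↔
      ∃ (σ : Equiv.Perm ι) (lam : ι → ℝ),
        (∀ i, σ (σ i) = i) ∧ (∀ i, 0 < lam i) ∧ ∀ i, V (σ i) = -lam i • V i := by
  classical
  constructor
  · intro h0
    have hbdd : BddAbove
        {k | ∃ φ : E →ₗ[ℝ] ℝ, k = ((posCount φ V : ℤ) - (negCount φ V : ℤ)).natAbs} := by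
      refine ⟨Fintype.card ι, ?_⟩
      rintro k ⟨φ, rfl⟩
      have h1 : posCount φ V ≤ Fintype.card ι := by
        rw [posCount, ← Finset.card_univ]; exact Finset.card_filter_le _ _
      have h2 : negCount φ V ≤ Fintype.card ι := by
        rw [negCount, ← Finset.card_univ]; exact Finset.card_filter_le _ _
      show ((posCount φ V : ℤ) - (negCount φ V : ℤ)).natAbs ≤ Fintype.card ι
      omega
    have key : ∀ φ : E →ₗ[ℝ] ℝ, posCount φ V = negCount φ V := by
      intro φ
      have hm : ((posCount φ V : ℤ) - (negCount φ V : ℤ)).natAbs ∈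
          {k | ∃ φ : E →ₗ[ℝ] ℝ, k = ((posCount φ V : ℤ) - (negCount φ V : ℤ)).natAbs} :=
        ⟨φ, rfl⟩
      have h' : ((posCount φ V : ℤ) - (negCount φ V : ℤ)).natAbs ≤ disc V :=
        le_csSup hbdd hm
      rw [h0] at h'
      omega
    have HPN : ∀ φ : E →ₗ[ℝ] ℝ,
        DiscAux.P V Finset.univ φ = DiscAux.N V Finset.univ φ := key
    set s := Finset.univ.filter fun i : ι => V i ≠ 0 with hs
    have hcnt : ∀ u : E, u ≠ 0 → DiscAux.cntP V s u = DiscAux.cntN V s u := by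
      intro u hu
      have h1 : s.filter (fun i => ∃ a : ℝ, 0 < a ∧ V i = a • u)
          = Finset.univ.filter (fun i => ∃ a : ℝ, 0 < a ∧ V i = a • u) := by
        rw [hs, Finset.filter_filter]
        apply Finset.filter_congr
        intro k _
        constructor
        · rintro ⟨_, h⟩; exact h
        · rintro ⟨a, ha, hv⟩
          exact ⟨by rw [hv]; exact smul_ne_zero ha.ne' hu, a, ha, hv⟩
      have h2 : s.filter (fun i => ∃ a : ℝ, a < 0 ∧ V i = a • u)
          = Finset.univ.filter (fun i => ∃ a : ℝ, a < 0 ∧ V i = a • u) := by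
        rw [hs, Finset.filter_filter]
        apply Finset.filter_congr
        intro k _
        constructor
        · rintro ⟨_, h⟩; exact h
        · rintro ⟨a, ha, hv⟩
          exact ⟨by rw [hv]; exact smul_ne_zero ha.ne hu, a, ha, hv⟩
      rw [DiscAux.cntP, DiscAux.cntN, h1, h2]
      exact DiscAux.rays V HPN u hu
    obtain ⟨σ, lam, hpos, hprop, hfix⟩ :=
      DiscAux.matching V s.card s le_rfl (fun i hi => (Finset.mem_filter.1 hi).2) hcnt
    refine ⟨σ, lam, ?_, hpos, ?_⟩
    · intro i
      by_cases hi : i ∈ s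
      · exact (hprop i hi).2.1
      · rw [hfix i hi, hfix i hi]
    · intro i
      by_cases hi : i ∈ s
      · exact (hprop i hi).2.2
      · have hv : V i = 0 := by
          by_contra h
          exact hi (Finset.mem_filter.2 ⟨Finset.mem_univ i, h⟩)
        rw [hfix i hi, hv, smul_zero]
  · rintro ⟨σ, lam, hinv, hpos, hV⟩
    have key : ∀ φ : E →ₗ[ℝ] ℝ, posCount φ V = negCount φ V := by
      intro φ
      rw [posCount, negCount]
      apply Finset.card_bij (fun a _ => σ a)
      · intro a ha
        have h1 := (Finset.mem_filter.1 ha).2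
        refine Finset.mem_filter.2 ⟨Finset.mem_univ _, ?_⟩
        rw [hV a, map_smul, smul_eq_mul]
        nlinarith [hpos a]
      · intro a _ b _ h; exact σ.injective h
      · intro b hb
        have h1 := (Finset.mem_filter.1 hb).2
        refine ⟨σ b, Finset.mem_filter.2 ⟨Finset.mem_univ _, ?_⟩, hinv b⟩
        rw [hV b, map_smul, smul_eq_mul]
        nlinarith [hpos b]
    have hset : {k | ∃ φ : E →ₗ[ℝ] ℝ, k = ((posCount φ V : ℤ) - (negCount φ V : ℤ)).natAbs}
        = {0} := by
      ext k
      simp only [Set.mem_setOf_eq, Set.mem_singleton_iff]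
      constructor
      · rintro ⟨φ, rfl⟩; rw [key φ]; simp
      · rintro rfl; exact ⟨0, by rw [key 0]; simp⟩
    rw [disc, hset]
    exact csSup_singleton 0

end
end

section
/- Let V be a vector configuration in a finite-dimensional real vector space E with dim E ≥ 1 and disc(V) = 0. Then codeg*(V) ≥ rank(V), and V admits a codegree* decomposition of length exactly codeg*(V) with S_0 = ∅ in which every part is either a singleton {i} with v_i = 0, or a pair {i, j} with v_j = −λ·v_i for some real λ > 0. -/
open scoped Classical

noncomputable section

variable {E : Type*} [AddCommGroup E] [Module ℝ E] {ι : Type*} [Fintype ι]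

lemma dual_sep {F : Type*} [AddCommGroup F] [Module ℝ F] (v : F) (hv : v ≠ 0) :
    ∃ ψ : F →ₗ[ℝ] ℝ, ψ v ≠ 0 := by
  by_contra h
  push_neg at h
  exact hv ((Module.forall_dual_apply_eq_zero_iff ℝ v).mp h)

lemma gen_functional {F : Type*} [AddCommGroup F] [Module ℝ F] (T : Finset F)
    (hT : ∀ w ∈ T, w ≠ 0) : ∃ φ : F →ₗ[ℝ] ℝ, ∀ w ∈ T, φ w ≠ 0 := by
  classical
  induction T using Finset.induction_on with
  | empty => exact ⟨0, by simp⟩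
  | @insert a s ha ih =>
      obtain ⟨φ, hφ⟩ := ih (fun w hw => hT w (Finset.mem_insert_of_mem hw))
      obtain ⟨ψ, hψ⟩ := dual_sep a (hT a (Finset.mem_insert_self a s))
      obtain ⟨c, hc⟩ := Infinite.exists_notMem_finset
        ((insert a s).image fun w => -φ w / ψ w)
      refine ⟨φ + c • ψ, fun w hw => ?_⟩
      have happ : (φ + c • ψ) w = φ w + c * ψ w := by
        simp [LinearMap.add_apply, LinearMap.smul_apply, smul_eq_mul]
      rw [happ]
      intro hzero
      by_cases hψw : ψ w = 0
      · have hφw : φ w = 0 := by rw [hψw] at hzero; linarith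
        rcases Finset.mem_insert.mp hw with rfl | hws
        · exact hψ hψw
        · exact hφ w hws hφw
      · apply hc
        refine Finset.mem_image.mpr ⟨w, hw, ?_⟩
        field_simp
        linarith

lemma gen_functional_ne {F : Type*} [AddCommGroup F] [Module ℝ F] [Nontrivial F] (T : Finset F)
    (hT : ∀ w ∈ T, w ≠ 0) : ∃ φ : F →ₗ[ℝ] ℝ, φ ≠ 0 ∧ ∀ w ∈ T, φ w ≠ 0 := by
  obtain ⟨φ, hφ⟩ := gen_functional T hT
  rcases T.eq_empty_or_nonempty with rfl | ⟨w, hw⟩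
  · obtain ⟨v, hv⟩ := exists_ne (0 : F)
    obtain ⟨ψ, hψ⟩ := dual_sep v hv
    exact ⟨ψ, fun h => hψ (by simp [h]), by simp⟩
  · exact ⟨φ, fun h => hφ w hw (by simp [h]), hφ⟩

lemma counts_eq_of_disc_zero (V : ι → E) (hdisc : disc V = 0) :
    ∀ φ : E →ₗ[ℝ] ℝ, posCount φ V = negCount φ V := by
  intro φ
  have hb : ∀ k ∈ {k | ∃ φ : E →ₗ[ℝ] ℝ,
      k = ((posCount φ V : ℤ) - (negCount φ V : ℤ)).natAbs}, k ≤ Fintype.card ι := by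
    rintro k ⟨φ', rfl⟩
    have h1 : posCount φ' V ≤ Fintype.card ι := by
      rw [← Finset.card_univ]; exact Finset.card_filter_le _ _
    have h2 : negCount φ' V ≤ Fintype.card ι := by
      rw [← Finset.card_univ]; exact Finset.card_filter_le _ _
    omega
  have hk : ((posCount φ V : ℤ) - (negCount φ V : ℤ)).natAbs ≤ disc V :=
    le_csSup ⟨Fintype.card ι, hb⟩ ⟨φ, rfl⟩
  rw [hdisc] at hk
  omega

set_option maxHeartbeats 2000000 in
lemma line_balance [FiniteDimensional ℝ E] (V : ι → E)
    (h : ∀ φ : E →ₗ[ℝ] ℝ, posCount φ V = negCount φ V) (v : E) (hv : v ≠ 0) :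
    (Finset.univ.filter fun i => ∃ t : ℝ, 0 < t ∧ V i = t • v).card
      = (Finset.univ.filter fun i => ∃ t : ℝ, t < 0 ∧ V i = t • v).card := by
  classical
  set W := Submodule.span ℝ ({v} : Set E) with hW
  obtain ⟨ψ₀, hψ₀⟩ := dual_sep v hv
  set ψ : E →ₗ[ℝ] ℝ := (ψ₀ v)⁻¹ • ψ₀ with hψdef
  have hψ : ψ v = 1 := by
    simp only [hψdef, LinearMap.smul_apply, smul_eq_mul]
    field_simp
  have hTgood : ∀ w ∈ (Finset.univ.filter fun i => V i ∉ W).image fun i => W.mkQ (V i),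
      w ≠ 0 := by
    rintro w hw
    obtain ⟨i, hi, rfl⟩ := Finset.mem_image.mp hw
    have hiW : V i ∉ W := (Finset.mem_filter.mp hi).2
    simpa [Submodule.mkQ_apply, Submodule.Quotient.mk_eq_zero] using hiW
  obtain ⟨φQ, hφQ⟩ := gen_functional _ hTgood
  set φ : E →ₗ[ℝ] ℝ := φQ.comp W.mkQ with hφdef
  have hφv : φ v = 0 := by
    have hvW : v ∈ W := Submodule.mem_span_singleton_self v
    have : W.mkQ v = 0 := by
      simp [Submodule.mkQ_apply, Submodule.Quotient.mk_eq_zero, hvW]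
    simp [hφdef, this]
  have hφ : ∀ i, V i ∉ W → φ (V i) ≠ 0 := by
    intro i hi
    exact hφQ _ (Finset.mem_image.mpr ⟨i, Finset.mem_filter.mpr ⟨Finset.mem_univ i, hi⟩, rfl⟩)
  set t : ℝ := 1 + ∑ i : ι, |ψ (V i)| / |φ (V i)| with htdef
  have htpos : 0 < t := by
    have : (0:ℝ) ≤ ∑ i : ι, |ψ (V i)| / |φ (V i)| :=
      Finset.sum_nonneg fun i _ => div_nonneg (abs_nonneg _) (abs_nonneg _)
    rw [htdef]; linarith
  have ht : ∀ i, φ (V i) ≠ 0 → |ψ (V i)| < t * |φ (V i)| := by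
    intro i hi
    have h2 : 0 < |φ (V i)| := abs_pos.mpr hi
    have h1 : |ψ (V i)| / |φ (V i)| ≤ ∑ j : ι, |ψ (V j)| / |φ (V j)| :=
      Finset.single_le_sum (f := fun j => |ψ (V j)| / |φ (V j)|)
        (fun j _ => div_nonneg (abs_nonneg _) (abs_nonneg _)) (Finset.mem_univ i)
    have h3 : |ψ (V i)| / |φ (V i)| < t := by rw [htdef]; linarith
    calc |ψ (V i)| = (|ψ (V i)| / |φ (V i)|) * |φ (V i)| := by field_simp
    _ < t * |φ (V i)| := mul_lt_mul_of_pos_right h3 h2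
  have key : ∀ (s : ℝ), |s| = 1 → ∀ i, V i ∉ W →
      ((0 < s * ψ (V i) + t * φ (V i) ↔ 0 < φ (V i)) ∧
       (s * ψ (V i) + t * φ (V i) < 0 ↔ φ (V i) < 0)) := by
    intro s hs i hiW
    have hφi := hφ i hiW
    have habs : |s * ψ (V i)| = |ψ (V i)| := by rw [abs_mul, hs, one_mul]
    have h1 : s * ψ (V i) ≤ |ψ (V i)| := habs ▸ le_abs_self _
    have h2 : -|ψ (V i)| ≤ s * ψ (V i) := habs ▸ neg_abs_le _
    have hti := ht i hφi
    rcases lt_trichotomy (φ (V i)) 0 with hneg | hzero | hpos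
    · have heq : t * φ (V i) = -(t * |φ (V i)|) := by rw [abs_of_neg hneg]; ring
      constructor <;> constructor <;> intro hh <;> first | linarith | nlinarith
    · exact absurd hzero hφi
    · have heq : t * φ (V i) = t * |φ (V i)| := by rw [abs_of_pos hpos]
      constructor <;> constructor <;> intro hh <;> first | linarith | nlinarith
  set φp : E →ₗ[ℝ] ℝ := ψ + t • φ with hφpdef
  set φm : E →ₗ[ℝ] ℝ := (-1 : ℝ) • ψ + t • φ with hφmdef
  have hφpapp : ∀ x, φp x = 1 * ψ x + t * φ x := by
    intro x
    simp only [hφpdef, LinearMap.add_apply, LinearMap.smul_apply, smul_eq_mul] <;> ring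
  have hφmapp : ∀ x, φm x = (-1) * ψ x + t * φ x := by
    intro x
    simp only [hφmdef, LinearMap.add_apply, LinearMap.smul_apply, smul_eq_mul] <;> ring
  have hval : ∀ (i : ι) (c : ℝ), V i = c • v → ψ (V i) = c ∧ φ (V i) = 0 := by
    intro i c hc
    constructor
    · rw [hc, map_smul, smul_eq_mul, hψ, mul_one]
    · rw [hc, map_smul, smul_eq_mul, hφv, mul_zero]
  have hmem : ∀ i, V i ∈ W → ∃ c : ℝ, V i = c • v := by
    intro i hi
    obtain ⟨c, hc⟩ := Submodule.mem_span_singleton.mp hi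
    exact ⟨c, hc.symm⟩
  have split : ∀ p : ι → Prop, (Finset.univ.filter p).card
      = (Finset.univ.filter fun i => p i ∧ V i ∈ W).card
        + (Finset.univ.filter fun i => p i ∧ V i ∉ W).card := by
    intro p
    rw [← Finset.filter_filter, ← Finset.filter_filter]
    exact (Finset.card_filter_add_card_filter_not (fun i => V i ∈ W)).symm
  have habs1 : |(1:ℝ)| = 1 := by norm_num
  have habsm : |(-1:ℝ)| = 1 := by norm_num
  have memiff : ∀ (s : ℝ), |s| = 1 → ∀ (φs : E →ₗ[ℝ] ℝ),
      (∀ x, φs x = s * ψ x + t * φ x) → ∀ i,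
      ((0 < φs (V i) ∧ V i ∈ W) ↔ (∃ c : ℝ, 0 < s * c ∧ V i = c • v)) ∧
      ((φs (V i) < 0 ∧ V i ∈ W) ↔ (∃ c : ℝ, s * c < 0 ∧ V i = c • v)) ∧
      ((0 < φs (V i) ∧ V i ∉ W) ↔ (0 < φ (V i) ∧ V i ∉ W)) ∧
      ((φs (V i) < 0 ∧ V i ∉ W) ↔ (φ (V i) < 0 ∧ V i ∉ W)) := by
    intro s hs φs hφs i
    have hin : ∀ c : ℝ, V i = c • v → φs (V i) = s * c := by
      intro c hc
      rw [hφs, (hval i c hc).1, (hval i c hc).2]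
      ring
    have hmemc : ∀ c : ℝ, V i = c • v → V i ∈ W := by
      intro c hc
      rw [hc]
      exact Submodule.smul_mem _ _ (Submodule.mem_span_singleton_self v)
    refine ⟨⟨?_, ?_⟩, ⟨?_, ?_⟩, ?_, ?_⟩
    · rintro ⟨hpos, hmemW⟩
      obtain ⟨c, hc⟩ := hmem i hmemW
      exact ⟨c, by rw [← hin c hc]; exact hpos, hc⟩
    · rintro ⟨c, hsc, hc⟩
      exact ⟨by rw [hin c hc]; exact hsc, hmemc c hc⟩
    · rintro ⟨hneg, hmemW⟩
      obtain ⟨c, hc⟩ := hmem i hmemW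
      exact ⟨c, by rw [← hin c hc]; exact hneg, hc⟩
    · rintro ⟨c, hsc, hc⟩
      exact ⟨by rw [hin c hc]; exact hsc, hmemc c hc⟩
    · constructor
      · rintro ⟨hpos, hiW⟩
        refine ⟨?_, hiW⟩
        have := (key s hs i hiW).1
        rw [← hφs (V i)] at this
        exact this.mp hpos
      · rintro ⟨hpos, hiW⟩
        refine ⟨?_, hiW⟩
        have := (key s hs i hiW).1
        rw [← hφs (V i)] at this
        exact this.mpr hpos
    · constructor
      · rintro ⟨hneg, hiW⟩
        refine ⟨?_, hiW⟩
        have := (key s hs i hiW).2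
        rw [← hφs (V i)] at this
        exact this.mp hneg
      · rintro ⟨hneg, hiW⟩
        refine ⟨?_, hiW⟩
        have := (key s hs i hiW).2
        rw [← hφs (V i)] at this
        exact this.mpr hneg
  have e1 : posCount φp V
      = (Finset.univ.filter fun i => ∃ c : ℝ, 0 < c ∧ V i = c • v).card
        + (Finset.univ.filter fun i => 0 < φ (V i) ∧ V i ∉ W).card := by
    rw [posCount, split]
    congr 1
    · apply congrArg Finset.card
      apply Finset.filter_congr
      intro i _
      rw [(memiff 1 habs1 φp hφpapp i).1]
      constructor
      · rintro ⟨c, hc, he⟩; exact ⟨c, by linarith, he⟩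
      · rintro ⟨c, hc, he⟩; exact ⟨c, by linarith, he⟩
    · exact congrArg Finset.card
        (Finset.filter_congr fun i _ => (memiff 1 habs1 φp hφpapp i).2.2.1)
  have e2 : negCount φp V
      = (Finset.univ.filter fun i => ∃ c : ℝ, c < 0 ∧ V i = c • v).card
        + (Finset.univ.filter fun i => φ (V i) < 0 ∧ V i ∉ W).card := by
    rw [negCount, split]
    congr 1
    · apply congrArg Finset.card
      apply Finset.filter_congr
      intro i _
      rw [(memiff 1 habs1 φp hφpapp i).2.1]
      constructor
      · rintro ⟨c, hc, he⟩; exact ⟨c, by linarith, he⟩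
      · rintro ⟨c, hc, he⟩; exact ⟨c, by linarith, he⟩
    · exact congrArg Finset.card
        (Finset.filter_congr fun i _ => (memiff 1 habs1 φp hφpapp i).2.2.2)
  have e3 : posCount φm V
      = (Finset.univ.filter fun i => ∃ c : ℝ, c < 0 ∧ V i = c • v).card
        + (Finset.univ.filter fun i => 0 < φ (V i) ∧ V i ∉ W).card := by
    rw [posCount, split]
    congr 1
    · apply congrArg Finset.card
      apply Finset.filter_congr
      intro i _
      rw [(memiff (-1) habsm φm hφmapp i).1]
      constructor
      · rintro ⟨c, hc, he⟩; exact ⟨c, by nlinarith, he⟩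
      · rintro ⟨c, hc, he⟩; exact ⟨c, by nlinarith, he⟩
    · exact congrArg Finset.card
        (Finset.filter_congr fun i _ => (memiff (-1) habsm φm hφmapp i).2.2.1)
  have e4 : negCount φm V
      = (Finset.univ.filter fun i => ∃ c : ℝ, 0 < c ∧ V i = c • v).card
        + (Finset.univ.filter fun i => φ (V i) < 0 ∧ V i ∉ W).card := by
    rw [negCount, split]
    congr 1
    · apply congrArg Finset.card
      apply Finset.filter_congr
      intro i _
      rw [(memiff (-1) habsm φm hφmapp i).2.1]
      constructor
      · rintro ⟨c, hc, he⟩; exact ⟨c, by nlinarith, he⟩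
      · rintro ⟨c, hc, he⟩; exact ⟨c, by nlinarith, he⟩
    · exact congrArg Finset.card
        (Finset.filter_congr fun i _ => (memiff (-1) habsm φm hφmapp i).2.2.2)
  have c1 := h φp
  have c2 := h φm
  rw [e1, e2] at c1
  rw [e3, e4] at c2
  omega


lemma pairing (V : ι → E) :
    ∀ A : Finset ι, (∀ i ∈ A, V i ≠ 0) →
    (∀ v : E, v ≠ 0 →
      (A.filter fun i => ∃ t : ℝ, 0 < t ∧ V i = t • v).card
        = (A.filter fun i => ∃ t : ℝ, t < 0 ∧ V i = t • v).card) →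
    ∃ l : List (ι × ι),
      List.Pairwise (fun p q => p.1 ≠ q.1 ∧ p.1 ≠ q.2 ∧ p.2 ≠ q.1 ∧ p.2 ≠ q.2) l ∧
      (∀ p ∈ l, p.1 ≠ p.2 ∧ p.1 ∈ A ∧ p.2 ∈ A ∧
        ∃ lam : ℝ, 0 < lam ∧ V p.2 = -lam • V p.1) ∧
      (∀ x ∈ A, ∃ p ∈ l, x = p.1 ∨ x = p.2) := by
  classical
  suffices H : ∀ n (A : Finset ι), A.card ≤ n → (∀ i ∈ A, V i ≠ 0) →
      (∀ v : E, v ≠ 0 →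
        (A.filter fun i => ∃ t : ℝ, 0 < t ∧ V i = t • v).card
          = (A.filter fun i => ∃ t : ℝ, t < 0 ∧ V i = t • v).card) →
      ∃ l : List (ι × ι),
        List.Pairwise (fun p q => p.1 ≠ q.1 ∧ p.1 ≠ q.2 ∧ p.2 ≠ q.1 ∧ p.2 ≠ q.2) l ∧
        (∀ p ∈ l, p.1 ≠ p.2 ∧ p.1 ∈ A ∧ p.2 ∈ A ∧
          ∃ lam : ℝ, 0 < lam ∧ V p.2 = -lam • V p.1) ∧
        (∀ x ∈ A, ∃ p ∈ l, x = p.1 ∨ x = p.2) by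
    exact fun A h1 h2 => H A.card A le_rfl h1 h2
  intro n
  induction n with
  | zero =>
      intro A hcard _ _
      have hA : A = ∅ := Finset.card_eq_zero.mp (Nat.le_zero.mp hcard)
      subst hA
      exact ⟨[], List.Pairwise.nil, by simp, by simp⟩
  | succ n ih =>
      intro A hcard h0 hbal
      rcases A.eq_empty_or_nonempty with rfl | ⟨a, ha⟩
      · exact ⟨[], List.Pairwise.nil, by simp, by simp⟩
      have hva : V a ≠ 0 := h0 a ha
      have hbal_a := hbal (V a) hva
      have hamem : a ∈ A.filter (fun i => ∃ t : ℝ, 0 < t ∧ V i = t • V a) :=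
        Finset.mem_filter.mpr ⟨ha, 1, one_pos, (one_smul ℝ (V a)).symm⟩
      have hnegne : (A.filter fun i => ∃ t : ℝ, t < 0 ∧ V i = t • V a).Nonempty := by
        rw [← Finset.card_pos, ← hbal_a]
        exact Finset.card_pos.mpr ⟨a, hamem⟩
      obtain ⟨b, hb⟩ := hnegne
      obtain ⟨hbA, tb, htb, hVb⟩ := Finset.mem_filter.mp hb
      have htbne : tb ≠ 0 := ne_of_lt htb
      have hab : a ≠ b := by
        rintro rfl
        have hz : (1 - tb) • V a = 0 := by
          rw [sub_smul, one_smul, ← hVb, sub_self]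
        rcases smul_eq_zero.mp hz with h | h
        · have : (1:ℝ) - tb ≠ 0 := by linarith
          exact this h
        · exact hva h
      have hVa : V a = tb⁻¹ • V b := by
        rw [hVb, smul_smul, inv_mul_cancel₀ htbne, one_smul]
      have key2 : ∀ w : E, w ≠ 0 →
          ((∃ t : ℝ, 0 < t ∧ V a = t • w) ↔ (∃ t : ℝ, t < 0 ∧ V b = t • w)) ∧
          ((∃ t : ℝ, t < 0 ∧ V a = t • w) ↔ (∃ t : ℝ, 0 < t ∧ V b = t • w)) := by
        intro w hw
        have htbinv : tb⁻¹ < 0 := inv_lt_zero.mpr htb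
        constructor
        · constructor
          · rintro ⟨t, ht, he⟩
            exact ⟨tb * t, mul_neg_of_neg_of_pos htb ht, by rw [hVb, he, smul_smul]⟩
          · rintro ⟨t, ht, he⟩
            exact ⟨tb⁻¹ * t, mul_pos_of_neg_of_neg htbinv ht, by rw [hVa, he, smul_smul]⟩
        · constructor
          · rintro ⟨t, ht, he⟩
            exact ⟨tb * t, mul_pos_of_neg_of_neg htb ht, by rw [hVb, he, smul_smul]⟩
          · rintro ⟨t, ht, he⟩
            exact ⟨tb⁻¹ * t, mul_neg_of_neg_of_pos htbinv ht, by rw [hVa, he, smul_smul]⟩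
      set A' := (A.erase a).erase b with hA'
      have hsub : A' ⊆ A := (Finset.erase_subset _ _).trans (Finset.erase_subset _ _)
      have hbA' : b ∈ A.erase a := Finset.mem_erase.mpr ⟨Ne.symm hab, hbA⟩
      have hc1 : (A.erase a).card = A.card - 1 := Finset.card_erase_of_mem ha
      have hc2 : A'.card = (A.erase a).card - 1 := Finset.card_erase_of_mem hbA'
      have hApos : 1 ≤ A.card := Finset.card_pos.mpr ⟨a, ha⟩
      have hcard' : A'.card ≤ n := by omega
      have cardAB : ∀ (s : Finset ι), ((s.erase a).erase b).card
          = s.card - (if a ∈ s then 1 else 0) - (if b ∈ s then 1 else 0) := by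
        intro s
        have hba : b ∈ s.erase a ↔ b ∈ s :=
          ⟨fun h => (Finset.mem_erase.mp h).2, fun h => Finset.mem_erase.mpr ⟨Ne.symm hab, h⟩⟩
        simp only [Finset.card_erase_eq_ite, hba]
        split_ifs <;> omega
      have hbalA' : ∀ w : E, w ≠ 0 →
          (A'.filter fun i => ∃ t : ℝ, 0 < t ∧ V i = t • w).card
            = (A'.filter fun i => ∃ t : ℝ, t < 0 ∧ V i = t • w).card := by
        intro w hw
        have hk := key2 w hw
        have hfp : (A'.filter fun i => ∃ t : ℝ, 0 < t ∧ V i = t • w)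
            = (((A.filter fun i => ∃ t : ℝ, 0 < t ∧ V i = t • w).erase a).erase b) := by
          rw [hA', Finset.filter_erase, Finset.filter_erase]
        have hfn : (A'.filter fun i => ∃ t : ℝ, t < 0 ∧ V i = t • w)
            = (((A.filter fun i => ∃ t : ℝ, t < 0 ∧ V i = t • w).erase a).erase b) := by
          rw [hA', Finset.filter_erase, Finset.filter_erase]
        have h1 : (a ∈ A.filter fun i => ∃ t : ℝ, 0 < t ∧ V i = t • w)
            = (b ∈ A.filter fun i => ∃ t : ℝ, t < 0 ∧ V i = t • w) := by
          apply propext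
          constructor
          · intro h
            exact Finset.mem_filter.mpr ⟨hbA, hk.1.mp (Finset.mem_filter.mp h).2⟩
          · intro h
            exact Finset.mem_filter.mpr ⟨ha, hk.1.mpr (Finset.mem_filter.mp h).2⟩
        have h2 : (a ∈ A.filter fun i => ∃ t : ℝ, t < 0 ∧ V i = t • w)
            = (b ∈ A.filter fun i => ∃ t : ℝ, 0 < t ∧ V i = t • w) := by
          apply propext
          constructor
          · intro h
            exact Finset.mem_filter.mpr ⟨hbA, hk.2.mp (Finset.mem_filter.mp h).2⟩
          · intro h
            exact Finset.mem_filter.mpr ⟨ha, hk.2.mpr (Finset.mem_filter.mp h).2⟩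
        rw [hfp, hfn, cardAB, cardAB, hbal w hw]
        simp only [← h1, ← h2]
        split_ifs <;> omega
      have h0' : ∀ i ∈ A', V i ≠ 0 := fun i hi => h0 i (hsub hi)
      obtain ⟨l', hl1, hl2, hl3⟩ := ih A' hcard' h0' hbalA'
      have haA' : a ∉ A' := by
        intro h
        exact (Finset.mem_erase.mp (Finset.mem_erase.mp h).2).1 rfl
      have hbnA' : b ∉ A' := Finset.notMem_erase b _
      refine ⟨(a, b) :: l', ?_, ?_, ?_⟩
      · refine List.Pairwise.cons ?_ hl1
        intro q hq
        have hq' := hl2 q hq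
        have hq1 : q.1 ∈ A' := hq'.2.1
        have hq2 : q.2 ∈ A' := hq'.2.2.1
        exact ⟨fun h => haA' (by rw [show a = q.1 from h]; exact hq1),
          fun h => haA' (by rw [show a = q.2 from h]; exact hq2),
          fun h => hbnA' (by rw [show b = q.1 from h]; exact hq1),
          fun h => hbnA' (by rw [show b = q.2 from h]; exact hq2)⟩
      · intro p hp
        rcases List.mem_cons.mp hp with rfl | hp'
        · refine ⟨hab, ha, hbA, -tb, by linarith, ?_⟩
          rw [neg_neg]
          exact hVb
        · have hthis := hl2 p hp'
          exact ⟨hthis.1, hsub hthis.2.1, hsub hthis.2.2.1, hthis.2.2.2⟩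
      · intro x hx
        by_cases hxa : x = a
        · exact ⟨(a, b), List.mem_cons_self, Or.inl hxa⟩
        by_cases hxb : x = b
        · exact ⟨(a, b), List.mem_cons_self, Or.inr hxb⟩
        have hx' : x ∈ A' := Finset.mem_erase.mpr ⟨hxb, Finset.mem_erase.mpr ⟨hxa, hx⟩⟩
        obtain ⟨p, hpl, hpx⟩ := hl3 x hx'
        exact ⟨p, List.mem_cons_of_mem _ hpl, hpx⟩


/-- Auxiliary: a part is a zero-singleton or an antipodal pair. -/
def GoodPart (V : ι → E) (s : Finset ι) : Prop :=
  (∃ a, s = {a} ∧ V a = 0) ∨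
  (∃ a b, ∃ lam : ℝ, 0 < lam ∧ a ≠ b ∧ s = {a, b} ∧ V b = -lam • V a ∧ V a ≠ 0)

lemma part_count_ge (V : ι → E) {s : Finset ι} (hs : GoodPart V s) (φ : E →ₗ[ℝ] ℝ) :
    1 ≤ (s.filter fun i => φ (V i) ≤ 0).card := by
  apply Finset.card_pos.mpr
  rcases hs with ⟨a, rfl, ha⟩ | ⟨a, b, lam, hlam, hab, rfl, hVb, hVa⟩
  · exact ⟨a, Finset.mem_filter.mpr ⟨Finset.mem_singleton_self a, by rw [ha, map_zero]⟩⟩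
  · by_cases hφa : φ (V a) ≤ 0
    · exact ⟨a, Finset.mem_filter.mpr ⟨Finset.mem_insert_self a _, hφa⟩⟩
    · push_neg at hφa
      have hφb : φ (V b) ≤ 0 := by
        rw [hVb, map_smul, smul_eq_mul]
        nlinarith
      exact ⟨b, Finset.mem_filter.mpr
        ⟨Finset.mem_insert_of_mem (Finset.mem_singleton_self b), hφb⟩⟩

lemma part_count_eq (V : ι → E) {s : Finset ι} (hs : GoodPart V s) (φ : E →ₗ[ℝ] ℝ)
    (hφ : ∀ i ∈ s, V i ≠ 0 → φ (V i) ≠ 0) :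
    (s.filter fun i => φ (V i) ≤ 0).card = 1 := by
  rcases hs with ⟨a, rfl, ha⟩ | ⟨a, b, lam, hlam, hab, rfl, hVb, hVa⟩
  · rw [Finset.filter_true_of_mem, Finset.card_singleton]
    intro i hi
    rw [Finset.mem_singleton] at hi
    rw [hi, ha, map_zero]
  · have hφa : φ (V a) ≠ 0 := hφ a (Finset.mem_insert_self a _) hVa
    have hφb : φ (V b) = -lam * φ (V a) := by rw [hVb, map_smul, smul_eq_mul]
    rcases lt_or_gt_of_ne hφa with hlt | hgt
    · have hfe : ({a, b} : Finset ι).filter (fun i => φ (V i) ≤ 0) = {a} := by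
        ext i
        simp only [Finset.mem_filter, Finset.mem_insert, Finset.mem_singleton]
        constructor
        · rintro ⟨rfl | rfl, hle⟩
          · rfl
          · exfalso; nlinarith
        · rintro rfl
          exact ⟨Or.inl rfl, le_of_lt hlt⟩
      rw [hfe, Finset.card_singleton]
    · have hfe : ({a, b} : Finset ι).filter (fun i => φ (V i) ≤ 0) = {b} := by
        ext i
        simp only [Finset.mem_filter, Finset.mem_insert, Finset.mem_singleton]
        constructor
        · rintro ⟨rfl | rfl, hle⟩
          · exfalso; exact absurd hle (not_le.mpr hgt)
          · rfl
        · rintro rfl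
          refine ⟨Or.inr rfl, ?_⟩
          rw [hφb]
          nlinarith
      rw [hfe, Finset.card_singleton]

lemma nonpos_subfam (V : ι → E) (s : Finset ι) (φ : E →ₗ[ℝ] ℝ) :
    nonposCount φ (subfam V s) = (s.filter fun i => φ (V i) ≤ 0).card := by
  rw [nonposCount]
  apply Finset.card_bij (fun (i : {i // i ∈ s}) _ => i.1)
  · rintro ⟨i, hi⟩ hmem
    exact Finset.mem_filter.mpr ⟨hi, (Finset.mem_filter.mp hmem).2⟩
  · rintro ⟨i, hi⟩ _ ⟨j, hj⟩ _ h
    exact Subtype.ext h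
  · intro j hj
    obtain ⟨hjs, hjle⟩ := Finset.mem_filter.mp hj
    exact ⟨⟨j, hjs⟩, Finset.mem_filter.mpr ⟨Finset.mem_univ _, hjle⟩, rfl⟩

lemma codeg_part [Nontrivial E] (V : ι → E) {s : Finset ι} (hs : GoodPart V s) :
    codegStar (subfam V s) = 1 := by
  have hnt : Nontrivial E := inferInstance
  have hTgood : ∀ w ∈ (s.filter fun i => V i ≠ 0).image V, w ≠ 0 := by
    rintro w hw
    obtain ⟨i, hi, rfl⟩ := Finset.mem_image.mp hw
    exact (Finset.mem_filter.mp hi).2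
  obtain ⟨φ, hφ0, hφT⟩ := gen_functional_ne _ hTgood
  have hφ : ∀ i ∈ s, V i ≠ 0 → φ (V i) ≠ 0 := by
    intro i hi hVi
    exact hφT _ (Finset.mem_image.mpr ⟨i, Finset.mem_filter.mpr ⟨hi, hVi⟩, rfl⟩)
  rw [codegStar, if_pos hnt]
  apply le_antisymm
  · apply Nat.sInf_le
    exact ⟨φ, hφ0, by rw [nonpos_subfam]; exact part_count_eq V hs φ hφ⟩
  · apply le_csInf
    · exact ⟨_, φ, hφ0, rfl⟩
    · rintro k ⟨ψ, _, rfl⟩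
      rw [nonpos_subfam]
      exact part_count_ge V hs ψ

lemma count_split_parts {m : ℕ} (S : Fin (m + 1) → Finset ι)
    (hdisj : ∀ i j, i ≠ j → Disjoint (S i) (S j)) (hcov : ∀ x, ∃ i, x ∈ S i)
    (h0 : S 0 = ∅) (p : ι → Prop) :
    (Finset.univ.filter p).card
      = ∑ i ∈ Finset.univ.erase (0 : Fin (m + 1)), ((S i).filter p).card := by
  have huniv : (Finset.univ : Finset ι)
      = (Finset.univ.erase (0 : Fin (m + 1))).biUnion S := by
    apply Finset.Subset.antisymm
    · intro x _
      obtain ⟨i, hi⟩ := hcov x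
      have hi0 : i ≠ 0 := by
        rintro rfl
        rw [h0] at hi
        exact absurd hi (Finset.notMem_empty x)
      exact Finset.mem_biUnion.mpr ⟨i, Finset.mem_erase.mpr ⟨hi0, Finset.mem_univ i⟩, hi⟩
    · intro x _
      exact Finset.mem_univ x
  rw [huniv, Finset.filter_biUnion, Finset.card_biUnion]
  intro i hi j hj hij
  exact Finset.disjoint_filter_filter (hdisj i j hij)


/-- a configuration with zero discrepancy has `codeg* ≥ rank` and admits a
codegree* decomposition of length exactly `codeg* V` with `S 0 = ∅` whose parts are
singletons carrying the zero vector or antipodal (up to positive rescaling) pairs. -/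
theorem zero_disc_codegree_decomposition {E : Type*} [AddCommGroup E] [Module ℝ E]
    [FiniteDimensional ℝ E] (hE : 1 ≤ Module.finrank ℝ E)
    {ι : Type*} [Fintype ι] (V : ι → E) (hdisc : disc V = 0) :
    confRank V ≤ codegStar V ∧
    ∃ S : Fin (codegStar V + 1) → Finset ι,
      IsCodegDecomp V (codegStar V) S ∧ S 0 = ∅ ∧
      ∀ i : Fin (codegStar V + 1), i ≠ 0 →
        (∃ a, S i = {a} ∧ V a = 0) ∨
        (∃ a b, ∃ lam : ℝ, 0 < lam ∧ a ≠ b ∧ S i = {a, b} ∧ V b = -lam • V a) := by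
  classical
  have hnt : Nontrivial E := Module.nontrivial_of_finrank_pos
    (lt_of_lt_of_le zero_lt_one hE)
  have hcounts := counts_eq_of_disc_zero V hdisc
  set A := Finset.univ.filter (fun i => V i ≠ 0) with hA
  have hAmem : ∀ i, i ∈ A ↔ V i ≠ 0 := by
    intro i
    rw [hA, Finset.mem_filter]
    exact ⟨fun h => h.2, fun h => ⟨Finset.mem_univ i, h⟩⟩
  have hbalA : ∀ v : E, v ≠ 0 →
      (A.filter fun i => ∃ t : ℝ, 0 < t ∧ V i = t • v).card
        = (A.filter fun i => ∃ t : ℝ, t < 0 ∧ V i = t • v).card := by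
    intro v hv
    have h1 : A.filter (fun i => ∃ t : ℝ, 0 < t ∧ V i = t • v)
        = Finset.univ.filter (fun i => ∃ t : ℝ, 0 < t ∧ V i = t • v) := by
      rw [hA, Finset.filter_filter]
      apply Finset.filter_congr
      intro i _
      constructor
      · rintro ⟨_, h⟩; exact h
      · rintro ⟨t, ht, he⟩
        exact ⟨by rw [he]; exact smul_ne_zero (ne_of_gt ht) hv, ⟨t, ht, he⟩⟩
    have h2 : A.filter (fun i => ∃ t : ℝ, t < 0 ∧ V i = t • v)
        = Finset.univ.filter (fun i => ∃ t : ℝ, t < 0 ∧ V i = t • v) := by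
      rw [hA, Finset.filter_filter]
      apply Finset.filter_congr
      intro i _
      constructor
      · rintro ⟨_, h⟩; exact h
      · rintro ⟨t, ht, he⟩
        exact ⟨by rw [he]; exact smul_ne_zero (ne_of_lt ht) hv, ⟨t, ht, he⟩⟩
    rw [h1, h2]
    exact line_balance V hcounts v hv
  obtain ⟨l, hl1, hl2, hl3⟩ := pairing V A (fun i hi => (hAmem i).mp hi) hbalA
  set Z := Finset.univ.filter (fun i => V i = 0) with hZ
  set parts : List (Finset ι) :=
    (l.map fun p => ({p.1, p.2} : Finset ι)) ++ (Z.toList.map fun a => ({a} : Finset ι))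
    with hparts
  have hgood : ∀ s ∈ parts, GoodPart V s := by
    intro s hs
    rcases List.mem_append.mp hs with h | h
    · obtain ⟨p, hp, rfl⟩ := List.mem_map.mp h
      obtain ⟨hne, hpA, hqA, lam, hlam, hVb⟩ := hl2 p hp
      exact Or.inr ⟨p.1, p.2, lam, hlam, hne, rfl, hVb, (hAmem p.1).mp hpA⟩
    · obtain ⟨a, haZ, rfl⟩ := List.mem_map.mp h
      have : V a = 0 := (Finset.mem_filter.mp (Finset.mem_toList.mp haZ)).2
      exact Or.inl ⟨a, rfl, this⟩
  have hpw : parts.Pairwise (fun s t => Disjoint s t) := by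
    rw [hparts, List.pairwise_append]
    refine ⟨?_, ?_, ?_⟩
    · rw [List.pairwise_map]
      apply List.Pairwise.imp ?_ hl1
      intro p q hpq
      obtain ⟨h1, h2, h3, h4⟩ := hpq
      rw [Finset.disjoint_left]
      intro x hx hx'
      simp only [Finset.mem_insert, Finset.mem_singleton] at hx hx'
      rcases hx with rfl | rfl <;> rcases hx' with h | h
      · exact h1 h
      · exact h2 h
      · exact h3 h
      · exact h4 h
    · rw [List.pairwise_map]
      apply List.Pairwise.imp ?_ Z.nodup_toList
      intro a b hab
      exact Finset.disjoint_singleton.mpr hab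
    · intro s hs t ht
      obtain ⟨p, hp, rfl⟩ := List.mem_map.mp hs
      obtain ⟨a, haZ, rfl⟩ := List.mem_map.mp ht
      have hVa0 : V a = 0 := (Finset.mem_filter.mp (Finset.mem_toList.mp haZ)).2
      obtain ⟨_, hpA, hqA, _⟩ := hl2 p hp
      rw [Finset.disjoint_right]
      intro x hx hx'
      rw [Finset.mem_singleton] at hx
      subst hx
      simp only [Finset.mem_insert, Finset.mem_singleton] at hx'
      rcases hx' with rfl | rfl
      · exact (hAmem p.1).mp hpA hVa0
      · exact (hAmem p.2).mp hqA hVa0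
  have hcovp : ∀ x, ∃ s ∈ parts, x ∈ s := by
    intro x
    by_cases hx : V x = 0
    · refine ⟨{x}, ?_, Finset.mem_singleton_self x⟩
      apply List.mem_append_right
      exact List.mem_map.mpr ⟨x,
        Finset.mem_toList.mpr (Finset.mem_filter.mpr ⟨Finset.mem_univ x, hx⟩), rfl⟩
    · obtain ⟨p, hpl, hpx⟩ := hl3 x ((hAmem x).mpr hx)
      refine ⟨{p.1, p.2}, List.mem_append_left _ (List.mem_map.mpr ⟨p, hpl, rfl⟩), ?_⟩
      rcases hpx with rfl | rfl
      · exact Finset.mem_insert_self _ _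
      · exact Finset.mem_insert_of_mem (Finset.mem_singleton_self _)
  set S : Fin (parts.length + 1) → Finset ι := Fin.cases ∅ parts.get with hSdef
  have hS0 : S 0 = ∅ := rfl
  have hSsucc : ∀ j : Fin parts.length, S j.succ = parts.get j := fun j => by
    rw [hSdef]; exact Fin.cases_succ j
  have hSdisj : ∀ i j, i ≠ j → Disjoint (S i) (S j) := by
    intro i j hij
    rcases Fin.eq_zero_or_eq_succ i with rfl | ⟨i', rfl⟩
    · rw [hS0]; exact Finset.disjoint_empty_left _
    rcases Fin.eq_zero_or_eq_succ j with rfl | ⟨j', rfl⟩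
    · rw [hS0]; exact Finset.disjoint_empty_right _
    rw [hSsucc, hSsucc]
    have hij' : i' ≠ j' := fun h => hij (by rw [h])
    rcases lt_trichotomy i' j' with h | h | h
    · exact List.pairwise_iff_get.mp hpw i' j' h
    · exact absurd h hij'
    · exact (List.pairwise_iff_get.mp hpw j' i' h).symm
  have hScov : ∀ x, ∃ i, x ∈ S i := by
    intro x
    obtain ⟨s, hsmem, hxs⟩ := hcovp x
    obtain ⟨j, hj⟩ := List.mem_iff_get.mp hsmem
    exact ⟨j.succ, by rw [hSsucc j, hj]; exact hxs⟩
  have hSgood : ∀ i : Fin (parts.length + 1), i ≠ 0 → GoodPart V (S i) := by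
    intro i hi
    rcases Fin.eq_zero_or_eq_succ i with rfl | ⟨j, rfl⟩
    · exact absurd rfl hi
    · rw [hSsucc j]
      exact hgood _ (List.get_mem parts j)
  have hTgood : ∀ w ∈ A.image V, w ≠ 0 := by
    rintro w hw
    obtain ⟨i, hi, rfl⟩ := Finset.mem_image.mp hw
    exact (hAmem i).mp hi
  obtain ⟨φg, hφg0, hφgT⟩ := gen_functional_ne (A.image V) hTgood
  have hφgood : ∀ i, V i ≠ 0 → φg (V i) ≠ 0 := fun i hi =>
    hφgT _ (Finset.mem_image.mpr ⟨i, (hAmem i).mpr hi, rfl⟩)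
  have hsplit : ∀ p : ι → Prop, (Finset.univ.filter p).card
      = ∑ i ∈ Finset.univ.erase (0 : Fin (parts.length + 1)), ((S i).filter p).card :=
    count_split_parts S hSdisj hScov hS0
  have hcard_erase :
      (Finset.univ.erase (0 : Fin (parts.length + 1))).card = parts.length := by
    rw [Finset.card_erase_of_mem (Finset.mem_univ _), Finset.card_univ, Fintype.card_fin]
    omega
  have hcodeg : codegStar V = parts.length := by
    rw [codegStar, if_pos hnt]
    apply le_antisymm
    · apply Nat.sInf_le
      refine ⟨φg, hφg0, ?_⟩
      rw [nonposCount, hsplit]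
      have hone : ∀ i ∈ Finset.univ.erase (0 : Fin (parts.length + 1)),
          ((S i).filter fun j => φg (V j) ≤ 0).card = 1 := by
        intro i hi
        exact part_count_eq V (hSgood i (Finset.mem_erase.mp hi).1) φg
          (fun j _ hj => hφgood j hj)
      rw [Finset.sum_congr rfl hone, Finset.sum_const, smul_eq_mul, mul_one, hcard_erase]
    · apply le_csInf
      · exact ⟨_, φg, hφg0, rfl⟩
      · rintro k ⟨φ, _, rfl⟩
        rw [nonposCount, hsplit]
        calc parts.length
            = ∑ _i ∈ Finset.univ.erase (0 : Fin (parts.length + 1)), 1 := by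
              rw [Finset.sum_const, smul_eq_mul, mul_one, hcard_erase]
          _ ≤ ∑ i ∈ Finset.univ.erase (0 : Fin (parts.length + 1)),
              ((S i).filter fun j => φ (V j) ≤ 0).card :=
            Finset.sum_le_sum fun i hi =>
              part_count_ge V (hSgood i (Finset.mem_erase.mp hi).1) φ
  have hrank : confRank V ≤ parts.length := by
    have hspan : Submodule.span ℝ (Set.range V)
        ≤ Submodule.span ℝ (((l.map fun p => V p.1).toFinset : Finset E) : Set E) := by
      rw [Submodule.span_le]
      rintro w ⟨i, rfl⟩
      by_cases hi : V i = 0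
      · rw [hi]; exact Submodule.zero_mem _
      · obtain ⟨p, hpl, hpi⟩ := hl3 i ((hAmem i).mpr hi)
        have hp1 : V p.1 ∈ Submodule.span ℝ
            (((l.map fun p => V p.1).toFinset : Finset E) : Set E) := by
          apply Submodule.subset_span
          rw [Finset.mem_coe, List.mem_toFinset, List.mem_map]
          exact ⟨p, hpl, rfl⟩
        obtain ⟨_, _, _, lam, hlam, hVb⟩ := hl2 p hpl
        rcases hpi with rfl | rfl
        · exact hp1
        · rw [hVb]
          exact Submodule.smul_mem _ _ hp1
    have h1 : confRank V ≤ (l.map fun p => V p.1).toFinset.card := by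
      rw [confRank]
      exact le_trans (Submodule.finrank_mono hspan) (finrank_span_finset_le_card _)
    have h2 : (l.map fun p => V p.1).toFinset.card ≤ l.length := by
      refine le_trans (l.map fun p => V p.1).toFinset_card_le ?_
      rw [List.length_map]
    have h3 : l.length ≤ parts.length := by
      rw [hparts, List.length_append, List.length_map]
      omega
    omega
  rw [hcodeg]
  refine ⟨hrank, S, ⟨hSdisj, hScov, ?_, ?_⟩, hS0, ?_⟩
  · intro i hi
    rw [codeg_part V (hSgood i hi)]
  · rw [hcodeg]
    have hone : ∀ i ∈ Finset.univ.erase (0 : Fin (parts.length + 1)),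
        codegStar (subfam V (S i)) = 1 := by
      intro i hi
      exact codeg_part V (hSgood i (Finset.mem_erase.mp hi).1)
    rw [Finset.sum_congr rfl hone, Finset.sum_const, smul_eq_mul, mul_one, hcard_erase]
  · intro i hi
    rcases hSgood i hi with ⟨a, hSi, ha⟩ | ⟨a, b, lam, hlam, hab, hSi, hVb, _⟩
    · exact Or.inl ⟨a, hSi, ha⟩
    · exact Or.inr ⟨a, b, lam, hlam, hab, hSi, hVb⟩

end
end

section
/- Let V be a vector configuration in a finite-dimensional real vector space E with dim E ≥ 1, and let W = V|S be a subfamily that is linearly closed in V. Then disc(V) ≥ disc(W) + disc(V/W). -/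
open scoped Classical

noncomputable section

variable {E : Type*} [AddCommGroup E] [Module ℝ E] {ι : Type*} [Fintype ι]

/-- Integer sign of a real number. -/
def sg (x : ℝ) : ℤ := if 0 < x then 1 else if x < 0 then -1 else 0

lemma sg_zero : sg 0 = 0 := by simp [sg]

lemma sg_pos_mul {c : ℝ} (hc : 0 < c) (x : ℝ) : sg (c * x) = sg x := by
  unfold sg
  rcases lt_trichotomy x 0 with h | h | h
  · rw [if_neg (by nlinarith), if_pos (by nlinarith), if_neg (not_lt.2 h.le), if_pos h]
  · simp [h]
  · rw [if_pos (by nlinarith), if_pos h]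

lemma sg_neg (x : ℝ) : sg (-x) = - sg x := by
  unfold sg
  rcases lt_trichotomy x 0 with h | h | h
  · rw [if_pos (by linarith : (0:ℝ) < -x), if_neg (not_lt.2 h.le), if_pos h]; norm_num
  · simp [h]
  · rw [if_neg (by linarith : ¬ (0:ℝ) < -x), if_pos (by linarith : -x < (0:ℝ)), if_pos h]

lemma sg_add_of_abs_lt {a b : ℝ} (h : |a| < |b|) : sg (a + b) = sg b := by
  have ha := abs_lt.1 h
  unfold sg
  rcases lt_trichotomy b 0 with hb | hb | hb
  · rw [abs_of_neg hb] at ha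
    rw [if_neg (by linarith), if_pos (by linarith), if_neg (not_lt.2 hb.le), if_pos hb]
  · exfalso; rw [hb, abs_zero] at h; exact absurd h (abs_nonneg a).not_gt
  · rw [abs_of_pos hb] at ha
    rw [if_pos (by linarith), if_pos hb]

lemma sg_smul_sign {c : ℝ} (hc : 0 < c) {s : ℤ} (hs : s = 1 ∨ s = -1) (x : ℝ) :
    sg (c * (s : ℝ) * x) = s * sg x := by
  rcases hs with rfl | rfl
  · push_cast
    rw [mul_one, one_mul, sg_pos_mul hc]
  · have h : c * ((-1 : ℤ) : ℝ) * x = c * (-x) := by push_cast; ring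
    rw [h, sg_pos_mul hc, sg_neg]
    ring

/-- A functional not vanishing on a finite family of nonzero vectors. -/
lemma exists_dual_ne_zero {F : Type*} [AddCommGroup F] [Module ℝ F] {κ : Type*}
    (s : Finset κ) (w : κ → F) (h : ∀ i ∈ s, w i ≠ 0) :
    ∃ χ : F →ₗ[ℝ] ℝ, ∀ i ∈ s, χ (w i) ≠ 0 := by
  classical
  induction s using Finset.induction_on with
  | empty => exact ⟨0, by simp⟩
  | @insert a s ha ih =>
    obtain ⟨χ, hχ⟩ := ih (fun i hi => h i (Finset.mem_insert_of_mem hi))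
    have hwa : w a ≠ 0 := h a (Finset.mem_insert_self a s)
    obtain ⟨χa, hχa⟩ : ∃ χa : F →ₗ[ℝ] ℝ, χa (w a) ≠ 0 := by
      by_contra hcon
      push_neg at hcon
      exact hwa ((Module.forall_dual_apply_eq_zero_iff ℝ (w a)).1 hcon)
    obtain ⟨c, hc⟩ := Infinite.exists_notMem_finset
      ((insert a s).image (fun i => -χ (w i) / χa (w i)))
    refine ⟨χ + c • χa, fun i hi => ?_⟩
    simp only [LinearMap.add_apply, LinearMap.smul_apply, smul_eq_mul]
    by_cases hzi : χa (w i) = 0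
    · rcases Finset.mem_insert.1 hi with rfl | hi'
      · exact absurd hzi hχa
      · simpa [hzi] using hχ i hi'
    · intro hzero
      apply hc
      refine Finset.mem_image.2 ⟨i, hi, ?_⟩
      field_simp
      linarith [hzero]

lemma count_sub_eq_sum (φ : E →ₗ[ℝ] ℝ) (V : ι → E) :
    (posCount φ V : ℤ) - (negCount φ V : ℤ) = ∑ i, sg (φ (V i)) := by
  unfold posCount negCount
  rw [Finset.card_filter, Finset.card_filter]
  push_cast
  rw [← Finset.sum_sub_distrib]
  refine Finset.sum_congr rfl fun i _ => ?_
  unfold sg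
  split_ifs with h1 h2 <;> norm_num <;> linarith

lemma disc_bdd (V : ι → E) :
    BddAbove {k | ∃ φ : E →ₗ[ℝ] ℝ, k = ((posCount φ V : ℤ) - (negCount φ V : ℤ)).natAbs} := by
  refine ⟨Fintype.card ι, ?_⟩
  rintro k ⟨φ, rfl⟩
  have h1 : posCount φ V ≤ Fintype.card ι := by
    simpa [posCount] using Finset.card_filter_le Finset.univ (fun i => 0 < φ (V i))
  have h2 : negCount φ V ≤ Fintype.card ι := by
    simpa [negCount] using Finset.card_filter_le Finset.univ (fun i => φ (V i) < 0)
  omega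

lemma le_disc (V : ι → E) (φ : E →ₗ[ℝ] ℝ) :
    ((posCount φ V : ℤ) - (negCount φ V : ℤ)).natAbs ≤ disc V :=
  le_csSup (disc_bdd V) ⟨φ, rfl⟩

lemma disc_attained (V : ι → E) :
    ∃ φ : E →ₗ[ℝ] ℝ, disc V = ((posCount φ V : ℤ) - (negCount φ V : ℤ)).natAbs := by
  have h : disc V ∈
      {k | ∃ φ : E →ₗ[ℝ] ℝ, k = ((posCount φ V : ℤ) - (negCount φ V : ℤ)).natAbs} :=
    Nat.sSup_mem ⟨0, 0, by simp [posCount, negCount]⟩ (disc_bdd V)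
  exact h


set_option maxHeartbeats 1000000 in
/-- for a linearly closed subfamily `W = V|S`,
`disc V ≥ disc W + disc (V/W)`. -/
theorem disc_ge_disc_add_disc_contract {E : Type*} [AddCommGroup E] [Module ℝ E]
    [FiniteDimensional ℝ E] (hE : 1 ≤ Module.finrank ℝ E)
    {ι : Type*} [Fintype ι] (V : ι → E) (S : Finset ι) (hS : LinClosed V S) :
    disc (subfam V S) + disc (contract V S) ≤ disc V := by
  classical
  set Q : Submodule ℝ E := Submodule.span ℝ (V '' (S : Set ι)) with hQ
  obtain ⟨φ₀, hA⟩ := disc_attained (subfam V S)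
  obtain ⟨ψ, hB⟩ := disc_attained (contract V S)
  set ψ' : E →ₗ[ℝ] ℝ := ψ.comp Q.mkQ with hψ'def
  have hnotQ : ∀ i, i ∉ S → V i ∉ Q := fun i hi hmem => hi (hS i hmem)
  have hinQ : ∀ i, i ∈ S → V i ∈ Q :=
    fun i hi => Submodule.subset_span ⟨i, by simpa using hi, rfl⟩
  obtain ⟨χ₀, hχ₀⟩ := exists_dual_ne_zero (F := E ⧸ Q)
    (Sᶜ.filter fun i => ψ' (V i) = 0) (fun i => Q.mkQ (V i)) (by
      intro i hi
      show Q.mkQ (V i) ≠ 0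
      rw [Submodule.mkQ_apply, Ne, Submodule.Quotient.mk_eq_zero]
      exact hnotQ i (Finset.mem_compl.1 (Finset.mem_filter.1 hi).1))
  set χ : E →ₗ[ℝ] ℝ := χ₀.comp Q.mkQ with hχdef
  have hχT : ∀ i, i ∉ S → ψ' (V i) = 0 → χ (V i) ≠ 0 := fun i hi h0 =>
    hχ₀ i (Finset.mem_filter.2 ⟨Finset.mem_compl.2 hi, h0⟩)
  have hχS : ∀ i, i ∈ S → χ (V i) = 0 := by
    intro i hi
    simp [hχdef, (Submodule.Quotient.mk_eq_zero Q).2 (hinQ i hi)]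
  have hψS : ∀ i, i ∈ S → ψ' (V i) = 0 := by
    intro i hi
    simp [hψ'def, (Submodule.Quotient.mk_eq_zero Q).2 (hinQ i hi)]
  -- parameter t
  set t : ℝ := 1 + ∑ i, (if χ (V i) = 0 then 0 else |φ₀ (V i)| / |χ (V i)|) with ht
  have htpos : 0 < t := by
    have h : (0:ℝ) ≤ ∑ i, (if χ (V i) = 0 then 0 else |φ₀ (V i)| / |χ (V i)|) :=
      Finset.sum_nonneg fun i _ => by positivity
    rw [ht]; linarith
  have htdom : ∀ i, χ (V i) ≠ 0 → |φ₀ (V i)| < t * |χ (V i)| := by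
    intro i hne
    have h1 : |φ₀ (V i)| / |χ (V i)| ≤
        ∑ j, (if χ (V j) = 0 then (0:ℝ) else |φ₀ (V j)| / |χ (V j)|) := by
      have h := Finset.single_le_sum
        (f := fun j => if χ (V j) = 0 then (0:ℝ) else |φ₀ (V j)| / |χ (V j)|)
        (fun j _ => by positivity) (Finset.mem_univ i)
      simpa [hne] using h
    have h2 : |φ₀ (V i)| / |χ (V i)| < t := by rw [ht]; linarith
    have hc : 0 < |χ (V i)| := abs_pos.2 hne
    calc |φ₀ (V i)| = (|φ₀ (V i)| / |χ (V i)|) * |χ (V i)| := by field_simp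
    _ < t * |χ (V i)| := mul_lt_mul_of_pos_right h2 hc
  -- parameter ε
  set D : ι → ℝ := fun i => |φ₀ (V i)| + t * |χ (V i)| with hD
  have hDnn : ∀ i, 0 ≤ D i := fun i =>
    add_nonneg (abs_nonneg _) (mul_nonneg htpos.le (abs_nonneg _))
  have hfnn : ∀ j : ι, (0:ℝ) ≤ (if ψ' (V j) = 0 then (0:ℝ) else D j / |ψ' (V j)|) := by
    intro j
    by_cases h' : ψ' (V j) = 0
    · rw [if_pos h']
    · rw [if_neg h']
      exact div_nonneg (hDnn j) (abs_nonneg _)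
  set M : ℝ := 1 + ∑ i, (if ψ' (V i) = 0 then 0 else D i / |ψ' (V i)|) with hM
  have hMpos : 0 < M := by
    have h : (0:ℝ) ≤ ∑ i, (if ψ' (V i) = 0 then 0 else D i / |ψ' (V i)|) :=
      Finset.sum_nonneg fun i _ => hfnn i
    rw [hM]; linarith
  set ε : ℝ := 1 / M with hε
  have hεpos : 0 < ε := by rw [hε]; positivity
  have hεdom : ∀ i, ψ' (V i) ≠ 0 → ε * D i < |ψ' (V i)| := by
    intro i hne
    have h1 : D i / |ψ' (V i)| ≤ ∑ j, (if ψ' (V j) = 0 then (0:ℝ) else D j / |ψ' (V j)|) := by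
      have h := Finset.single_le_sum
        (f := fun j => if ψ' (V j) = 0 then (0:ℝ) else D j / |ψ' (V j)|)
        (fun j _ => hfnn j) (Finset.mem_univ i)
      simpa [hne] using h
    have hc : 0 < |ψ' (V i)| := abs_pos.2 hne
    have h2 : D i < M * |ψ' (V i)| := by
      rw [hM]
      have := (div_le_iff₀ hc).1 h1
      nlinarith
    rw [hε]
    rw [div_mul_eq_mul_div, one_mul, div_lt_iff₀ hMpos]
    linarith [h2]
  -- signed sums
  set A' : ℤ := ∑ i ∈ S, sg (φ₀ (V i)) with hA'
  set B' : ℤ := ∑ i ∈ Sᶜ, sg (ψ' (V i)) with hB'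
  set C : ℤ := ∑ i ∈ Sᶜ, (if ψ' (V i) = 0 then sg (χ (V i)) else 0) with hC
  have hAA : (posCount φ₀ (subfam V S) : ℤ) - (negCount φ₀ (subfam V S) : ℤ) = A' := by
    rw [count_sub_eq_sum, hA']
    exact (Finset.sum_subtype S (fun x => Iff.rfl) (fun i => sg (φ₀ (V i)))).symm
  have hBB : (posCount ψ (contract V S) : ℤ) - (negCount ψ (contract V S) : ℤ) = B' := by
    rw [count_sub_eq_sum, hB']
    exact (Finset.sum_subtype Sᶜ (fun x => Finset.mem_compl) (fun i => sg (ψ' (V i)))).symm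
  set σ : ℤ := if (0 ≤ A' ↔ 0 ≤ B') then 1 else -1 with hσdef
  have hσ : σ = 1 ∨ σ = -1 := by
    rw [hσdef]; split_ifs <;> simp
  have key : ∀ τ : ℤ, τ = 1 ∨ τ = -1 → (σ * A' + B' + τ * C).natAbs ≤ disc V := by
    intro τ hτ
    set η : E →ₗ[ℝ] ℝ := ψ' + (ε * (σ:ℝ)) • φ₀ + (ε * t * (τ:ℝ)) • χ with hηdef
    have happ : ∀ i, η (V i) =
        ψ' (V i) + ε * (σ:ℝ) * φ₀ (V i) + ε * t * (τ:ℝ) * χ (V i) := by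
      intro i
      simp [hηdef]
    have hsg : ∀ i, sg (η (V i)) = (if i ∈ S then σ * sg (φ₀ (V i))
        else if ψ' (V i) = 0 then τ * sg (χ (V i)) else sg (ψ' (V i))) := by
      intro i
      by_cases hiS : i ∈ S
      · rw [if_pos hiS, happ i, hψS i hiS, hχS i hiS, mul_zero, add_zero, zero_add]
        exact sg_smul_sign hεpos hσ _
      · rw [if_neg hiS]
        by_cases hz : ψ' (V i) = 0
        · rw [if_pos hz]
          have hχne := hχT i hiS hz
          have hrw : η (V i) = (ε * ((σ:ℝ) * φ₀ (V i)) + ε * (t * (τ:ℝ) * χ (V i))) := by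
            rw [happ i, hz]; ring
          have habs : |(σ:ℝ) * φ₀ (V i)| < |t * (τ:ℝ) * χ (V i)| := by
            have h1 : |(σ:ℝ) * φ₀ (V i)| = |φ₀ (V i)| := by
              rcases hσ with h | h <;> rw [h] <;> push_cast <;>
                simp [abs_mul]
            have h2 : |t * (τ:ℝ) * χ (V i)| = t * |χ (V i)| := by
              rcases hτ with h | h <;> rw [h] <;> push_cast <;>
                simp [abs_mul, abs_of_pos htpos]
            rw [h1, h2]
            exact htdom i hχne
          calc sg (η (V i)) = sg (ε * ((σ:ℝ) * φ₀ (V i) + t * (τ:ℝ) * χ (V i))) := by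
                rw [hrw]; ring_nf
            _ = sg ((σ:ℝ) * φ₀ (V i) + t * (τ:ℝ) * χ (V i)) := sg_pos_mul hεpos _
            _ = sg (t * (τ:ℝ) * χ (V i)) := sg_add_of_abs_lt habs
            _ = τ * sg (χ (V i)) := sg_smul_sign htpos hτ _
        · rw [if_neg hz]
          have hrw : η (V i) =
              (ε * (σ:ℝ) * φ₀ (V i) + ε * t * (τ:ℝ) * χ (V i)) + ψ' (V i) := by
            rw [happ i]; ring
          rw [hrw]
          refine sg_add_of_abs_lt ?_
          have hsmall : |ε * (σ:ℝ) * φ₀ (V i) + ε * t * (τ:ℝ) * χ (V i)| ≤ ε * D i := by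
            have e1 : |ε * (σ:ℝ) * φ₀ (V i)| = ε * |φ₀ (V i)| := by
              rcases hσ with h | h <;> rw [h] <;> push_cast <;>
                simp [abs_mul, abs_of_pos hεpos]
            have e2 : |ε * t * (τ:ℝ) * χ (V i)| = ε * (t * |χ (V i)|) := by
              rcases hτ with h | h <;> rw [h] <;> push_cast <;>
                simp [abs_mul, abs_of_pos hεpos, abs_of_pos htpos] <;> ring
            calc |ε * (σ:ℝ) * φ₀ (V i) + ε * t * (τ:ℝ) * χ (V i)|
                ≤ |ε * (σ:ℝ) * φ₀ (V i)| + |ε * t * (τ:ℝ) * χ (V i)| := abs_add_le _ _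
              _ = ε * D i := by rw [e1, e2, hD]; ring
          exact lt_of_le_of_lt hsmall (hεdom i hz)
    have hsum : (posCount η V : ℤ) - (negCount η V : ℤ) = σ * A' + B' + τ * C := by
      rw [count_sub_eq_sum]
      rw [Finset.sum_congr rfl (fun i _ => hsg i)]
      rw [← Finset.sum_filter_add_sum_filter_not Finset.univ (· ∈ S)]
      have hfS : Finset.univ.filter (· ∈ S) = S := Finset.filter_univ_mem S
      have hfSc : Finset.univ.filter (fun i => ¬ i ∈ S) = Sᶜ := by
        ext i; simp
      rw [hfS, hfSc]
      have e1 : ∑ i ∈ S, (if i ∈ S then σ * sg (φ₀ (V i))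
          else if ψ' (V i) = 0 then τ * sg (χ (V i)) else sg (ψ' (V i))) = σ * A' := by
        rw [hA', Finset.mul_sum]
        exact Finset.sum_congr rfl fun i hi => by rw [if_pos hi]
      have e2 : ∑ i ∈ Sᶜ, (if i ∈ S then σ * sg (φ₀ (V i))
          else if ψ' (V i) = 0 then τ * sg (χ (V i)) else sg (ψ' (V i))) = B' + τ * C := by
        rw [hB', hC, Finset.mul_sum, ← Finset.sum_add_distrib]
        refine Finset.sum_congr rfl fun i hi => ?_
        rw [if_neg (Finset.mem_compl.1 hi)]
        by_cases hz : ψ' (V i) = 0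
        · rw [if_pos hz, if_pos hz, hz, sg_zero, zero_add]
        · rw [if_neg hz, if_neg hz, mul_zero, add_zero]
      rw [e1, e2]
      ring
    have h := le_disc V η
    rwa [hsum] at h
  have h1 := key 1 (Or.inl rfl)
  have h2 := key (-1) (Or.inr rfl)
  rw [one_mul] at h1
  have h2' : (σ * A' + B' - C).natAbs ≤ disc V := by
    have : σ * A' + B' + (-1) * C = σ * A' + B' - C := by ring
    rwa [this] at h2
  have hX : (σ * A' + B').natAbs = A'.natAbs + B'.natAbs := by
    rcases le_or_gt 0 A' with ha | ha <;> rcases le_or_gt 0 B' with hb | hb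
    · rw [hσdef, if_pos (iff_of_true ha hb)]; omega
    · rw [hσdef, if_neg (by simp [ha, hb.not_ge] : ¬ (0 ≤ A' ↔ 0 ≤ B'))]; omega
    · rw [hσdef, if_neg (by simp [ha.not_ge, hb] : ¬ (0 ≤ A' ↔ 0 ≤ B'))]; omega
    · rw [hσdef, if_pos (iff_of_false ha.not_ge hb.not_ge)]; omega
  rw [hA, hB, hAA, hBB]
  set X := σ * A' + B' with hXdef
  omega

end
end

section
/- Let V be a vector configuration in a finite-dimensional real vector space E with dim E ≥ 1, and let W = V|S be a subfamily that is linearly closed in V. Then the following three equalities are equivalent: (i) disc(V) = disc(W) + disc(V/W); (ii) deg*(V) = deg*(W) + deg*(V/W); (iii) codeg*(V) = codeg*(W) + codeg*(V/W). -/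
open scoped Classical

noncomputable section

variable {E : Type*} [AddCommGroup E] [Module ℝ E] {ι : Type*} [Fintype ι]

namespace Stmt8

open Finset Filter Topology

/-- number of zero vectors in the family -/
def zc (V : ι → E) : ℕ := (Finset.univ.filter fun i => V i = 0).card

/-- number of zeros of φ on the family -/
def zeroCount (φ : E →ₗ[ℝ] ℝ) (V : ι → E) : ℕ :=
  (Finset.univ.filter fun i => φ (V i) = 0).card

/-- zeros of φ on nonzero vectors -/
def ezc (φ : E →ₗ[ℝ] ℝ) (V : ι → E) : ℕ :=
  (Finset.univ.filter fun i => V i ≠ 0 ∧ φ (V i) = 0).card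

def posSet (V : ι → E) : Set ℕ := {k | ∃ φ : E →ₗ[ℝ] ℝ, φ ≠ 0 ∧ posCount φ V = k}

def Mx (V : ι → E) : ℕ := sSup (posSet V)

lemma posCount_le (φ : E →ₗ[ℝ] ℝ) (V : ι → E) : posCount φ V ≤ Fintype.card ι := by
  classical
  simpa [posCount] using (Finset.card_filter_le Finset.univ fun i => 0 < φ (V i))

lemma negCount_le (φ : E →ₗ[ℝ] ℝ) (V : ι → E) : negCount φ V ≤ Fintype.card ι := by
  classical
  simpa [negCount] using (Finset.card_filter_le Finset.univ fun i => φ (V i) < 0)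

lemma count_partition (φ : E →ₗ[ℝ] ℝ) (V : ι → E) :
    posCount φ V + negCount φ V + zeroCount φ V = Fintype.card ι := by
  classical
  have h1 : (Finset.univ.filter fun i => 0 < φ (V i)).card
      + (Finset.univ.filter fun i => ¬ 0 < φ (V i)).card = Fintype.card ι := by
    simpa using Finset.card_filter_add_card_filter_not
      (s := Finset.univ) (p := fun i => 0 < φ (V i))
  have h2 : (Finset.univ.filter fun i => ¬ 0 < φ (V i))
      = (Finset.univ.filter fun i => φ (V i) < 0) ∪ (Finset.univ.filter fun i => φ (V i) = 0) := by
    ext i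
    simp only [Finset.mem_filter, Finset.mem_union, Finset.mem_univ, true_and, not_lt]
    constructor
    · intro h; rcases lt_or_eq_of_le h with h | h
      · exact Or.inl h
      · exact Or.inr h
    · rintro (h | h) <;> simp [h, le_of_lt, le_of_eq]
  have h3 : Disjoint (Finset.univ.filter fun i => φ (V i) < 0)
      (Finset.univ.filter fun i => φ (V i) = 0) := by
    rw [Finset.disjoint_left]
    intro i hi hj
    simp only [Finset.mem_filter, Finset.mem_univ, true_and] at hi hj
    exact absurd hj (ne_of_lt hi)
  rw [h2, Finset.card_union_of_disjoint h3] at h1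
  simpa [posCount, negCount, zeroCount, add_assoc] using h1

lemma zeroCount_eq (φ : E →ₗ[ℝ] ℝ) (V : ι → E) :
    zeroCount φ V = ezc φ V + zc V := by
  classical
  have h2 : (Finset.univ.filter fun i => φ (V i) = 0)
      = (Finset.univ.filter fun i => V i ≠ 0 ∧ φ (V i) = 0)
        ∪ (Finset.univ.filter fun i => V i = 0) := by
    ext i
    simp only [Finset.mem_filter, Finset.mem_union, Finset.mem_univ, true_and]
    constructor
    · intro h
      by_cases hv : V i = 0
      · exact Or.inr hv
      · exact Or.inl ⟨hv, h⟩
    · rintro (⟨_, h⟩ | h)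
      · exact h
      · simp [h]
  have h3 : Disjoint (Finset.univ.filter fun i => V i ≠ 0 ∧ φ (V i) = 0)
      (Finset.univ.filter fun i => V i = 0) := by
    rw [Finset.disjoint_left]
    intro i hi hj
    simp only [Finset.mem_filter, Finset.mem_univ, true_and] at hi hj
    exact hi.1 hj
  rw [zeroCount, h2, Finset.card_union_of_disjoint h3]; rfl

lemma pos_add_nonpos (φ : E →ₗ[ℝ] ℝ) (V : ι → E) :
    posCount φ V + nonposCount φ V = Fintype.card ι := by
  classical
  have h1 : (Finset.univ.filter fun i => 0 < φ (V i)).card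
      + (Finset.univ.filter fun i => ¬ 0 < φ (V i)).card = Fintype.card ι := by
    simpa using Finset.card_filter_add_card_filter_not
      (s := Finset.univ) (p := fun i => 0 < φ (V i))
  have h2 : (Finset.univ.filter fun i => ¬ 0 < φ (V i))
      = (Finset.univ.filter fun i => φ (V i) ≤ 0) := by
    ext i; simp [not_lt]
  rw [h2] at h1
  exact h1

section FinDim
variable [FiniteDimensional ℝ E]

lemma exists_separating {v : E} (hv : v ≠ 0) : ∃ φ : E →ₗ[ℝ] ℝ, φ v ≠ 0 := by
  by_contra h
  push_neg at h
  exact hv ((Module.forall_dual_apply_eq_zero_iff ℝ v).mp h)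

lemma exists_generic [Nontrivial E] (V : ι → E) :
    ∃ ψ : E →ₗ[ℝ] ℝ, ψ ≠ 0 ∧ ∀ i, V i ≠ 0 → ψ (V i) ≠ 0 := by
  classical
  suffices h : ∀ s : Finset ι, ∃ ψ : E →ₗ[ℝ] ℝ, ψ ≠ 0 ∧ ∀ i ∈ s, V i ≠ 0 → ψ (V i) ≠ 0 by
    obtain ⟨ψ, h1, h2⟩ := h Finset.univ
    exact ⟨ψ, h1, fun i => h2 i (Finset.mem_univ i)⟩
  intro s
  induction s using Finset.induction with
  | empty =>
    obtain ⟨v, hv⟩ := exists_ne (0 : E)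
    obtain ⟨φ, hφ⟩ := exists_separating hv
    refine ⟨φ, fun h => hφ (by simp [h]), by simp⟩
  | @insert a s ha ih =>
    obtain ⟨ψ, hψ0, hψ⟩ := ih
    by_cases hVa : V a = 0
    · refine ⟨ψ, hψ0, ?_⟩
      intro i hi hVi
      rcases Finset.mem_insert.mp hi with rfl | hi
      · exact absurd hVa hVi
      · exact hψ i hi hVi
    by_cases hva : ψ (V a) ≠ 0
    · refine ⟨ψ, hψ0, ?_⟩
      intro i hi hVi
      rcases Finset.mem_insert.mp hi with rfl | hi
      · exact hva
      · exact hψ i hi hVi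
    push_neg at hva
    obtain ⟨χ, hχ⟩ := exists_separating hVa
    obtain ⟨c, hc⟩ := Infinite.exists_notMem_finset
      ((s.image fun i => -(ψ (V i)) / χ (V i)) ∪ {(0:ℝ)})
    have hc0 : c ≠ 0 := by
      intro h; exact hc (Finset.mem_union_right _ (by simp [h]))
    have hcim : ∀ i ∈ s, c ≠ -(ψ (V i)) / χ (V i) := by
      intro i hi h
      exact hc (Finset.mem_union_left _ (Finset.mem_image.mpr ⟨i, hi, h.symm⟩))
    refine ⟨ψ + c • χ, ?_, ?_⟩
    · intro h
      have h2 : (ψ + c • χ) (V a) = 0 := by rw [h]; simp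
      simp only [LinearMap.add_apply, LinearMap.smul_apply, smul_eq_mul, hva, zero_add] at h2
      exact (mul_ne_zero hc0 hχ) h2
    · intro i hi hVi
      rcases Finset.mem_insert.mp hi with rfl | hi
      · simp only [LinearMap.add_apply, LinearMap.smul_apply, smul_eq_mul, hva, zero_add]
        exact mul_ne_zero hc0 hχ
      · simp only [LinearMap.add_apply, LinearMap.smul_apply, smul_eq_mul]
        by_cases hχi : χ (V i) = 0
        · simpa [hχi] using hψ i hi hVi
        · intro h
          apply hcim i hi
          field_simp
          linarith [h]

lemma ev_lin (a b : ℝ) : Filter.Tendsto (fun ε : ℝ => a + ε * b) (𝓝[>] (0:ℝ)) (𝓝 a) := by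
  have hcont : Continuous fun ε : ℝ => a + ε * b := by continuity
  have := hcont.tendsto 0
  simpa using this.mono_left nhdsWithin_le_nhds

lemma ev_pos {a : ℝ} (b : ℝ) (ha : 0 < a) : ∀ᶠ ε in 𝓝[>] (0:ℝ), 0 < a + ε * b :=
  (ev_lin a b).eventually (eventually_gt_nhds ha)

lemma ev_neg {a : ℝ} (b : ℝ) (ha : a < 0) : ∀ᶠ ε in 𝓝[>] (0:ℝ), a + ε * b < 0 :=
  (ev_lin a b).eventually (eventually_lt_nhds ha)

lemma ev_ne (b : ℝ) : ∀ᶠ ε in 𝓝[>] (0:ℝ), ε ≠ b := by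
  rcases eq_or_ne b 0 with rfl | hb
  · filter_upwards [eventually_mem_nhdsWithin] with ε hε
    exact ne_of_gt hε
  · exact eventually_nhdsWithin_of_eventually_nhds (eventually_ne_nhds (Ne.symm hb))

lemma ev_addsmul_ne_zero (φ ψ : E →ₗ[ℝ] ℝ) (hψ : ψ ≠ 0) :
    ∀ᶠ ε in 𝓝[>] (0:ℝ), φ + ε • ψ ≠ 0 := by
  by_cases h : ∃ c : ℝ, φ + c • ψ = 0
  · obtain ⟨c, hc⟩ := h
    filter_upwards [ev_ne c] with ε hε h0
    apply hε
    have h1 : (ε - c) • ψ = 0 := by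
      have : (ε - c) • ψ = (φ + ε • ψ) - (φ + c • ψ) := by module
      rw [this, h0, hc, sub_zero]
    rcases smul_eq_zero.mp h1 with h2 | h2
    · exact sub_eq_zero.mp h2
    · exact absurd h2 hψ
  · push_neg at h
    filter_upwards with ε
    exact h ε

/-- The key perturbation lemma. -/
lemma pert [Nontrivial E] (V : ι → E) (φ : E →ₗ[ℝ] ℝ) :
    ∃ φp φm : E →ₗ[ℝ] ℝ, φp ≠ 0 ∧ φm ≠ 0 ∧
      2 * posCount φ V + ezc φ V ≤ posCount φp V + posCount φm V ∧
      posCount φ V ≤ posCount φp V ∧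
      zeroCount φp V = zc V := by
  classical
  obtain ⟨ψ, hψ0, hψ⟩ := exists_generic V
  have hev1 : ∀ i : ι, ∀ᶠ ε in 𝓝[>] (0:ℝ),
      (0 < φ (V i) → 0 < φ (V i) + ε * ψ (V i) ∧ 0 < φ (V i) + ε * (-ψ (V i))) ∧
      (φ (V i) < 0 → φ (V i) + ε * ψ (V i) < 0 ∧ φ (V i) + ε * (-ψ (V i)) < 0) := by
    intro i
    rcases lt_trichotomy (φ (V i)) 0 with h | h | h
    · filter_upwards [ev_neg (ψ (V i)) h, ev_neg (-(ψ (V i))) h] with ε h1 h2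
      exact ⟨fun hh => absurd hh (not_lt.mpr h.le), fun _ => ⟨h1, h2⟩⟩
    · filter_upwards with ε
      constructor
      · intro hh; rw [h] at hh; exact absurd hh (lt_irrefl 0)
      · intro hh; rw [h] at hh; exact absurd hh (lt_irrefl 0)
    · filter_upwards [ev_pos (ψ (V i)) h, ev_pos (-(ψ (V i))) h] with ε h1 h2
      exact ⟨fun _ => ⟨h1, h2⟩, fun hh => absurd hh (not_lt.mpr h.le)⟩
  have hall : ∀ᶠ ε in 𝓝[>] (0:ℝ), ∀ i : ι,
      (0 < φ (V i) → 0 < φ (V i) + ε * ψ (V i) ∧ 0 < φ (V i) + ε * (-ψ (V i))) ∧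
      (φ (V i) < 0 → φ (V i) + ε * ψ (V i) < 0 ∧ φ (V i) + ε * (-ψ (V i)) < 0) :=
    Filter.eventually_all.mpr hev1
  have hne1 : ∀ᶠ ε in 𝓝[>] (0:ℝ), φ + ε • ψ ≠ 0 := ev_addsmul_ne_zero φ ψ hψ0
  have hne2 : ∀ᶠ ε in 𝓝[>] (0:ℝ), φ + ε • (-ψ) ≠ 0 :=
    ev_addsmul_ne_zero φ (-ψ) (neg_ne_zero.mpr hψ0)
  obtain ⟨ε, hsign, hn1, hn2, hpos⟩ :=
    (hall.and (hne1.and (hne2.and eventually_mem_nhdsWithin))).exists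
  have hεpos : (0:ℝ) < ε := hpos
  have happ1 : ∀ i, (φ + ε • ψ) (V i) = φ (V i) + ε * ψ (V i) := by
    intro i; simp [LinearMap.add_apply, LinearMap.smul_apply, smul_eq_mul]
  have happ2 : ∀ i, (φ + ε • (-ψ)) (V i) = φ (V i) + ε * (-(ψ (V i))) := by
    intro i; simp [LinearMap.add_apply, LinearMap.smul_apply, smul_eq_mul]
  classical
  set P := Finset.univ.filter fun i => 0 < φ (V i) with hP
  set A := Finset.univ.filter fun i => (V i ≠ 0 ∧ φ (V i) = 0) ∧ 0 < ψ (V i) with hA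
  set B := Finset.univ.filter fun i => (V i ≠ 0 ∧ φ (V i) = 0) ∧ ψ (V i) < 0 with hB
  have hsub1 : P ⊆ Finset.univ.filter fun i => 0 < (φ + ε • ψ) (V i) := by
    intro i hi
    simp only [hP, Finset.mem_filter, Finset.mem_univ, true_and] at hi ⊢
    rw [happ1 i]
    exact ((hsign i).1 hi).1
  have hsub2 : P ⊆ Finset.univ.filter fun i => 0 < (φ + ε • (-ψ)) (V i) := by
    intro i hi
    simp only [hP, Finset.mem_filter, Finset.mem_univ, true_and] at hi ⊢
    rw [happ2 i]
    exact ((hsign i).1 hi).2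
  have hUA : P ∪ A ⊆ Finset.univ.filter fun i => 0 < (φ + ε • ψ) (V i) := by
    intro i hi
    rcases Finset.mem_union.mp hi with hi | hi
    · exact hsub1 hi
    · simp only [hA, Finset.mem_filter, Finset.mem_univ, true_and] at hi
      simp only [Finset.mem_filter, Finset.mem_univ, true_and]
      rw [happ1 i, hi.1.2, zero_add]
      exact mul_pos hεpos hi.2
  have hUB : P ∪ B ⊆ Finset.univ.filter fun i => 0 < (φ + ε • (-ψ)) (V i) := by
    intro i hi
    rcases Finset.mem_union.mp hi with hi | hi
    · exact hsub2 hi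
    · simp only [hB, Finset.mem_filter, Finset.mem_univ, true_and] at hi
      simp only [Finset.mem_filter, Finset.mem_univ, true_and]
      rw [happ2 i, hi.1.2, zero_add]
      exact mul_pos hεpos (by linarith [hi.2])
  have hdA : Disjoint P A := by
    rw [Finset.disjoint_left]
    intro i hi hj
    simp only [hP, Finset.mem_filter, Finset.mem_univ, true_and] at hi
    simp only [hA, Finset.mem_filter, Finset.mem_univ, true_and] at hj
    rw [hj.1.2] at hi
    exact lt_irrefl 0 hi
  have hdB : Disjoint P B := by
    rw [Finset.disjoint_left]
    intro i hi hj
    simp only [hP, Finset.mem_filter, Finset.mem_univ, true_and] at hi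
    simp only [hB, Finset.mem_filter, Finset.mem_univ, true_and] at hj
    rw [hj.1.2] at hi
    exact lt_irrefl 0 hi
  have hcard1 : posCount φ V + A.card ≤ posCount (φ + ε • ψ) V := by
    have := Finset.card_le_card hUA
    rwa [Finset.card_union_of_disjoint hdA] at this
  have hcard2 : posCount φ V + B.card ≤ posCount (φ + ε • (-ψ)) V := by
    have := Finset.card_le_card hUB
    rwa [Finset.card_union_of_disjoint hdB] at this
  have hAB : A.card + B.card = ezc φ V := by
    have hun : A ∪ B = Finset.univ.filter fun i => V i ≠ 0 ∧ φ (V i) = 0 := by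
      ext i
      simp only [hA, hB, Finset.mem_union, Finset.mem_filter, Finset.mem_univ, true_and]
      constructor
      · rintro (⟨h, _⟩ | ⟨h, _⟩) <;> exact h
      · intro h
        rcases lt_trichotomy (ψ (V i)) 0 with hs | hs | hs
        · exact Or.inr ⟨h, hs⟩
        · exact absurd hs (hψ i h.1)
        · exact Or.inl ⟨h, hs⟩
    have hd : Disjoint A B := by
      rw [Finset.disjoint_left]
      intro i hi hj
      simp only [hA, Finset.mem_filter, Finset.mem_univ, true_and] at hi
      simp only [hB, Finset.mem_filter, Finset.mem_univ, true_and] at hj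
      exact lt_irrefl 0 (hi.2.trans hj.2)
    rw [← Finset.card_union_of_disjoint hd, hun]; rfl
  refine ⟨φ + ε • ψ, φ + ε • (-ψ), hn1, hn2, ?_, ?_, ?_⟩
  · omega
  · exact Finset.card_le_card hsub1
  · have : (Finset.univ.filter fun i => (φ + ε • ψ) (V i) = 0)
        = Finset.univ.filter fun i => V i = 0 := by
      ext i
      simp only [Finset.mem_filter, Finset.mem_univ, true_and]
      constructor
      · intro h
        by_contra hvi
        rcases lt_trichotomy (φ (V i)) 0 with hs | hs | hs
        · have := ((hsign i).2 hs).1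
          rw [happ1 i] at h
          exact absurd h (ne_of_lt this)
        · rw [happ1 i, hs, zero_add] at h
          exact (mul_ne_zero (ne_of_gt hεpos) (hψ i hvi)) h
        · have := ((hsign i).1 hs).1
          rw [happ1 i] at h
          exact absurd h (ne_of_gt this)
      · intro h
        rw [h, map_zero]
    rw [zeroCount, this]; rfl

lemma posSet_nonempty [Nontrivial E] (V : ι → E) : (posSet V).Nonempty := by
  obtain ⟨v, hv⟩ := exists_ne (0 : E)
  obtain ⟨φ, hφ⟩ := exists_separating hv
  exact ⟨posCount φ V, φ, fun h => hφ (by simp [h]), rfl⟩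

lemma posSet_bdd (V : ι → E) : BddAbove (posSet V) := by
  refine ⟨Fintype.card ι, ?_⟩
  rintro k ⟨φ, _, rfl⟩
  exact posCount_le φ V

lemma Mx_mem [Nontrivial E] (V : ι → E) : Mx V ∈ posSet V :=
  Nat.sSup_mem (posSet_nonempty V) (posSet_bdd V)

lemma le_Mx {V : ι → E} {k : ℕ} (h : k ∈ posSet V) : k ≤ Mx V :=
  le_csSup (posSet_bdd V) h

lemma Mx_le [Nontrivial E] (V : ι → E) : Mx V ≤ Fintype.card ι := by
  obtain ⟨φ, _, h⟩ := Mx_mem V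
  rw [← h]; exact posCount_le φ V

lemma codeg_eq [Nontrivial E] (V : ι → E) :
    codegStar V + Mx V = Fintype.card ι := by
  have hnt : Nontrivial E := inferInstance
  rw [codegStar, if_pos hnt]
  have hset : {k | ∃ φ : E →ₗ[ℝ] ℝ, φ ≠ 0 ∧ nonposCount φ V = k}
      = (fun k => Fintype.card ι - k) '' posSet V := by
    ext k
    constructor
    · rintro ⟨φ, hφ, rfl⟩
      refine ⟨posCount φ V, ⟨φ, hφ, rfl⟩, ?_⟩
      show Fintype.card ι - posCount φ V = nonposCount φ V
      have := pos_add_nonpos φ V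
      omega
    · rintro ⟨m, ⟨φ, hφ, rfl⟩, rfl⟩
      refine ⟨φ, hφ, ?_⟩
      show nonposCount φ V = Fintype.card ι - posCount φ V
      have := pos_add_nonpos φ V
      omega
  rw [hset]
  have h1 : Fintype.card ι - Mx V ∈ (fun k => Fintype.card ι - k) '' posSet V :=
    ⟨Mx V, Mx_mem V, rfl⟩
  have h2 : ∀ j ∈ (fun k => Fintype.card ι - k) '' posSet V, Fintype.card ι - Mx V ≤ j := by
    rintro j ⟨m, hm, rfl⟩
    have := le_Mx hm
    show Fintype.card ι - Mx V ≤ Fintype.card ι - m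
    omega
  have h3 : sInf ((fun k => Fintype.card ι - k) '' posSet V) = Fintype.card ι - Mx V :=
    le_antisymm (Nat.sInf_le h1) (le_csInf ⟨_, h1⟩ h2)
  rw [h3]
  have := Mx_le V
  omega

lemma deg_eq (V : ι → E) : degStar V = (Mx V : ℤ) - confRank V := rfl

lemma disc_eq [Nontrivial E] (V : ι → E) :
    (disc V : ℤ) = 2 * Mx V + zc V - Fintype.card ι := by
  classical
  set n := Fintype.card ι with hn
  set D := {k | ∃ φ : E →ₗ[ℝ] ℝ, k = ((posCount φ V : ℤ) - (negCount φ V : ℤ)).natAbs} with hD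
  have hDne : D.Nonempty := ⟨_, 0, rfl⟩
  have hDbdd : ∀ k ∈ D, k ≤ n := by
    rintro k ⟨φ, rfl⟩
    have h1 := posCount_le φ V
    have h2 := negCount_le φ V
    omega
  have hDb : BddAbove D := ⟨n, fun k hk => hDbdd k hk⟩
  have key : ∀ φ : E →ₗ[ℝ] ℝ, (posCount φ V : ℤ) - negCount φ V ≤ 2 * Mx V + zc V - n := by
    intro φ
    obtain ⟨φp, φm, hp0, hm0, hsum, _, _⟩ := pert V φ
    have h1 := count_partition φ V
    have h2 := zeroCount_eq φ V
    have hp : posCount φp V ≤ Mx V := le_Mx ⟨φp, hp0, rfl⟩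
    have hm : posCount φm V ≤ Mx V := le_Mx ⟨φm, hm0, rfl⟩
    omega
  have hdisc : disc V = sSup D := rfl
  have upper : (disc V : ℤ) ≤ 2 * Mx V + zc V - n := by
    have hmem : disc V ∈ D := by
      rw [hdisc]; exact Nat.sSup_mem hDne hDb
    obtain ⟨φ, hφ⟩ := hmem
    have k1 := key φ
    have k2 := key (-φ)
    have e1 : posCount (-φ) V = negCount φ V := by
      unfold posCount negCount
      congr 1
      ext i
      simp [LinearMap.neg_apply, neg_pos]
    have e2 : negCount (-φ) V = posCount φ V := by
      unfold posCount negCount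
      congr 1
      ext i
      simp [LinearMap.neg_apply, neg_lt, neg_zero]
    rw [e1, e2] at k2
    rw [hφ]
    omega
  have lower : 2 * Mx V + zc V - n ≤ (disc V : ℤ) := by
    obtain ⟨φ₀, hφ₀0, hφ₀⟩ := Mx_mem V
    obtain ⟨φp, φm, hp0, hm0, _, hple, hzero⟩ := pert V φ₀
    have hmem : ((posCount φp V : ℤ) - (negCount φp V : ℤ)).natAbs ∈ D := ⟨φp, rfl⟩
    have hle : ((posCount φp V : ℤ) - (negCount φp V : ℤ)).natAbs ≤ disc V := by
      rw [hdisc]; exact le_csSup hDb hmem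
    have h1 := count_partition φp V
    have hp : Mx V ≤ posCount φp V := by rw [← hφ₀]; exact hple
    omega
  omega

/-- Identity 1: deg* + codeg* = card - rank. -/
lemma I1 (V : ι → E) :
    degStar V + codegStar V = (Fintype.card ι : ℤ) - confRank V := by
  rcases subsingleton_or_nontrivial E with h | h
  · have hset : {k | ∃ φ : E →ₗ[ℝ] ℝ, φ ≠ 0 ∧ posCount φ V = k} = ∅ := by
      ext k
      simp only [Set.mem_setOf_eq, Set.mem_empty_iff_false, iff_false, not_exists]
      intro φ ⟨hφ, _⟩
      exact hφ (Subsingleton.elim φ 0)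
    have hrank : confRank V = 0 := by
      rw [confRank]
      exact Module.finrank_zero_of_subsingleton
    rw [degStar, codegStar, if_neg (not_nontrivial E), hset, csSup_empty, hrank]
    simp
  · have h1 := codeg_eq V
    rw [deg_eq]
    omega

/-- Identity 2: disc + 2 codeg* = card + number of zero vectors. -/
lemma I2 (V : ι → E) :
    (disc V : ℤ) + 2 * codegStar V = Fintype.card ι + zc V := by
  rcases subsingleton_or_nontrivial E with h | h
  · have hdisc : disc V = 0 := by
      have hset : {k | ∃ φ : E →ₗ[ℝ] ℝ, k = ((posCount φ V : ℤ) - (negCount φ V : ℤ)).natAbs}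
          = {0} := by
        ext k
        simp only [Set.mem_setOf_eq, Set.mem_singleton_iff]
        constructor
        · rintro ⟨φ, rfl⟩
          have hφ : φ = 0 := Subsingleton.elim φ 0
          simp [hφ, posCount, negCount]
        · rintro rfl
          exact ⟨0, by simp [posCount, negCount]⟩
      rw [disc, hset, csSup_singleton]
    have hz : zc V = Fintype.card ι := by
      rw [zc]
      have : (Finset.univ.filter fun i => V i = 0) = Finset.univ := by
        ext i; simp [Subsingleton.elim (V i) 0]
      rw [this, Finset.card_univ]
    rw [hdisc, codegStar, if_neg (not_nontrivial E), hz]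
    ring
  · have h1 := codeg_eq V
    have h2 := disc_eq V
    have h3 := Mx_le V
    omega

lemma cardsum (S : Finset ι) :
    Fintype.card {i // i ∈ S} + Fintype.card {i // i ∉ S} = Fintype.card ι := by
  classical
  rw [← Fintype.card_sum]
  exact Fintype.card_congr (Equiv.sumCompl fun i => i ∈ S)

lemma range_subfam (V : ι → E) (S : Finset ι) :
    Set.range (subfam V S) = V '' (S : Set ι) := by
  ext x
  constructor
  · rintro ⟨⟨i, hi⟩, rfl⟩
    exact ⟨i, hi, rfl⟩
  · rintro ⟨i, hi, rfl⟩
    exact ⟨⟨i, hi⟩, rfl⟩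

lemma rank_add (V : ι → E) (S : Finset ι) :
    confRank V = confRank (subfam V S) + confRank (contract V S) := by
  classical
  set Wsp := Submodule.span ℝ (V '' (S : Set ι)) with hWsp
  set U := Submodule.span ℝ (Set.range V) with hU
  set T := Submodule.span ℝ (V '' {i : ι | i ∉ S}) with hT
  have hWU : Wsp ≤ U := Submodule.span_mono (by rintro x ⟨i, _, rfl⟩; exact ⟨i, rfl⟩)
  -- range of the contraction
  have hrange_con : Set.range (contract V S) = Wsp.mkQ '' (V '' {i : ι | i ∉ S}) := by
    ext x
    constructor
    · rintro ⟨⟨i, hi⟩, rfl⟩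
      exact ⟨V i, ⟨i, hi, rfl⟩, rfl⟩
    · rintro ⟨y, ⟨i, hi, rfl⟩, rfl⟩
      exact ⟨⟨i, hi⟩, rfl⟩
  have hspan_con : Submodule.span ℝ (Set.range (contract V S)) = Submodule.map Wsp.mkQ T := by
    rw [hrange_con, Submodule.span_image]
  have hUsup : U = Wsp ⊔ T := by
    have huniv : ((S : Set ι) ∪ {i : ι | i ∉ S}) = Set.univ := by
      ext i; simp [Classical.em]
    rw [hU, hWsp, hT, ← Submodule.span_union, ← Set.image_union, huniv, Set.image_univ]
  have hmapW : Submodule.map Wsp.mkQ Wsp = ⊥ := by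
    rw [eq_bot_iff]
    rintro x ⟨y, hy, rfl⟩
    simpa using (Submodule.Quotient.mk_eq_zero Wsp).mpr hy
  have hmapU : Submodule.map Wsp.mkQ U = Submodule.map Wsp.mkQ T := by
    rw [hUsup, Submodule.map_sup, hmapW, bot_sup_eq]
  -- rank-nullity via f = mkQ ∘ subtype
  set f : U →ₗ[ℝ] E ⧸ Wsp := Wsp.mkQ.comp U.subtype with hf
  have hker : LinearMap.ker f = Submodule.comap U.subtype Wsp := by
    rw [hf, LinearMap.ker_comp, Submodule.ker_mkQ]
  have hrange : LinearMap.range f = Submodule.map Wsp.mkQ U := by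
    rw [hf, LinearMap.range_comp, Submodule.range_subtype]
  have hrn := LinearMap.finrank_range_add_finrank_ker f
  rw [hker, hrange, (Submodule.comapSubtypeEquivOfLe hWU).finrank_eq] at hrn
  have h1 : confRank V = Module.finrank ℝ U := rfl
  have h2 : confRank (subfam V S) = Module.finrank ℝ Wsp := by
    rw [confRank, range_subfam]
  have h3 : confRank (contract V S) = Module.finrank ℝ (Submodule.map Wsp.mkQ U) := by
    rw [confRank, hspan_con, hmapU]
  rw [h1, h2, h3]
  omega

lemma zc_add (V : ι → E) (S : Finset ι) (hS : LinClosed V S) :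
    zc V = zc (subfam V S) + zc (contract V S) := by
  classical
  have hcon : zc (contract V S) = 0 := by
    rw [zc, Finset.card_eq_zero]
    ext i
    simp only [Finset.mem_filter, Finset.mem_univ, true_and, Finset.notMem_empty, iff_false]
    intro h
    have : V i.1 ∈ Submodule.span ℝ (V '' (S : Set ι)) :=
      (Submodule.Quotient.mk_eq_zero _).mp h
    exact i.2 (hS i.1 this)
  have hzero_in : ∀ i, V i = 0 → i ∈ S := by
    intro i hi
    exact hS i (hi ▸ Submodule.zero_mem _)
  have hsub : zc (subfam V S) = zc V := by
    rw [zc, zc]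
    apply Finset.card_bij (fun (a : {i // i ∈ S}) _ => a.1)
    · intro a ha
      simp only [Finset.mem_filter, Finset.mem_univ, true_and] at ha ⊢
      exact ha
    · intro a _ b _ h
      exact Subtype.ext h
    · intro b hb
      simp only [Finset.mem_filter, Finset.mem_univ, true_and] at hb
      exact ⟨⟨b, hzero_in b hb⟩, by simp only [Finset.mem_filter, Finset.mem_univ, true_and]; exact hb, rfl⟩
  omega


end FinDim

end Stmt8


/-- for a linearly closed subfamily `W = V|S`, the equalities
`disc V = disc W + disc (V/W)`, `deg* V = deg* W + deg* (V/W)` and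
`codeg* V = codeg* W + codeg* (V/W)` are equivalent. -/
theorem disc_degStar_codegStar_additivity_equiv {E : Type*} [AddCommGroup E] [Module ℝ E]
    [FiniteDimensional ℝ E] (hE : 1 ≤ Module.finrank ℝ E)
    {ι : Type*} [Fintype ι] (V : ι → E) (S : Finset ι) (hS : LinClosed V S) :
    ((disc V = disc (subfam V S) + disc (contract V S)) ↔
      (degStar V = degStar (subfam V S) + degStar (contract V S))) ∧
    ((degStar V = degStar (subfam V S) + degStar (contract V S)) ↔
      (codegStar V = codegStar (subfam V S) + codegStar (contract V S))) := by
  have hnt : Nontrivial E := Module.nontrivial_of_finrank_pos (lt_of_lt_of_le Nat.zero_lt_one hE)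
  have i1V := Stmt8.I1 V
  have i1W := Stmt8.I1 (subfam V S)
  have i1Q := Stmt8.I1 (contract V S)
  have i2V := Stmt8.I2 V
  have i2W := Stmt8.I2 (subfam V S)
  have i2Q := Stmt8.I2 (contract V S)
  have hcard := Stmt8.cardsum (ι := ι) S
  have hrank := Stmt8.rank_add V S
  have hz := Stmt8.zc_add V S hS
  constructor <;> constructor <;> intro h <;> omega

end
end

section
/- Let V be a vector configuration of rank r in a finite-dimensional real vector space E with dim E ≥ 1. For every integer s with 1 ≤ s ≤ r − 1 there exists a subfamily W of V of rank s such that disc(V) = disc(W) + disc(V/W). -/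
open scoped Classical

noncomputable section

variable {E : Type*} [AddCommGroup E] [Module ℝ E] {ι : Type*} [Fintype ι]

namespace ExtremalAux

open Finset Submodule Module

lemma posCount_neg (φ : E →ₗ[ℝ] ℝ) (V : ι → E) : posCount (-φ) V = negCount φ V := by
  unfold posCount negCount
  congr 1
  apply Finset.filter_congr
  intro i _
  simp [neg_pos]

lemma negCount_neg (φ : E →ₗ[ℝ] ℝ) (V : ι → E) : negCount (-φ) V = posCount φ V := by
  have := posCount_neg (-φ) V
  simpa using this.symm

lemma discSet_nonempty (V : ι → E) :
    {k | ∃ φ : E →ₗ[ℝ] ℝ, k = ((posCount φ V : ℤ) - (negCount φ V : ℤ)).natAbs}.Nonempty :=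
  ⟨_, 0, rfl⟩

lemma discSet_bdd (V : ι → E) :
    BddAbove {k | ∃ φ : E →ₗ[ℝ] ℝ, k = ((posCount φ V : ℤ) - (negCount φ V : ℤ)).natAbs} := by
  refine ⟨2 * Fintype.card ι, ?_⟩
  rintro k ⟨φ, rfl⟩
  have h1 : posCount φ V ≤ Fintype.card ι := Finset.card_filter_le _ _
  have h2 : negCount φ V ≤ Fintype.card ι := Finset.card_filter_le _ _
  calc ((posCount φ V : ℤ) - (negCount φ V : ℤ)).natAbs
      ≤ (posCount φ V : ℤ).natAbs + (negCount φ V : ℤ).natAbs := Int.natAbs_sub_le _ _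
    _ = posCount φ V + negCount φ V := by simp
    _ ≤ 2 * Fintype.card ι := by omega

lemma le_disc (V : ι → E) (φ : E →ₗ[ℝ] ℝ) :
    ((posCount φ V : ℤ) - (negCount φ V : ℤ)).natAbs ≤ disc V :=
  le_csSup (discSet_bdd V) ⟨φ, rfl⟩

lemma le_disc' (V : ι → E) (φ : E →ₗ[ℝ] ℝ) :
    (posCount φ V : ℤ) - (negCount φ V : ℤ) ≤ (disc V : ℤ) := by
  have := le_disc V φ
  have h2 := Int.le_natAbs (a := (posCount φ V : ℤ) - (negCount φ V : ℤ))
  omega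

lemma exists_maximizer (V : ι → E) :
    ∃ φ : E →ₗ[ℝ] ℝ, (posCount φ V : ℤ) - (negCount φ V : ℤ) = disc V := by
  obtain ⟨φ, hφ⟩ := Nat.sSup_mem (discSet_nonempty V) (discSet_bdd V)
  have hd : disc V = ((posCount φ V : ℤ) - (negCount φ V : ℤ)).natAbs := hφ
  rcases le_or_gt (negCount φ V : ℤ) (posCount φ V : ℤ) with h1 | h1
  · exact ⟨φ, by omega⟩
  · refine ⟨-φ, ?_⟩
    rw [posCount_neg, negCount_neg]
    omega

lemma card_subtype_filter (q p : ι → Prop) [Fintype {i // q i}]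
    [DecidablePred (fun i : {i // q i} => p i.1)] [DecidablePred (fun i => q i ∧ p i)] :
    ((Finset.univ : Finset {i // q i}).filter fun i => p i.1).card
      = (Finset.univ.filter fun i => q i ∧ p i).card := by
  apply Finset.card_bij (fun a _ => a.1)
  · intro a ha
    simp only [Finset.mem_filter, Finset.mem_univ, true_and] at ha ⊢
    exact ⟨a.2, ha⟩
  · intro a _ b _ h; exact Subtype.ext h
  · intro b hb
    simp only [Finset.mem_filter, Finset.mem_univ, true_and] at hb
    exact ⟨⟨b, hb.1⟩, by simp [hb.2], rfl⟩


lemma card_filter_congr {α : Type*} [Fintype α] {p q : α → Prop}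
    [DecidablePred p] [DecidablePred q] (h : ∀ i, p i ↔ q i) :
    (Finset.univ.filter p).card = (Finset.univ.filter q).card := by
  congr 1
  exact Finset.filter_congr fun i _ => h i

lemma posCount_add_small (φ ψ : E →ₗ[ℝ] ℝ) (W : ι → E)
    (h : ∀ i, φ (W i) ≠ 0 → |ψ (W i)| < |φ (W i)|) :
    posCount (φ + ψ) W
      = posCount φ W + (Finset.univ.filter fun i => φ (W i) = 0 ∧ 0 < ψ (W i)).card := by
  unfold posCount
  rw [← Finset.card_union_of_disjoint ?hd]
  case hd =>
    rw [Finset.disjoint_left]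
    intro a ha hb
    simp only [Finset.mem_filter, Finset.mem_univ, true_and] at ha hb
    exact absurd hb.1 ha.ne'
  congr 1
  ext i
  simp only [Finset.mem_union, Finset.mem_filter, Finset.mem_univ, true_and,
    LinearMap.add_apply]
  constructor
  · intro hpos
    rcases lt_trichotomy (φ (W i)) 0 with hlt | heq | hgt
    · exfalso
      have h1 := (abs_lt.1 (h i hlt.ne)).2
      have h2 : |φ (W i)| = -(φ (W i)) := abs_of_neg hlt
      linarith
    · right
      refine ⟨heq, ?_⟩
      rw [heq] at hpos; linarith
    · left; exact hgt
  · rintro (hgt | ⟨heq, hpos⟩)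
    · have h1 := (abs_lt.1 (h i hgt.ne')).1
      have h2 : |φ (W i)| = φ (W i) := abs_of_pos hgt
      linarith
    · rw [heq]; simpa

lemma negCount_add_small (φ ψ : E →ₗ[ℝ] ℝ) (W : ι → E)
    (h : ∀ i, φ (W i) ≠ 0 → |ψ (W i)| < |φ (W i)|) :
    negCount (φ + ψ) W
      = negCount φ W + (Finset.univ.filter fun i => φ (W i) = 0 ∧ ψ (W i) < 0).card := by
  have h' : ∀ i, (-φ) (W i) ≠ 0 → |(-ψ) (W i)| < |(-φ) (W i)| := by
    intro i hi
    simp only [LinearMap.neg_apply, abs_neg] at hi ⊢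
    exact h i (by simpa using hi)
  have := posCount_add_small (-φ) (-ψ) W h'
  rw [show -φ + -ψ = -(φ + ψ) from (neg_add φ ψ).symm, posCount_neg, posCount_neg] at this
  rw [this]
  congr 1
  apply card_filter_congr
  intro i
  simp [neg_pos, neg_eq_zero]

lemma exists_pos_forall_lt {α : Type*} (s : Finset α) (f g : α → ℝ)
    (hf : ∀ i ∈ s, 0 < f i) :
    ∃ ε : ℝ, 0 < ε ∧ ∀ i ∈ s, ε * |g i| < f i := by
  rcases s.eq_empty_or_nonempty with rfl | hs
  · exact ⟨1, one_pos, by simp⟩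
  · refine ⟨s.inf' hs (fun i => f i / (|g i| + 1)), ?_, ?_⟩
    · rw [Finset.lt_inf'_iff]
      intro i hi
      exact div_pos (hf i hi) (by positivity)
    · intro i hi
      have h1 : s.inf' hs (fun i => f i / (|g i| + 1)) ≤ f i / (|g i| + 1) :=
        Finset.inf'_le _ hi
      have h2 : 0 < s.inf' hs (fun i => f i / (|g i| + 1)) := by
        rw [Finset.lt_inf'_iff]
        intro j hj
        exact div_pos (hf j hj) (by positivity)
      have h3 : (0:ℝ) < |g i| + 1 := by positivity
      calc s.inf' hs (fun i => f i / (|g i| + 1)) * |g i|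
          < s.inf' hs (fun i => f i / (|g i| + 1)) * (|g i| + 1) := by
            apply mul_lt_mul_of_pos_left (by linarith) h2
        _ ≤ (f i / (|g i| + 1)) * (|g i| + 1) := by
            apply mul_le_mul_of_nonneg_right h1 (by positivity)
        _ = f i := div_mul_cancel₀ _ h3.ne'

lemma exists_pos_forall_big {α : Type*} (s : Finset α) (f g : α → ℝ)
    (hf : ∀ i ∈ s, f i ≠ 0) :
    ∃ M : ℝ, 0 < M ∧ ∀ i ∈ s, |g i| < M * |f i| := by
  obtain ⟨ε, hε, h⟩ := exists_pos_forall_lt s (fun i => |f i|) g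
    (fun i hi => abs_pos.2 (hf i hi))
  refine ⟨1/ε, by positivity, fun i hi => ?_⟩
  have := h i hi
  rw [div_mul_eq_mul_div, lt_div_iff₀ hε]
  linarith [this]

lemma balanced_zero_set (W : ι → E) (ψ : E →ₗ[ℝ] ℝ)
    (hmax : (posCount ψ W : ℤ) - (negCount ψ W : ℤ) = disc W) (χ : E →ₗ[ℝ] ℝ) :
    (Finset.univ.filter fun i => ψ (W i) = 0 ∧ 0 < χ (W i)).card
      = (Finset.univ.filter fun i => ψ (W i) = 0 ∧ χ (W i) < 0).card := by
  have key : ∀ χ' : E →ₗ[ℝ] ℝ,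
      ((Finset.univ.filter fun i => ψ (W i) = 0 ∧ 0 < χ' (W i)).card : ℤ)
        ≤ (Finset.univ.filter fun i => ψ (W i) = 0 ∧ χ' (W i) < 0).card := by
    intro χ'
    obtain ⟨ε, hε, hsmall⟩ := exists_pos_forall_lt
      (Finset.univ.filter fun i => ψ (W i) ≠ 0)
      (fun i => |ψ (W i)|) (fun i => χ' (W i))
      (fun i hi => abs_pos.2 (by simpa using (Finset.mem_filter.1 hi).2))
    have hs : ∀ i, ψ (W i) ≠ 0 → |(ε • χ') (W i)| < |ψ (W i)| := by
      intro i hi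
      have := hsmall i (by simpa using hi)
      simpa [abs_mul, abs_of_pos hε] using this
    have hp := posCount_add_small ψ (ε • χ') W hs
    have hn := negCount_add_small ψ (ε • χ') W hs
    have hle := le_disc' W (ψ + ε • χ')
    rw [hp, hn, ← hmax] at hle
    have e1 : (Finset.univ.filter fun i => ψ (W i) = 0 ∧ 0 < (ε • χ') (W i)).card
        = (Finset.univ.filter fun i => ψ (W i) = 0 ∧ 0 < χ' (W i)).card := by
      apply card_filter_congr; intro i
      simp only [LinearMap.smul_apply, smul_eq_mul]
      constructor
      · rintro ⟨h1, h2⟩; exact ⟨h1, by nlinarith⟩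
      · rintro ⟨h1, h2⟩; exact ⟨h1, by nlinarith⟩
    have e2 : (Finset.univ.filter fun i => ψ (W i) = 0 ∧ (ε • χ') (W i) < 0).card
        = (Finset.univ.filter fun i => ψ (W i) = 0 ∧ χ' (W i) < 0).card := by
      apply card_filter_congr; intro i
      simp only [LinearMap.smul_apply, smul_eq_mul]
      constructor
      · rintro ⟨h1, h2⟩; exact ⟨h1, by nlinarith⟩
      · rintro ⟨h1, h2⟩; exact ⟨h1, by nlinarith⟩
    rw [e1, e2] at hle
    omega
  have h1 := key χ
  have h2 := key (-χ)
  have e3 : (Finset.univ.filter fun i => ψ (W i) = 0 ∧ 0 < (-χ) (W i)).card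
      = (Finset.univ.filter fun i => ψ (W i) = 0 ∧ χ (W i) < 0).card := by
    apply card_filter_congr; intro i; simp [neg_pos]
  have e4 : (Finset.univ.filter fun i => ψ (W i) = 0 ∧ (-χ) (W i) < 0).card
      = (Finset.univ.filter fun i => ψ (W i) = 0 ∧ 0 < χ (W i)).card := by
    apply card_filter_congr; intro i; simp [neg_lt_zero]
  rw [e3] at h2
  rw [e4] at h2
  omega




lemma exists_dual_ne_zero {F : Type*} [AddCommGroup F] [Module ℝ F] [FiniteDimensional ℝ F]
    {κ : Type*} (s : Finset κ) (W : κ → F) (hW : ∀ i ∈ s, W i ≠ 0) :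
    ∃ ζ : F →ₗ[ℝ] ℝ, ∀ i ∈ s, ζ (W i) ≠ 0 := by
  classical
  induction s using Finset.induction_on with
  | empty => exact ⟨0, by simp⟩
  | @insert a s ha ih =>
    obtain ⟨ζ, hζ⟩ := ih (fun i hi => hW i (Finset.mem_insert_of_mem hi))
    have hWa : W a ≠ 0 := hW a (Finset.mem_insert_self a s)
    obtain ⟨η, hη⟩ : ∃ η : F →ₗ[ℝ] ℝ, η (W a) ≠ 0 := by
      by_contra hcon
      push_neg at hcon
      exact hWa ((Module.forall_dual_apply_eq_zero_iff ℝ (W a)).1 hcon)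
    set bad : Finset ℝ := insert (-(ζ (W a)) / η (W a))
      (s.image fun i => -(ζ (W i)) / η (W i)) with hbad
    obtain ⟨c, hc⟩ := Infinite.exists_notMem_finset bad
    refine ⟨ζ + c • η, ?_⟩
    intro i hi
    rcases Finset.mem_insert.1 hi with rfl | hi'
    · intro hzero
      apply hc
      simp only [LinearMap.add_apply, LinearMap.smul_apply, smul_eq_mul] at hzero
      have : c = -(ζ (W i)) / η (W i) := by
        field_simp
        linarith
      rw [hbad]
      exact Finset.mem_insert.2 (Or.inl this)
    · intro hzero
      simp only [LinearMap.add_apply, LinearMap.smul_apply, smul_eq_mul] at hzero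
      by_cases hηi : η (W i) = 0
      · rw [hηi] at hzero
        exact hζ i hi' (by linarith)
      · apply hc
        have : c = -(ζ (W i)) / η (W i) := by
          field_simp
          linarith
        rw [hbad]
        exact Finset.mem_insert.2 (Or.inr (Finset.mem_image.2 ⟨i, hi', this.symm⟩))

lemma posCount_subfam (φ : E →ₗ[ℝ] ℝ) (V : ι → E) (S : Finset ι) :
    posCount φ (subfam V S) = (Finset.univ.filter fun i => i ∈ S ∧ 0 < φ (V i)).card := by
  unfold posCount subfam
  exact card_subtype_filter (fun i => i ∈ S) (fun i => 0 < φ (V i))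

lemma negCount_subfam (φ : E →ₗ[ℝ] ℝ) (V : ι → E) (S : Finset ι) :
    negCount φ (subfam V S) = (Finset.univ.filter fun i => i ∈ S ∧ φ (V i) < 0).card := by
  unfold negCount subfam
  exact card_subtype_filter (fun i => i ∈ S) (fun i => φ (V i) < 0)

lemma posCount_contract (V : ι → E) (S : Finset ι)
    (ψ : (E ⧸ Submodule.span ℝ (V '' (S : Set ι))) →ₗ[ℝ] ℝ) :
    posCount ψ (contract V S)
      = (Finset.univ.filter fun i => i ∉ S ∧ 0 < ψ (Submodule.Quotient.mk (V i))).card := by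
  unfold posCount contract
  exact card_subtype_filter (fun i => i ∉ S) (fun i => 0 < ψ (Submodule.Quotient.mk (V i)))

lemma negCount_contract (V : ι → E) (S : Finset ι)
    (ψ : (E ⧸ Submodule.span ℝ (V '' (S : Set ι))) →ₗ[ℝ] ℝ) :
    negCount ψ (contract V S)
      = (Finset.univ.filter fun i => i ∉ S ∧ ψ (Submodule.Quotient.mk (V i)) < 0).card := by
  unfold negCount contract
  exact card_subtype_filter (fun i => i ∉ S) (fun i => ψ (Submodule.Quotient.mk (V i)) < 0)

lemma range_subfam (V : ι → E) (S : Finset ι) :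
    Set.range (subfam V S) = V '' (S : Set ι) := by
  ext x
  constructor
  · rintro ⟨⟨i, hi⟩, rfl⟩; exact ⟨i, hi, rfl⟩
  · rintro ⟨i, hi, rfl⟩; exact ⟨⟨i, hi⟩, rfl⟩

lemma confRank_subfam (V : ι → E) (S : Finset ι) :
    confRank (subfam V S) = Module.finrank ℝ (Submodule.span ℝ (V '' (S : Set ι))) := by
  unfold confRank
  rw [range_subfam]

lemma finrank_map_mkQ {E : Type*} [AddCommGroup E] [Module ℝ E] [FiniteDimensional ℝ E]
    (F W : Submodule ℝ E) (h : F ≤ W) :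
    Module.finrank ℝ (W.map F.mkQ) + Module.finrank ℝ F = Module.finrank ℝ W := by
  have key := LinearMap.finrank_range_add_finrank_ker (F.mkQ.comp W.subtype)
  have h1 : LinearMap.range (F.mkQ.comp W.subtype) = W.map F.mkQ := by
    rw [LinearMap.range_comp, Submodule.range_subtype]
  have h2 : LinearMap.ker (F.mkQ.comp W.subtype) = Submodule.comap W.subtype F := by
    rw [LinearMap.ker_comp, Submodule.ker_mkQ]
  rw [h1, h2] at key
  rwa [(Submodule.comapSubtypeEquivOfLe h).finrank_eq] at key

lemma span_range_contract (V : ι → E) (S : Finset ι) :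
    Submodule.span ℝ (Set.range (contract V S))
      = (Submodule.span ℝ (Set.range V)).map (Submodule.span ℝ (V '' (S : Set ι))).mkQ := by
  have h1 : Set.range (contract V S)
      = (Submodule.span ℝ (V '' (S : Set ι))).mkQ '' (V '' {i | i ∉ S}) := by
    ext x
    constructor
    · rintro ⟨⟨i, hi⟩, rfl⟩; exact ⟨V i, ⟨i, hi, rfl⟩, rfl⟩
    · rintro ⟨y, ⟨i, hi, rfl⟩, rfl⟩; exact ⟨⟨i, hi⟩, rfl⟩
  rw [h1, ← Submodule.map_span]
  have h2 : Submodule.span ℝ (V '' {i | i ∉ S}) ⊔ Submodule.span ℝ (V '' (S : Set ι))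
      = Submodule.span ℝ (Set.range V) := by
    rw [← Submodule.span_union, ← Set.image_union, ← Set.image_univ]
    have : {i | i ∉ S} ∪ (S : Set ι) = Set.univ := by
      ext i
      simp only [Set.mem_union, Set.mem_setOf_eq, Finset.mem_coe, Set.mem_univ, iff_true]
      exact (em (i ∈ S)).symm
    rw [this]
  rw [← h2, Submodule.map_sup, Submodule.mkQ_map_self, sup_bot_eq]

lemma confRank_contract [FiniteDimensional ℝ E] (V : ι → E) (S : Finset ι) :
    confRank (contract V S) + confRank (subfam V S) = confRank V := by
  rw [confRank_subfam]
  unfold confRank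
  rw [span_range_contract]
  exact finrank_map_mkQ _ _ (Submodule.span_mono (Set.image_subset_range V _))

lemma count_equiv {E F : Type*} [AddCommGroup E] [Module ℝ E] [AddCommGroup F] [Module ℝ F]
    {ι κ : Type*} [Fintype ι] [Fintype κ] (g : E ≃ₗ[ℝ] F) (e : ι ≃ κ)
    (V : ι → E) (W : κ → F) (h : ∀ i, W (e i) = g (V i)) (φ : F →ₗ[ℝ] ℝ) :
    posCount φ W = posCount (φ.comp (g : E →ₗ[ℝ] F)) V
      ∧ negCount φ W = negCount (φ.comp (g : E →ₗ[ℝ] F)) V := by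
  have hv : ∀ i, φ (W (e i)) = (φ.comp (g : E →ₗ[ℝ] F)) (V i) := by
    intro i
    rw [h i]
    simp
  constructor
  · unfold posCount
    apply Finset.card_bij (fun (a : κ) _ => e.symm a)
    · intro a ha
      simp only [Finset.mem_filter, Finset.mem_univ, true_and] at ha ⊢
      rw [← hv (e.symm a), e.apply_symm_apply]
      exact ha
    · intro a _ b _ hab; simpa using congrArg e hab
    · intro b hb
      simp only [Finset.mem_filter, Finset.mem_univ, true_and] at hb ⊢
      exact ⟨e b, by rw [hv b]; exact hb, by simp⟩
  · unfold negCount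
    apply Finset.card_bij (fun (a : κ) _ => e.symm a)
    · intro a ha
      simp only [Finset.mem_filter, Finset.mem_univ, true_and] at ha ⊢
      rw [← hv (e.symm a), e.apply_symm_apply]
      exact ha
    · intro a _ b _ hab; simpa using congrArg e hab
    · intro b hb
      simp only [Finset.mem_filter, Finset.mem_univ, true_and] at hb ⊢
      exact ⟨e b, by rw [hv b]; exact hb, by simp⟩

lemma disc_equiv {E F : Type*} [AddCommGroup E] [Module ℝ E] [AddCommGroup F] [Module ℝ F]
    {ι κ : Type*} [Fintype ι] [Fintype κ] (g : E ≃ₗ[ℝ] F) (e : ι ≃ κ)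
    (V : ι → E) (W : κ → F) (h : ∀ i, W (e i) = g (V i)) : disc W = disc V := by
  unfold disc
  congr 1
  ext k
  constructor
  · rintro ⟨φ, rfl⟩
    obtain ⟨h1, h2⟩ := count_equiv g e V W h φ
    exact ⟨φ.comp (g : E →ₗ[ℝ] F), by rw [h1, h2]⟩
  · rintro ⟨φ, rfl⟩
    refine ⟨φ.comp (g.symm : F →ₗ[ℝ] E), ?_⟩
    obtain ⟨h1, h2⟩ := count_equiv g e V W h (φ.comp (g.symm : F →ₗ[ℝ] E))
    have hg : (φ.comp (g.symm : F →ₗ[ℝ] E)).comp (g : E →ₗ[ℝ] F) = φ := by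
      apply LinearMap.ext; intro x; simp
    rw [h1, h2, hg]

lemma card_filter_split {α : Type*} [Fintype α] (p q : α → Prop)
    [DecidablePred p] [DecidablePred (fun i => p i ∧ q i)] [DecidablePred (fun i => p i ∧ ¬ q i)] :
    (Finset.univ.filter p).card
      = (Finset.univ.filter fun i => p i ∧ q i).card
        + (Finset.univ.filter fun i => p i ∧ ¬ q i).card := by
  classical
  rw [← Finset.card_union_of_disjoint ?hd]
  case hd =>
    rw [Finset.disjoint_left]
    intro a ha hb
    simp only [Finset.mem_filter, Finset.mem_univ, true_and] at ha hb
    exact hb.2 ha.2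
  congr 1
  ext i
  simp only [Finset.mem_union, Finset.mem_filter, Finset.mem_univ, true_and]
  by_cases h : q i <;> tauto

set_option maxHeartbeats 2000000 in
lemma superadd {E : Type*} [AddCommGroup E] [Module ℝ E] [FiniteDimensional ℝ E]
    {ι : Type*} [Fintype ι] (V : ι → E) (S : Finset ι)
    (hcl : ∀ i, V i ∈ Submodule.span ℝ (V '' (S : Set ι)) → i ∈ S) :
    disc (subfam V S) + disc (contract V S) ≤ disc V := by
  classical
  set F := Submodule.span ℝ (V '' (S : Set ι)) with hF
  obtain ⟨ψ, hψ⟩ := exists_maximizer (contract V S)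
  obtain ⟨χ, hχ⟩ := exists_maximizer (subfam V S)
  have hmemF : ∀ i ∈ S, V i ∈ F := fun i hi => Submodule.subset_span ⟨i, hi, rfl⟩
  have hzero : ∀ i ∈ S, F.mkQ (V i) = 0 := by
    intro i hi
    rw [Submodule.mkQ_apply, Submodule.Quotient.mk_eq_zero]
    exact hmemF i hi
  have himg : ∀ i : ι, i ∉ S → F.mkQ (V i) ≠ 0 := by
    intro i hi h0
    exact hi (hcl i (by rwa [Submodule.mkQ_apply, Submodule.Quotient.mk_eq_zero] at h0))
  obtain ⟨ζ, hζ⟩ := exists_dual_ne_zero (Finset.univ.filter fun i => i ∉ S)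
      (fun i => F.mkQ (V i)) (fun i hi => himg i (by simpa using (Finset.mem_filter.1 hi).2))
  set ζb := ζ.comp F.mkQ with hζb
  set ψb := ψ.comp F.mkQ with hψb
  have hζbne : ∀ i, i ∉ S → ζb (V i) ≠ 0 := by
    intro i hi
    exact hζ i (by simpa using hi)
  obtain ⟨M, hM, hMs⟩ := exists_pos_forall_big (Finset.univ.filter fun i => i ∉ S)
      (fun i => ζb (V i)) (fun i => χ (V i))
      (fun i hi => hζbne i (by simpa using (Finset.mem_filter.1 hi).2))
  set χ₂ := χ + M • ζb with hχ₂
  obtain ⟨N, hN, hNs⟩ := exists_pos_forall_big (Finset.univ.filter fun i => ψb (V i) ≠ 0)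
      (fun i => ψb (V i)) (fun i => χ₂ (V i))
      (fun i hi => by simpa using (Finset.mem_filter.1 hi).2)
  have hsmall : ∀ i, (N • ψb) (V i) ≠ 0 → |χ₂ (V i)| < |(N • ψb) (V i)| := by
    intro i hi
    simp only [LinearMap.smul_apply, smul_eq_mul] at hi ⊢
    have hψne : ψb (V i) ≠ 0 := by
      intro h0; rw [h0] at hi; simp at hi
    have := hNs i (by simp [hψne])
    rw [abs_mul, abs_of_pos hN]
    exact this
  have hp := posCount_add_small (N • ψb) χ₂ V hsmall
  have hn := negCount_add_small (N • ψb) χ₂ V hsmall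
  -- identify posCount (N • ψb) V with posCount ψ (contract V S)
  have hppsi : posCount (N • ψb) V = posCount ψ (contract V S) := by
    rw [posCount_contract]
    unfold posCount
    apply card_filter_congr
    intro i
    simp only [LinearMap.smul_apply, smul_eq_mul]
    constructor
    · intro hpos
      have hψpos : 0 < ψb (V i) := by nlinarith
      have hns : i ∉ S := by
        intro hiS
        rw [hψb] at hψpos
        simp only [LinearMap.comp_apply] at hψpos
        rw [hzero i hiS] at hψpos
        simp at hψpos
      exact ⟨hns, by rw [← Submodule.mkQ_apply]; exact hψpos⟩
    · rintro ⟨-, hpos⟩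
      rw [← Submodule.mkQ_apply] at hpos
      have : 0 < ψb (V i) := hpos
      nlinarith
  have hnpsi : negCount (N • ψb) V = negCount ψ (contract V S) := by
    rw [negCount_contract]
    unfold negCount
    apply card_filter_congr
    intro i
    simp only [LinearMap.smul_apply, smul_eq_mul]
    constructor
    · intro hneg
      have hψneg : ψb (V i) < 0 := by nlinarith
      have hns : i ∉ S := by
        intro hiS
        rw [hψb] at hψneg
        simp only [LinearMap.comp_apply] at hψneg
        rw [hzero i hiS] at hψneg
        simp at hψneg
      exact ⟨hns, by rw [← Submodule.mkQ_apply]; exact hψneg⟩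
    · rintro ⟨-, hneg⟩
      rw [← Submodule.mkQ_apply] at hneg
      have : ψb (V i) < 0 := hneg
      nlinarith
  -- the correction terms
  have hA : (Finset.univ.filter fun i => (N • ψb) (V i) = 0 ∧ 0 < χ₂ (V i)).card
      = posCount χ (subfam V S)
        + (Finset.univ.filter fun i =>
            i ∉ S ∧ (ψ (Submodule.Quotient.mk (V i)) = 0 ∧ 0 < ζ (Submodule.Quotient.mk (V i)))).card := by
    rw [card_filter_split (fun i => (N • ψb) (V i) = 0 ∧ 0 < χ₂ (V i)) (fun i => i ∈ S)]
    congr 1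
    · rw [posCount_subfam]
      apply card_filter_congr
      intro i
      constructor
      · rintro ⟨⟨-, hpos⟩, hiS⟩
        refine ⟨hiS, ?_⟩
        have hz : ζb (V i) = 0 := by
          rw [hζb]; simp only [LinearMap.comp_apply]; rw [hzero i hiS]; simp
        rw [hχ₂] at hpos
        simp only [LinearMap.add_apply, LinearMap.smul_apply, smul_eq_mul] at hpos
        rw [hz] at hpos
        simpa using hpos
      · rintro ⟨hiS, hpos⟩
        have hz : ζb (V i) = 0 := by
          rw [hζb]; simp only [LinearMap.comp_apply]; rw [hzero i hiS]; simp
        have hzψ : ψb (V i) = 0 := by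
          rw [hψb]; simp only [LinearMap.comp_apply]; rw [hzero i hiS]; simp
        refine ⟨⟨by simp [hzψ], ?_⟩, hiS⟩
        rw [hχ₂]
        simp only [LinearMap.add_apply, LinearMap.smul_apply, smul_eq_mul]
        rw [hz]
        simpa using hpos
    · apply card_filter_congr
      intro i
      constructor
      · rintro ⟨⟨hz0, hpos⟩, hiS⟩
        have hψz : ψb (V i) = 0 := by
          simp only [LinearMap.smul_apply, smul_eq_mul] at hz0
          rcases mul_eq_zero.1 hz0 with h | h
          · exact absurd h hN.ne'
          · exact h
        have hζpos : 0 < ζb (V i) := by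
          have hMi := hMs i (by simp [hiS])
          rw [hχ₂] at hpos
          simp only [LinearMap.add_apply, LinearMap.smul_apply, smul_eq_mul] at hpos
          rcases lt_trichotomy (ζb (V i)) 0 with h | h | h
          · exfalso
            have h1 : |ζb (V i)| = -(ζb (V i)) := abs_of_neg h
            have h2 := abs_lt.1 hMi
            nlinarith
          · exact absurd h (hζbne i hiS)
          · exact h
        exact ⟨hiS, by rw [← Submodule.mkQ_apply]; exact hψz,
          by rw [← Submodule.mkQ_apply]; exact hζpos⟩
      · rintro ⟨hiS, hψz, hζpos⟩
        rw [← Submodule.mkQ_apply (p := F)] at hψz hζpos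
        have hψz' : ψb (V i) = 0 := hψz
        have hζp' : 0 < ζb (V i) := hζpos
        refine ⟨⟨by simp [hψz'], ?_⟩, hiS⟩
        have hMi := hMs i (by simp [hiS])
        rw [hχ₂]
        simp only [LinearMap.add_apply, LinearMap.smul_apply, smul_eq_mul]
        have h1 : |ζb (V i)| = ζb (V i) := abs_of_pos hζp'
        have h2 := abs_lt.1 hMi
        nlinarith
  have hB : (Finset.univ.filter fun i => (N • ψb) (V i) = 0 ∧ χ₂ (V i) < 0).card
      = negCount χ (subfam V S)
        + (Finset.univ.filter fun i =>
            i ∉ S ∧ (ψ (Submodule.Quotient.mk (V i)) = 0 ∧ ζ (Submodule.Quotient.mk (V i)) < 0)).card := by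
    rw [card_filter_split (fun i => (N • ψb) (V i) = 0 ∧ χ₂ (V i) < 0) (fun i => i ∈ S)]
    congr 1
    · rw [negCount_subfam]
      apply card_filter_congr
      intro i
      constructor
      · rintro ⟨⟨-, hneg⟩, hiS⟩
        refine ⟨hiS, ?_⟩
        have hz : ζb (V i) = 0 := by
          rw [hζb]; simp only [LinearMap.comp_apply]; rw [hzero i hiS]; simp
        rw [hχ₂] at hneg
        simp only [LinearMap.add_apply, LinearMap.smul_apply, smul_eq_mul] at hneg
        rw [hz] at hneg
        simpa using hneg
      · rintro ⟨hiS, hneg⟩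
        have hz : ζb (V i) = 0 := by
          rw [hζb]; simp only [LinearMap.comp_apply]; rw [hzero i hiS]; simp
        have hzψ : ψb (V i) = 0 := by
          rw [hψb]; simp only [LinearMap.comp_apply]; rw [hzero i hiS]; simp
        refine ⟨⟨by simp [hzψ], ?_⟩, hiS⟩
        rw [hχ₂]
        simp only [LinearMap.add_apply, LinearMap.smul_apply, smul_eq_mul]
        rw [hz]
        simpa using hneg
    · apply card_filter_congr
      intro i
      constructor
      · rintro ⟨⟨hz0, hneg⟩, hiS⟩
        have hψz : ψb (V i) = 0 := by
          simp only [LinearMap.smul_apply, smul_eq_mul] at hz0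
          rcases mul_eq_zero.1 hz0 with h | h
          · exact absurd h hN.ne'
          · exact h
        have hζneg : ζb (V i) < 0 := by
          have hMi := hMs i (by simp [hiS])
          rw [hχ₂] at hneg
          simp only [LinearMap.add_apply, LinearMap.smul_apply, smul_eq_mul] at hneg
          rcases lt_trichotomy (ζb (V i)) 0 with h | h | h
          · exact h
          · exact absurd h (hζbne i hiS)
          · exfalso
            have h1 : |ζb (V i)| = ζb (V i) := abs_of_pos h
            have h2 := abs_lt.1 hMi
            nlinarith
        exact ⟨hiS, by rw [← Submodule.mkQ_apply]; exact hψz,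
          by rw [← Submodule.mkQ_apply]; exact hζneg⟩
      · rintro ⟨hiS, hψz, hζneg⟩
        rw [← Submodule.mkQ_apply (p := F)] at hψz hζneg
        have hψz' : ψb (V i) = 0 := hψz
        have hζn' : ζb (V i) < 0 := hζneg
        refine ⟨⟨by simp [hψz'], ?_⟩, hiS⟩
        have hMi := hMs i (by simp [hiS])
        rw [hχ₂]
        simp only [LinearMap.add_apply, LinearMap.smul_apply, smul_eq_mul]
        have h1 : |ζb (V i)| = -(ζb (V i)) := abs_of_neg hζn'
        have h2 := abs_lt.1 hMi
        nlinarith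
  -- balancedness
  have hbal := balanced_zero_set (contract V S) ψ hψ ζ
  have hbalA : (Finset.univ.filter fun i =>
        i ∉ S ∧ (ψ (Submodule.Quotient.mk (V i)) = 0 ∧ 0 < ζ (Submodule.Quotient.mk (V i)))).card
      = (Finset.univ.filter fun i =>
        i ∉ S ∧ (ψ (Submodule.Quotient.mk (V i)) = 0 ∧ ζ (Submodule.Quotient.mk (V i)) < 0)).card := by
    rw [← card_subtype_filter (fun i => i ∉ S)
        (fun i => ψ (Submodule.Quotient.mk (V i)) = 0 ∧ 0 < ζ (Submodule.Quotient.mk (V i))),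
      ← card_subtype_filter (fun i => i ∉ S)
        (fun i => ψ (Submodule.Quotient.mk (V i)) = 0 ∧ ζ (Submodule.Quotient.mk (V i)) < 0)]
    exact hbal
  -- conclude
  have hle := le_disc' V (N • ψb + χ₂)
  rw [hp, hn, hppsi, hnpsi, hA, hB, hbalA] at hle
  have hfin : (disc (subfam V S) : ℤ) + disc (contract V S) ≤ (disc V : ℤ) := by
    rw [← hψ, ← hχ]
    push_cast at hle ⊢
    linarith
  exact_mod_cast hfin

lemma closed_filter {E : Type*} [AddCommGroup E] [Module ℝ E] {ι : Type*} [Fintype ι]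
    (V : ι → E) (F : Submodule ℝ E) :
    ∀ i, V i ∈ Submodule.span ℝ
        (V '' ((Finset.univ.filter fun j => V j ∈ F) : Set ι)) →
      i ∈ (Finset.univ.filter fun j => V j ∈ F) := by
  intro i hi
  simp only [Finset.mem_filter, Finset.mem_univ, true_and]
  have hle : Submodule.span ℝ (V '' ((Finset.univ.filter fun j => V j ∈ F) : Set ι)) ≤ F := by
    rw [Submodule.span_le]
    rintro x ⟨j, hj, rfl⟩
    simp only [Finset.coe_filter, Set.mem_setOf_eq, Finset.mem_univ, true_and] at hj
    exact hj
  exact hle hi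

lemma eq_of_compatible {E : Type*} [AddCommGroup E] [Module ℝ E] [FiniteDimensional ℝ E]
    {ι : Type*} [Fintype ι] (V : ι → E) (φs φ0 : E →ₗ[ℝ] ℝ)
    (hmax : (posCount φs V : ℤ) - (negCount φs V : ℤ) = disc V)
    (hsign : ∀ i, φ0 (V i) ≠ 0 → 0 < φ0 (V i) * φs (V i))
    (F : Submodule ℝ E) (hker : ∀ x ∈ F, φ0 x = 0)
    (ha : ((Finset.univ.filter fun i => φ0 (V i) = 0 ∧ 0 < φs (V i)).card : ℤ)
          - ((Finset.univ.filter fun i => φ0 (V i) = 0 ∧ φs (V i) < 0).card : ℤ)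
          ≤ (disc (subfam V (Finset.univ.filter fun i => V i ∈ F)) : ℤ)) :
    disc V = disc (subfam V (Finset.univ.filter fun i => V i ∈ F))
      + disc (contract V (Finset.univ.filter fun i => V i ∈ F)) := by
  classical
  set S := Finset.univ.filter fun i => V i ∈ F with hS
  have hmemS : ∀ i, i ∈ S ↔ V i ∈ F := by
    intro i
    simp only [hS, Finset.mem_filter, Finset.mem_univ, true_and]
  have hcl : ∀ i, V i ∈ Submodule.span ℝ (V '' (S : Set ι)) → i ∈ S := closed_filter V F
  have hsub := superadd V S hcl
  have hle' : Submodule.span ℝ (V '' (S : Set ι)) ≤ LinearMap.ker φ0 := by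
    rw [Submodule.span_le]
    rintro x ⟨j, hj, rfl⟩
    simp only [hS, Finset.coe_filter, Set.mem_setOf_eq, Finset.mem_univ, true_and] at hj
    exact hker _ hj
  set ψ := (Submodule.span ℝ (V '' (S : Set ι))).liftQ φ0 hle' with hψdef
  have hψapp : ∀ x : E, ψ (Submodule.Quotient.mk x) = φ0 x := by
    intro x; rfl
  have hφ0S : ∀ i ∈ S, φ0 (V i) = 0 := fun i hi => hker _ ((hmemS i).1 hi)
  have hcpos : posCount ψ (contract V S) = posCount φ0 V := by
    rw [posCount_contract]
    unfold posCount
    apply card_filter_congr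
    intro i
    rw [hψapp]
    constructor
    · rintro ⟨-, h⟩; exact h
    · intro h
      refine ⟨fun hiS => ?_, h⟩
      rw [hφ0S i hiS] at h; exact lt_irrefl _ h
  have hcneg : negCount ψ (contract V S) = negCount φ0 V := by
    rw [negCount_contract]
    unfold negCount
    apply card_filter_congr
    intro i
    rw [hψapp]
    constructor
    · rintro ⟨-, h⟩; exact h
    · intro h
      refine ⟨fun hiS => ?_, h⟩
      rw [hφ0S i hiS] at h; exact lt_irrefl _ h
  have hd2 : (posCount φ0 V : ℤ) - (negCount φ0 V : ℤ) ≤ (disc (contract V S) : ℤ) := by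
    have := le_disc' (contract V S) ψ
    rwa [hcpos, hcneg] at this
  -- count identities
  have hposid : posCount φs V
      = (Finset.univ.filter fun i => φ0 (V i) = 0 ∧ 0 < φs (V i)).card + posCount φ0 V := by
    unfold posCount
    rw [card_filter_split (fun i => 0 < φs (V i)) (fun i => φ0 (V i) = 0)]
    congr 1
    · apply card_filter_congr; intro i; tauto
    · apply card_filter_congr
      intro i
      constructor
      · rintro ⟨hpos, hne⟩
        have := hsign i hne
        rcases lt_trichotomy (φ0 (V i)) 0 with h | h | h
        · nlinarith
        · exact absurd h hne
        · exact h
      · intro h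
        have := hsign i h.ne'
        exact ⟨by nlinarith, h.ne'⟩
  have hnegid : negCount φs V
      = (Finset.univ.filter fun i => φ0 (V i) = 0 ∧ φs (V i) < 0).card + negCount φ0 V := by
    unfold negCount
    rw [card_filter_split (fun i => φs (V i) < 0) (fun i => φ0 (V i) = 0)]
    congr 1
    · apply card_filter_congr; intro i; tauto
    · apply card_filter_congr
      intro i
      constructor
      · rintro ⟨hneg, hne⟩
        have := hsign i hne
        rcases lt_trichotomy (φ0 (V i)) 0 with h | h | h
        · exact h
        · exact absurd h hne
        · nlinarith
      · intro h
        have := hsign i h.ne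
        exact ⟨by nlinarith, h.ne⟩
  have hfinal : (disc V : ℤ) ≤ (disc (subfam V S) : ℤ) + (disc (contract V S) : ℤ) := by
    rw [← hmax, hposid, hnegid]
    push_cast
    linarith
  have hsub' : (disc (subfam V S) : ℤ) + (disc (contract V S) : ℤ) ≤ (disc V : ℤ) := by
    exact_mod_cast hsub
  omega

lemma case_high {E : Type*} [AddCommGroup E] [Module ℝ E] [FiniteDimensional ℝ E]
    {ι : Type*} [Fintype ι] (V : ι → E) (φs : E →ₗ[ℝ] ℝ)
    (hmax : (posCount φs V : ℤ) - (negCount φs V : ℤ) = disc V) (s : ℕ)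
    (hs : s ≤ Module.finrank ℝ (Submodule.span ℝ
      (V '' ((Finset.univ.filter fun i => φs (V i) = 0) : Set ι)))) :
    ∃ S : Finset ι, (∀ i, V i ∈ Submodule.span ℝ (V '' (S : Set ι)) → i ∈ S) ∧
      confRank (subfam V S) = s ∧
      disc V = disc (subfam V S) + disc (contract V S) := by
  classical
  set Z := Finset.univ.filter fun i => φs (V i) = 0 with hZ
  obtain ⟨b, hbsub, hbspan, hbind⟩ := exists_linearIndependent ℝ (V '' (Z : Set ι))
  have hbfin : b.Finite := ((Z : Set ι).toFinite.image V).subset hbsub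
  haveI := hbfin.fintype
  have hbcard : Module.finrank ℝ (Submodule.span ℝ b) = b.toFinset.card :=
    finrank_span_set_eq_card hbind
  have hscard : s ≤ b.toFinset.card := by
    rw [← hbcard, hbspan]; exact hs
  obtain ⟨c, hcsub, hccard⟩ := Finset.exists_subset_card_eq hscard
  have hcind : LinearIndependent ℝ (fun x : (c : Set E) => (x : E)) := by
    refine (LinearIndepOn.mono (v := id) (s := b) hbind ?_ : LinearIndepOn ℝ id (c : Set E))
    intro x hx
    have := hcsub hx
    simpa using this
  have hcrank : Module.finrank ℝ (Submodule.span ℝ (c : Set E)) = s := by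
    rw [finrank_span_set_eq_card hcind]
    simpa using hccard
  set Fc := Submodule.span ℝ (c : Set E) with hFc
  have hcZ : (c : Set E) ⊆ V '' (Z : Set ι) := by
    intro x hx
    exact hbsub (by simpa using hcsub hx)
  set S := Finset.univ.filter fun i => V i ∈ Fc with hS
  have hspanS : Submodule.span ℝ (V '' (S : Set ι)) = Fc := by
    apply le_antisymm
    · rw [Submodule.span_le]
      rintro x ⟨j, hj, rfl⟩
      simp only [hS, Finset.coe_filter, Set.mem_setOf_eq, Finset.mem_univ, true_and] at hj
      exact hj
    · rw [hFc, Submodule.span_le]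
      intro x hx
      obtain ⟨j, hjZ, rfl⟩ := hcZ hx
      apply Submodule.subset_span
      refine ⟨j, ?_, rfl⟩
      simp only [hS, Finset.coe_filter, Set.mem_setOf_eq, Finset.mem_univ, true_and]
      exact Submodule.subset_span hx
  refine ⟨S, closed_filter V Fc, ?_, ?_⟩
  · rw [confRank_subfam, hspanS, hcrank]
  · apply eq_of_compatible V φs φs hmax
    · intro i hi
      exact mul_self_pos.2 hi
    · intro x hx
      have hFcker : Fc ≤ LinearMap.ker φs := by
        rw [hFc, Submodule.span_le]
        intro y hy
        obtain ⟨j, hjZ, rfl⟩ := hcZ hy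
        simp only [hZ, Finset.coe_filter, Set.mem_setOf_eq, Finset.mem_univ, true_and] at hjZ
        exact hjZ
      exact hFcker hx
    · have h1 : (Finset.univ.filter fun i => φs (V i) = 0 ∧ 0 < φs (V i)) = ∅ := by
        apply Finset.filter_false_of_mem
        rintro i - ⟨h1, h2⟩
        rw [h1] at h2; exact lt_irrefl _ h2
      have h2 : (Finset.univ.filter fun i => φs (V i) = 0 ∧ φs (V i) < 0) = ∅ := by
        apply Finset.filter_false_of_mem
        rintro i - ⟨h1, h2⟩
        rw [h1] at h2; exact lt_irrefl _ h2
      rw [h1, h2]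
      simp only [Finset.card_empty]
      omega

set_option maxHeartbeats 2000000 in
lemma key_step {E : Type*} [AddCommGroup E] [Module ℝ E] [FiniteDimensional ℝ E]
    {ι : Type*} [Fintype ι] (V : ι → E) (φs : E →ₗ[ℝ] ℝ)
    (hmax : (posCount φs V : ℤ) - (negCount φs V : ℤ) = disc V)
    (hne : ∃ i, φs (V i) ≠ 0) :
    ∃ S : Finset ι, (∀ i, V i ∈ Submodule.span ℝ (V '' (S : Set ι)) → i ∈ S) ∧
      confRank (subfam V S)
        = Module.finrank ℝ (Submodule.span ℝ
            (V '' ((Finset.univ.filter fun i => φs (V i) = 0) : Set ι))) + 1 ∧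
      disc V = disc (subfam V S) + disc (contract V S) := by
  classical
  obtain ⟨i₁, hi₁⟩ := hne
  set Z := Finset.univ.filter fun i => φs (V i) = 0 with hZ
  set Fz := Submodule.span ℝ (V '' (Z : Set ι)) with hFz
  have hFzker : Fz ≤ LinearMap.ker φs := by
    rw [hFz, Submodule.span_le]
    rintro x ⟨j, hj, rfl⟩
    simp only [hZ, Finset.coe_filter, Set.mem_setOf_eq, Finset.mem_univ, true_and] at hj
    exact hj
  set π := Fz.mkQ with hπ
  have hπzero : ∀ i ∈ Z, π (V i) = 0 := by
    intro i hi
    rw [hπ, Submodule.mkQ_apply, Submodule.Quotient.mk_eq_zero]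
    apply Submodule.subset_span
    exact ⟨i, by simpa using hi, rfl⟩
  have hπne : ∀ i, φs (V i) ≠ 0 → π (V i) ≠ 0 := by
    intro i hine h0
    rw [hπ, Submodule.mkQ_apply, Submodule.Quotient.mk_eq_zero] at h0
    exact hine (hFzker h0)
  -- generic functional on the quotient
  set Wfam : (ι ⊕ (ι × ι)) → (E ⧸ Fz) := Sum.elim (fun i => π (V i))
      (fun p => π (φs (V p.1) • V p.2 - φs (V p.2) • V p.1)) with hWfam
  obtain ⟨ζ, hζ0⟩ := exists_dual_ne_zero (Finset.univ.filter fun k => Wfam k ≠ 0) Wfam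
      (fun k hk => by simpa using (Finset.mem_filter.1 hk).2)
  have hζ : ∀ k, Wfam k ≠ 0 → ζ (Wfam k) ≠ 0 := by
    intro k hk
    exact hζ0 k (by simp [hk])
  set ψ0 := ζ.comp π with hψ0
  have hψ0i₁ : ψ0 (V i₁) ≠ 0 := hζ (Sum.inl i₁) (hπne i₁ hi₁)
  set c : ℝ := if 0 < ψ0 (V i₁) * φs (V i₁) then 1 else -1 with hc
  have hcne : c ≠ 0 := by
    rw [hc]; split <;> norm_num
  set ψ := c • ψ0 with hψdef
  have hψi₁ : 0 < ψ (V i₁) * φs (V i₁) := by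
    rw [hψdef]
    simp only [LinearMap.smul_apply, smul_eq_mul]
    rcases lt_trichotomy (ψ0 (V i₁) * φs (V i₁)) 0 with h | h | h
    · rw [hc, if_neg (by linarith)]
      nlinarith
    · exact absurd h (by
        intro hcon
        rcases mul_eq_zero.1 hcon with h' | h'
        · exact hψ0i₁ h'
        · exact hi₁ h')
    · rw [hc, if_pos h]
      nlinarith
  have hψzero : ∀ i ∈ Z, ψ (V i) = 0 := by
    intro i hi
    rw [hψdef]
    simp only [LinearMap.smul_apply, smul_eq_mul, hψ0, LinearMap.comp_apply]
    rw [hπzero i hi]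
    simp
  set B := Finset.univ.filter fun i => 0 < ψ (V i) * φs (V i) with hB
  have hi₁B : i₁ ∈ B := by simp [hB, hψi₁]
  have hBne : B.Nonempty := ⟨i₁, hi₁B⟩
  set ρ : ι → ℝ := fun i => φs (V i) / ψ (V i) with hρ
  have hψBne : ∀ i ∈ B, ψ (V i) ≠ 0 := by
    intro i hi
    have : 0 < ψ (V i) * φs (V i) := by simpa [hB] using hi
    intro h0; rw [h0] at this; simp at this
  have hφsBne : ∀ i ∈ B, φs (V i) ≠ 0 := by
    intro i hi
    have : 0 < ψ (V i) * φs (V i) := by simpa [hB] using hi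
    intro h0; rw [h0] at this; simp at this
  have hρpos : ∀ i ∈ B, 0 < ρ i := by
    intro i hi
    have h1 : 0 < ψ (V i) * φs (V i) := by simpa [hB] using hi
    rw [hρ]
    rcases lt_trichotomy (ψ (V i)) 0 with h | h | h
    · have : φs (V i) < 0 := by nlinarith
      exact div_pos_iff.2 (Or.inr ⟨this, h⟩)
    · exact absurd h (hψBne i hi)
    · have : 0 < φs (V i) := by nlinarith
      exact div_pos_iff.2 (Or.inl ⟨this, h⟩)
  set t₀ := B.inf' hBne ρ with ht₀
  have ht₀pos : 0 < t₀ := by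
    rw [ht₀, Finset.lt_inf'_iff]
    exact hρpos
  obtain ⟨istar, histar, hmineq⟩ := Finset.exists_mem_eq_inf' hBne ρ
  set φ0 := φs - t₀ • ψ with hφ0
  have hρmul : ∀ i ∈ B, φs (V i) = ρ i * ψ (V i) := by
    intro i hi
    rw [hρ]
    field_simp [hψBne i hi]
  have hφ0eq : ∀ i ∈ B, φ0 (V i) = ψ (V i) * (ρ i - t₀) := by
    intro i hi
    rw [hφ0]
    simp only [LinearMap.sub_apply, LinearMap.smul_apply, smul_eq_mul]
    rw [hρmul i hi]
    ring
  have hφ0istar : φ0 (V istar) = 0 := by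
    rw [hφ0eq istar histar, ← hmineq]
    ring
  have hφ0Z : ∀ i ∈ Z, φ0 (V i) = 0 := by
    intro i hi
    rw [hφ0]
    simp only [LinearMap.sub_apply, LinearMap.smul_apply, smul_eq_mul]
    rw [hψzero i hi]
    have : φs (V i) = 0 := by simpa [hZ] using hi
    rw [this]; ring
  have hsign : ∀ i, φ0 (V i) ≠ 0 → 0 < φ0 (V i) * φs (V i) := by
    intro i hne0
    by_cases hφsi : φs (V i) = 0
    · exact absurd (hφ0Z i (by simp [hZ, hφsi])) hne0
    by_cases hiB : i ∈ B
    · have h1 := Finset.inf'_le ρ hiB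
      rw [← ht₀] at h1
      have h2 := hφ0eq i hiB
      have h3 : ρ i ≠ t₀ := by
        intro hcon
        rw [h2, hcon] at hne0
        simp at hne0
      have h4 : 0 < ρ i - t₀ := by
        rcases lt_or_eq_of_le h1 with h | h
        · linarith
        · exact absurd h.symm h3
      have h5 : 0 < ψ (V i) * φs (V i) := by simpa [hB] using hiB
      rw [h2]
      nlinarith
    · have h5 : ψ (V i) * φs (V i) ≤ 0 := by
        by_contra hcon
        exact hiB (by simp [hB]; nlinarith)
      rw [hφ0]
      simp only [LinearMap.sub_apply, LinearMap.smul_apply, smul_eq_mul]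
      have : φs (V i) ≠ 0 := hφsi
      nlinarith [mul_self_pos.2 this, ht₀pos]
  set Z₀ := Finset.univ.filter fun i => φ0 (V i) = 0 with hZ₀
  have histarZ₀ : istar ∈ Z₀ := by simp [hZ₀, hφ0istar]
  have hZsub : Z ⊆ Z₀ := by
    intro i hi
    simp only [hZ₀, Finset.mem_filter, Finset.mem_univ, true_and]
    exact hφ0Z i hi
  set F₀ := Submodule.span ℝ (V '' (Z₀ : Set ι)) with hF₀
  have hψistar : ψ (V istar) ≠ 0 := hψBne istar histar
  have hπistar : π (V istar) ≠ 0 := by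
    intro h0
    apply hψistar
    rw [hψdef]
    simp only [LinearMap.smul_apply, smul_eq_mul, hψ0, LinearMap.comp_apply]
    rw [h0]; simp
  -- characterization of Z₀ vectors
  have hspanF₀ : F₀ = Fz ⊔ Submodule.span ℝ {V istar} := by
    apply le_antisymm
    · rw [hF₀, Submodule.span_le]
      rintro x ⟨j, hj, rfl⟩
      simp only [hZ₀, Finset.coe_filter, Set.mem_setOf_eq, Finset.mem_univ, true_and] at hj
      by_cases hφsj : φs (V j) = 0
      · apply Submodule.mem_sup_left
        rw [hFz]
        exact Submodule.subset_span ⟨j, by simp [hZ, hφsj], rfl⟩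
      · -- j is parallel to istar modulo Fz
        have hψj : ψ (V j) ≠ 0 := by
          intro h0
          rw [hφ0] at hj
          simp only [LinearMap.sub_apply, LinearMap.smul_apply, smul_eq_mul] at hj
          rw [h0] at hj
          apply hφsj; linarith
        have hjB : j ∈ B := by
          have hval : φs (V j) = t₀ * ψ (V j) := by
            rw [hφ0] at hj
            simp only [LinearMap.sub_apply, LinearMap.smul_apply, smul_eq_mul] at hj
            linarith
          simp only [hB, Finset.mem_filter, Finset.mem_univ, true_and]
          rw [hval]
          nlinarith [mul_self_pos.2 hψj, ht₀pos]
        have hρj : ρ j = t₀ := by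
          have h1 := Finset.inf'_le ρ hjB
          rw [← ht₀] at h1
          rcases lt_or_eq_of_le h1 with h | h
          · exfalso
            have h2 := hφ0eq j hjB
            rw [h2] at hj
            rcases mul_eq_zero.1 hj with h' | h'
            · exact hψj h'
            · linarith
          · exact h.symm
        have hcross : φs (V j) * ψ (V istar) - φs (V istar) * ψ (V j) = 0 := by
          have e1 : φs (V j) = t₀ * ψ (V j) := by
            rw [hρmul j hjB, hρj]
          have e2 : φs (V istar) = t₀ * ψ (V istar) := by
            rw [hρmul istar histar, ← hmineq]
          rw [e1, e2]; ring
        have hψw : ψ (φs (V j) • V istar - φs (V istar) • V j) = 0 := by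
          rw [map_sub, map_smul, map_smul]
          simp only [smul_eq_mul]
          linarith [hcross]
        have hπw : π (φs (V j) • V istar - φs (V istar) • V j) = 0 := by
          by_contra hcon
          have := hζ (Sum.inr (j, istar)) (by simpa [hWfam] using hcon)
          apply this
          have hζπ : ζ (π (φs (V j) • V istar - φs (V istar) • V j)) = (1/c) * ψ (φs (V j) • V istar - φs (V istar) • V j) := by
            rw [hψdef]
            simp only [LinearMap.smul_apply, smul_eq_mul, hψ0, LinearMap.comp_apply]
            field_simp
          simp only [hWfam, Sum.elim_inr]
          rw [hζπ, hψw]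
          ring
        have hwFz : φs (V j) • V istar - φs (V istar) • V j ∈ Fz := by
          rwa [hπ, Submodule.mkQ_apply, Submodule.Quotient.mk_eq_zero] at hπw
        have hφistar : φs (V istar) ≠ 0 := hφsBne istar histar
        have : V j = (φs (V j) / φs (V istar)) • V istar
            - (1 / φs (V istar)) • (φs (V j) • V istar - φs (V istar) • V j) := by
          match_scalars <;> field_simp <;> ring
        rw [this]
        apply Submodule.sub_mem
        · apply Submodule.mem_sup_right
          exact Submodule.smul_mem _ _ (Submodule.subset_span rfl)
        · apply Submodule.mem_sup_left
          exact Submodule.smul_mem _ _ hwFz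
    · apply sup_le
      · rw [hFz, hF₀]
        apply Submodule.span_mono
        apply Set.image_mono
        exact_mod_cast hZsub
      · rw [Submodule.span_le, Set.singleton_subset_iff, hF₀]
        exact Submodule.subset_span ⟨istar, by simpa using histarZ₀, rfl⟩
  have hrankF₀ : Module.finrank ℝ F₀ = Module.finrank ℝ Fz + 1 := by
    have hle : Fz ≤ F₀ := by
      rw [hspanF₀]; exact le_sup_left
    have := finrank_map_mkQ Fz F₀ hle
    have hmap : F₀.map π = Submodule.span ℝ {π (V istar)} := by
      rw [hspanF₀, Submodule.map_sup, hπ, Submodule.mkQ_map_self, bot_sup_eq,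
        Submodule.map_span, Set.image_singleton]
    rw [hmap] at this
    rw [finrank_span_singleton hπistar] at this
    omega
  -- the final subfamily
  set S := Finset.univ.filter fun i => V i ∈ F₀ with hSdef
  have hSZ₀ : ∀ i, i ∈ S ↔ i ∈ Z₀ := by
    intro i
    simp only [hSdef, hZ₀, Finset.mem_filter, Finset.mem_univ, true_and]
    constructor
    · intro hi
      have hF₀ker : F₀ ≤ LinearMap.ker φ0 := by
        rw [hF₀, Submodule.span_le]
        rintro x ⟨j, hj, rfl⟩
        simp only [hZ₀, Finset.coe_filter, Set.mem_setOf_eq, Finset.mem_univ, true_and] at hj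
        exact hj
      exact hF₀ker hi
    · intro hi
      rw [hF₀]
      exact Submodule.subset_span ⟨i, by simpa [hZ₀] using hi, rfl⟩
  have hspanS : Submodule.span ℝ (V '' (S : Set ι)) = F₀ := by
    apply le_antisymm
    · rw [Submodule.span_le]
      rintro x ⟨j, hj, rfl⟩
      simp only [hSdef, Finset.coe_filter, Set.mem_setOf_eq, Finset.mem_univ, true_and] at hj
      exact hj
    · rw [hF₀, Submodule.span_le]
      rintro x ⟨j, hj, rfl⟩
      apply Submodule.subset_span
      refine ⟨j, ?_, rfl⟩
      have : j ∈ Z₀ := by simpa using hj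
      have := (hSZ₀ j).2 this
      simpa using this
  refine ⟨S, closed_filter V F₀, ?_, ?_⟩
  · rw [confRank_subfam, hspanS, hrankF₀, hFz]
  · apply eq_of_compatible V φs φ0 hmax hsign F₀
    · intro x hx
      have hF₀ker : F₀ ≤ LinearMap.ker φ0 := by
        rw [hF₀, Submodule.span_le]
        rintro y ⟨j, hj, rfl⟩
        simp only [hZ₀, Finset.coe_filter, Set.mem_setOf_eq, Finset.mem_univ, true_and] at hj
        exact hj
      exact hF₀ker hx
    · -- the a-term bound
      have hposS : posCount φs (subfam V S)
          = (Finset.univ.filter fun i => φ0 (V i) = 0 ∧ 0 < φs (V i)).card := by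
        rw [posCount_subfam]
        apply card_filter_congr
        intro i
        have := hSZ₀ i
        simp only [hZ₀, Finset.mem_filter, Finset.mem_univ, true_and] at this
        rw [this]
      have hnegS : negCount φs (subfam V S)
          = (Finset.univ.filter fun i => φ0 (V i) = 0 ∧ φs (V i) < 0).card := by
        rw [negCount_subfam]
        apply card_filter_congr
        intro i
        have := hSZ₀ i
        simp only [hZ₀, Finset.mem_filter, Finset.mem_univ, true_and] at this
        rw [this]
      have := le_disc' (subfam V S) φs
      rw [hposS, hnegS] at this
      exact this

lemma disc_congr {E : Type*} [AddCommGroup E] [Module ℝ E] {ι : Type*}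
    {inst1 inst2 : Fintype ι} (V : ι → E) :
    @disc E _ _ ι inst1 V = @disc E _ _ ι inst2 V := by
  cases Subsingleton.elim inst1 inst2
  rfl

set_option maxHeartbeats 2000000 in
theorem aux : ∀ (r : ℕ) {E : Type u_50} [AddCommGroup E] [Module ℝ E] [FiniteDimensional ℝ E]
    {ι : Type u_51} [Fintype ι] (V : ι → E) (s : ℕ),
    confRank V ≤ r → 1 ≤ s → s + 1 ≤ confRank V →
    ∃ S : Finset ι, (∀ i, V i ∈ Submodule.span ℝ (V '' (S : Set ι)) → i ∈ S) ∧
      confRank (subfam V S) = s ∧ disc V = disc (subfam V S) + disc (contract V S) := by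
  intro r
  induction r with
  | zero =>
    intro E _ _ _ ι _ V s hr hs1 hs2
    omega
  | succ r ih =>
    intro E _ _ _ ι _ V s hr hs1 hs2
    obtain ⟨φs, hφs⟩ := exists_maximizer V
    by_cases hcase : s ≤ Module.finrank ℝ (Submodule.span ℝ
        (V '' ((Finset.univ.filter fun i => φs (V i) = 0) : Set ι)))
    · obtain ⟨S, h1, h2, h3⟩ := case_high V φs hφs s hcase
      exact ⟨S, h1, h2, h3⟩
    · push_neg at hcase
      have hne : ∃ i, φs (V i) ≠ 0 := by
        by_contra hcon
        push_neg at hcon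
        have hZu : (Finset.univ.filter fun i => φs (V i) = 0) = Finset.univ := by
          ext i; simp [hcon i]
        rw [hZu] at hcase
        have : Module.finrank ℝ (Submodule.span ℝ (V '' ((Finset.univ : Finset ι) : Set ι)))
            = confRank V := by
          unfold confRank
          rw [Finset.coe_univ, Set.image_univ]
        omega
      obtain ⟨S₁, hcl₁, hrank₁, heq₁⟩ := key_step V φs hφs hne
      set t := Module.finrank ℝ (Submodule.span ℝ
        (V '' ((Finset.univ.filter fun i => φs (V i) = 0) : Set ι))) with htdef
      by_cases hfin : t + 1 = s
      · exact ⟨S₁, hcl₁, by rw [hrank₁, hfin], heq₁⟩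
      · have hts : t + 1 < s := by omega
        set V' := contract V S₁ with hV'
        have h3 : Module.finrank ℝ (Submodule.span ℝ (V '' (S₁ : Set ι))) = t + 1 := by
          rw [← confRank_subfam]; exact hrank₁
        have hrankV' : confRank V' + (t + 1) = confRank V := by
          have h := confRank_contract V S₁
          rw [hrank₁] at h
          exact h
        obtain ⟨S₂, hcl₂, hrank₂, heq₂⟩ := ih V' (s - (t + 1))
          (by omega) (by omega) (by omega)
        -- assemble S
        set S : Finset ι := S₁ ∪ S₂.image Subtype.val with hSdef
        have hmemS : ∀ i : ι, i ∈ S ↔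
            (i ∈ S₁ ∨ ∃ h : i ∉ S₁, (⟨i, h⟩ : {i // i ∉ S₁}) ∈ S₂) := by
          intro i
          simp only [hSdef, Finset.mem_union, Finset.mem_image]
          constructor
          · rintro (h | ⟨j, hj, rfl⟩)
            · left; exact h
            · right; exact ⟨j.2, by simpa using hj⟩
          · rintro (h | ⟨h, hmem⟩)
            · left; exact h
            · right; exact ⟨⟨i, h⟩, hmem, rfl⟩
        have hS₁S : ∀ i, i ∈ S₁ → i ∈ S := fun i h => (hmemS i).2 (Or.inl h)
        have himg2 : (Submodule.span ℝ (V '' (S₁ : Set ι))).mkQ ''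
              (V '' (((S₂.image Subtype.val) : Finset ι) : Set ι))
            = V' '' (S₂ : Set {i // i ∉ S₁}) := by
          ext x
          simp only [Set.mem_image, Finset.mem_coe, Finset.mem_image]
          constructor
          · rintro ⟨y, ⟨i, ⟨j, hj, rfl⟩, rfl⟩, rfl⟩
            exact ⟨j, hj, rfl⟩
          · rintro ⟨j, hj, rfl⟩
            exact ⟨V j.1, ⟨j.1, ⟨j, hj, rfl⟩, rfl⟩, rfl⟩
        have hsplit : (S : Set ι)
            = (S₁ : Set ι) ∪ (((S₂.image Subtype.val) : Finset ι) : Set ι) := by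
          rw [hSdef, Finset.coe_union]
        have hmapF : (Submodule.span ℝ (V '' (S : Set ι))).map
              (Submodule.span ℝ (V '' (S₁ : Set ι))).mkQ
            = Submodule.span ℝ (V' '' (S₂ : Set {i // i ∉ S₁})) := by
          have e0 : Submodule.span ℝ (V '' (S : Set ι))
              = Submodule.span ℝ (V '' (S₁ : Set ι))
                ⊔ Submodule.span ℝ (V '' (((S₂.image Subtype.val) : Finset ι) : Set ι)) := by
            rw [hsplit, Set.image_union, Submodule.span_union]
          rw [e0, Submodule.map_sup, Submodule.mkQ_map_self, bot_sup_eq,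
            Submodule.map_span, himg2]
        have hclS : ∀ i, V i ∈ Submodule.span ℝ (V '' (S : Set ι)) → i ∈ S := by
          intro i hi
          by_cases hiS₁ : i ∈ S₁
          · exact hS₁S i hiS₁
          · have h1 : (Submodule.span ℝ (V '' (S₁ : Set ι))).mkQ (V i)
                ∈ (Submodule.span ℝ (V '' (S : Set ι))).map
                    (Submodule.span ℝ (V '' (S₁ : Set ι))).mkQ :=
              Submodule.mem_map_of_mem hi
            rw [hmapF] at h1
            have h2 := hcl₂ ⟨i, hiS₁⟩ h1
            exact (hmemS i).2 (Or.inr ⟨hiS₁, h2⟩)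
        have hleF₁ : Submodule.span ℝ (V '' (S₁ : Set ι))
            ≤ Submodule.span ℝ (V '' (S : Set ι)) := by
          apply Submodule.span_mono
          apply Set.image_mono
          intro i hi
          exact hS₁S i (by simpa using hi)
        have hrankS : confRank (subfam V S) = s := by
          rw [confRank_subfam]
          have hnull := finrank_map_mkQ (Submodule.span ℝ (V '' (S₁ : Set ι)))
            (Submodule.span ℝ (V '' (S : Set ι))) hleF₁
          rw [hmapF] at hnull
          have h2 : Module.finrank ℝ (Submodule.span ℝ (V' '' (S₂ : Set {i // i ∉ S₁})))
              = s - (t + 1) := by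
            rw [← confRank_subfam]; exact hrank₂
          omega
        -- the inner superadditivity on W := subfam V S
        set T : Finset {i // i ∈ S} := Finset.univ.filter (fun j => j.1 ∈ S₁) with hT
        have hWT : subfam V S '' (T : Set {i // i ∈ S}) = V '' (S₁ : Set ι) := by
          ext x
          simp only [Set.mem_image, Finset.mem_coe]
          constructor
          · rintro ⟨j, hj, rfl⟩
            simp only [hT, Finset.mem_filter, Finset.mem_univ, true_and] at hj
            exact ⟨j.1, hj, rfl⟩
          · rintro ⟨i, hi, rfl⟩
            exact ⟨⟨i, hS₁S i hi⟩, by simp [hT, hi], rfl⟩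
        have hclT : ∀ j : {i // i ∈ S}, subfam V S j ∈ Submodule.span ℝ (subfam V S '' (T : Set {i // i ∈ S}))
            → j ∈ T := by
          intro j hj
          rw [hWT] at hj
          have := hcl₁ j.1 hj
          simp [hT, this]
        have hsupT : disc (subfam (subfam V S) T) + disc (contract (subfam V S) T)
            ≤ disc (subfam V S) := by
          refine le_trans (le_of_eq ?_)
            (le_trans (superadd (subfam V S) T hclT) (le_of_eq ?_))
          · exact congrArg₂ (· + ·) (disc_congr _) (disc_congr _)
          · exact disc_congr _
        have hsupS : disc (subfam V S) + disc (contract V S) ≤ disc V := by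
          refine le_trans (le_of_eq ?_)
            (le_trans (superadd V S hclS) (le_of_eq ?_))
          · exact congrArg₂ (· + ·) (disc_congr _) (disc_congr _)
          · exact disc_congr _
        -- identification 1 : subfam W T ≃ subfam V S₁
        let e₁ : {j : {i // i ∈ S} // j ∈ T} ≃ {i // i ∈ S₁} :=
          { toFun := fun j => ⟨j.1.1, by
              have hj := j.2
              simp only [hT, Finset.mem_filter, Finset.mem_univ, true_and] at hj
              exact hj⟩
            invFun := fun i => ⟨⟨i.1, hS₁S i.1 i.2⟩, by simp [hT, i.2]⟩
            left_inv := fun j => by apply Subtype.ext; apply Subtype.ext; rfl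
            right_inv := fun i => by apply Subtype.ext; rfl }
        have hid1 : disc (subfam V S₁) = disc (subfam (subfam V S) T) :=
          disc_equiv (LinearEquiv.refl ℝ E) e₁ (subfam (subfam V S) T) (subfam V S₁) (fun j => rfl)
        -- identification 2 : contract W T ≃ subfam V' S₂
        have hspanWT : Submodule.span ℝ (subfam V S '' (T : Set {i // i ∈ S}))
            = Submodule.span ℝ (V '' (S₁ : Set ι)) := by
          rw [hWT]
        let e₂ : {j : {i // i ∈ S} // j ∉ T} ≃ {k : {i // i ∉ S₁} // k ∈ S₂} :=
          { toFun := fun j => ⟨⟨j.1.1, fun h => j.2 (by simp [hT, h])⟩, by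
              rcases (hmemS j.1.1).1 j.1.2 with h | ⟨h, hm⟩
              · exact absurd (by simp [hT, h] : j.1 ∈ T) j.2
              · exact hm⟩
            invFun := fun k => ⟨⟨k.1.1, (hmemS k.1.1).2 (Or.inr ⟨k.1.2, k.2⟩)⟩, fun hTmem => by
              simp only [hT, Finset.mem_filter, Finset.mem_univ, true_and] at hTmem
              exact k.1.2 hTmem⟩
            left_inv := fun j => by apply Subtype.ext; apply Subtype.ext; rfl
            right_inv := fun k => by apply Subtype.ext; apply Subtype.ext; rfl }
        have hid2 : disc (subfam V' S₂) = disc (contract (subfam V S) T) := by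
          refine disc_equiv (Submodule.quotEquivOfEq _ _ hspanWT) e₂
            (contract (subfam V S) T) (subfam V' S₂) ?_
          intro j
          show Submodule.Quotient.mk (V j.1.1)
            = Submodule.quotEquivOfEq _ _ hspanWT (Submodule.Quotient.mk (V j.1.1))
          rw [Submodule.quotEquivOfEq_mk]
        -- identification 3 : contract V' S₂ ≃ contract V S
        let e₃ : {k : {i // i ∉ S₁} // k ∉ S₂} ≃ {i // i ∉ S} :=
          { toFun := fun k => ⟨k.1.1, fun hS => by
              rcases (hmemS k.1.1).1 hS with h | ⟨h, hm⟩
              · exact k.1.2 h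
              · exact k.2 hm⟩
            invFun := fun i => ⟨⟨i.1, fun h => i.2 (hS₁S i.1 h)⟩, fun h2 =>
              i.2 ((hmemS i.1).2 (Or.inr ⟨_, h2⟩))⟩
            left_inv := fun k => by apply Subtype.ext; apply Subtype.ext; rfl
            right_inv := fun i => by apply Subtype.ext; rfl }
        have hid3 : disc (contract V S) = disc (contract V' S₂) := by
          set g := (Submodule.quotEquivOfEq _ _ hmapF.symm).trans
            (Submodule.quotientQuotientEquivQuotient (Submodule.span ℝ (V '' (S₁ : Set ι)))
              (Submodule.span ℝ (V '' (S : Set ι))) hleF₁) with hg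
          refine disc_equiv g e₃ (contract V' S₂) (contract V S) ?_
          intro k
          show Submodule.Quotient.mk (V k.1.1)
            = g (Submodule.Quotient.mk (Submodule.Quotient.mk (V k.1.1)))
          rw [hg, LinearEquiv.trans_apply, Submodule.quotEquivOfEq_mk]
          rfl
        refine ⟨S, hclS, hrankS, ?_⟩
        have hkey : disc V' = disc (subfam V' S₂) + disc (contract V S) := by
          rw [heq₂]
          congr 1
          all_goals first
            | rfl
            | (rw [hid3]; exact disc_congr _)
            | exact disc_congr _
        rw [hkey, hid1, hid2] at heq₁
        omega

end ExtremalAux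

/-- for every `1 ≤ s ≤ r − 1` there is a subfamily `W` of rank `s` with
`disc V = disc W + disc (V/W)`. -/
theorem exists_extremal_subfam {E : Type*} [AddCommGroup E] [Module ℝ E]
    [FiniteDimensional ℝ E] (hE : 1 ≤ Module.finrank ℝ E)
    {ι : Type*} [Fintype ι] (V : ι → E) (s : ℕ)
    (hs1 : 1 ≤ s) (hs2 : s ≤ confRank V - 1) :
    ∃ S : Finset ι, confRank (subfam V S) = s ∧
      disc V = disc (subfam V S) + disc (contract V S) := by
  have hr : s + 1 ≤ confRank V := by omega
  obtain ⟨S, -, h2, h3⟩ := ExtremalAux.aux (confRank V) V s le_rfl hs1 hr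
  exact ⟨S, h2, h3⟩
end
end
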